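/- arXiv:math/0310042 — 2 statements merged into one kernel-verified Lean document; each statement's English description precedes it below -/
import Mathlib

section
/- Let U_0, …, U_d denote any one of the six decompositions [0D], [0*D*], [0*D], [0*0], [D*0], [D*D] of V. Then for 0 ≤ i ≤ d the actions of B and B* on U_i satisfy: for [0D]: (B − bq^{d−2i}I)U_i ⊆ U_{i−1} and (B* − b*q^{d−2i}I)U_i ⊆ U_{i+1}; for [0*D*]: (B − bq^{2i−d}I)U_i ⊆ U_{i−1} and (B* − b*q^{2i−d}I)U_i ⊆ U_{i+1}; for [0*D]: (B − bq^{2i−d}I)U_i ⊆ U_{i−1} and (B* − b*q^{d−2i}I)U_i ⊆ U_{i+1}; for [0*0]: (B − bq^{2i−d}I)U_i = 0 and B*U_i ⊆ U_{i−1} + U_i + U_{i+1}; for [D*0]: (B − bq^{2i−d}I)U_i ⊆ U_{i+1} and (B* − b*q^{d−2i}I)U_i ⊆ U_{i−1}; for [D*D]: BU_i ⊆ U_{i−1} + U_i + U_{i+1} and (B* − b*q^{d−2i}I)U_i = 0. -/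
noncomputable section

open Submodule

variable {K : Type*} [Field K]

/-- `[n]_q = (q^n − q^{−n})/(q − q^{−1})`. -/
def qInt (q : K) (n : ℤ) : K := (q ^ n - q ^ (-n)) / (q - q⁻¹)

/-- Elements `y₀⁺, y₁⁺, y₀⁻, y₁⁻, k₀, k₀⁻¹, k₁, k₁⁻¹` of a unital associative `K`-algebra
satisfy the alternate relations. -/
structure AlternateRelations (q : K) {A : Type*} [Ring A] [Algebra K A]
    (yp ym k kinv : Fin 2 → A) : Prop where
  k_kinv : ∀ i, k i * kinv i = 1
  kinv_k : ∀ i, kinv i * k i = 1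
  central_yp : ∀ i, k 0 * k 1 * yp i = yp i * (k 0 * k 1)
  central_ym : ∀ i, k 0 * k 1 * ym i = ym i * (k 0 * k 1)
  central_k : ∀ i, k 0 * k 1 * k i = k i * (k 0 * k 1)
  central_kinv : ∀ i, k 0 * k 1 * kinv i = kinv i * (k 0 * k 1)
  rel_yp_k : ∀ i, (q - q⁻¹)⁻¹ • (q • (yp i * k i) - q⁻¹ • (k i * yp i)) = 1
  rel_k_ym : ∀ i, (q - q⁻¹)⁻¹ • (q • (k i * ym i) - q⁻¹ • (ym i * k i)) = 1
  rel_ym_yp : ∀ i, (q - q⁻¹)⁻¹ • (q • (ym i * yp i) - q⁻¹ • (yp i * ym i)) = 1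
  rel_yp_ym : ∀ i j, i ≠ j →
    (q - q⁻¹)⁻¹ • (q • (yp i * ym j) - q⁻¹ • (ym j * yp i)) = kinv 0 * kinv 1
  serre_p : ∀ i j, i ≠ j →
    yp i ^ 3 * yp j - qInt q 3 • (yp i ^ 2 * yp j * yp i)
      + qInt q 3 • (yp i * yp j * yp i ^ 2) - yp j * yp i ^ 3 = 0
  serre_m : ∀ i j, i ≠ j →
    ym i ^ 3 * ym j - qInt q 3 • (ym i ^ 2 * ym j * ym i)
      + qInt q 3 • (ym i * ym j * ym i ^ 2) - ym j * ym i ^ 3 = 0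

/-- Elements `e₀⁺, e₁⁺, e₀⁻, e₁⁻, K₀, K₀⁻¹, K₁, K₁⁻¹` of a unital associative `K`-algebra
satisfy the Chevalley relations of `U_q(sl₂ hat)`. -/
structure ChevalleyRelations (q : K) {A : Type*} [Ring A] [Algebra K A]
    (ep em Kg Kginv : Fin 2 → A) : Prop where
  K_Kinv : ∀ i, Kg i * Kginv i = 1
  Kinv_K : ∀ i, Kginv i * Kg i = 1
  K_comm : Kg 0 * Kg 1 = Kg 1 * Kg 0
  KepK_same : ∀ i, Kg i * ep i * Kginv i = (q ^ (2 : ℤ)) • ep i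
  KemK_same : ∀ i, Kg i * em i * Kginv i = (q ^ (-2 : ℤ)) • em i
  KepK_diff : ∀ i j, i ≠ j → Kg i * ep j * Kginv i = (q ^ (-2 : ℤ)) • ep j
  KemK_diff : ∀ i j, i ≠ j → Kg i * em j * Kginv i = (q ^ (2 : ℤ)) • em j
  e_comm_same : ∀ i, ep i * em i - em i * ep i = (q - q⁻¹)⁻¹ • (Kg i - Kginv i)
  e_comm_diff : ∀ i j, i ≠ j → ep i * em j = em j * ep i
  serre_p : ∀ i j, i ≠ j →
    ep i ^ 3 * ep j - qInt q 3 • (ep i ^ 2 * ep j * ep i)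
      + qInt q 3 • (ep i * ep j * ep i ^ 2) - ep j * ep i ^ 3 = 0
  serre_m : ∀ i j, i ≠ j →
    em i ^ 3 * em j - qInt q 3 • (em i ^ 2 * em j * em i)
      + qInt q 3 • (em i * em j * em i ^ 2) - em j * em i ^ 3 = 0

variable {V : Type*} [AddCommGroup V] [Module K V]

/-- A decomposition of `V` of length `d`: nonzero subspaces `U 0, …, U d`
(indexed by `ℤ`, with `U i = ⊥` outside `[0, d]`) whose direct sum is `V`. -/
structure IsDecomposition (d : ℕ) (U : ℤ → Submodule K V) : Prop where
  bot_of_lt : ∀ i : ℤ, i < 0 → U i = ⊥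
  bot_of_gt : ∀ i : ℤ, (d : ℤ) < i → U i = ⊥
  ne_bot : ∀ i : ℤ, 0 ≤ i → i ≤ (d : ℤ) → U i ≠ ⊥
  indep : iSupIndep U
  sup_eq_top : ⨆ i, U i = ⊤

/-- `A, A*` is a tridiagonal pair on `V` with standard orderings `Vs 0, …, Vs d` and
`Vs' 0, …, Vs' d` of the eigenspaces of `A` resp. `A*`, with corresponding eigenvalues
`θ i` resp. `θ' i`. -/
structure IsTridiagonalPair (A A' : Module.End K V) (d : ℕ)
    (Vs Vs' : ℤ → Submodule K V) (θ θ' : ℤ → K) : Prop where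
  decompV : IsDecomposition d Vs
  decompV' : IsDecomposition d Vs'
  eig : ∀ i : ℤ, ∀ v ∈ Vs i, A v = θ i • v
  eig' : ∀ i : ℤ, ∀ v ∈ Vs' i, A' v = θ' i • v
  theta_inj : ∀ i j : ℤ, 0 ≤ i → i ≤ (d : ℤ) → 0 ≤ j → j ≤ (d : ℤ) → θ i = θ j → i = j
  theta'_inj : ∀ i j : ℤ, 0 ≤ i → i ≤ (d : ℤ) → 0 ≤ j → j ≤ (d : ℤ) → θ' i = θ' j → i = j
  trid : ∀ i : ℤ, (Vs i).map A' ≤ Vs (i - 1) ⊔ Vs i ⊔ Vs (i + 1)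
  trid' : ∀ i : ℤ, (Vs' i).map A ≤ Vs' (i - 1) ⊔ Vs' i ⊔ Vs' (i + 1)
  irred : ∀ W : Submodule K V, W.map A ≤ W → W.map A' ≤ W → W = ⊥ ∨ W = ⊤

/-- The sum `U m + U (m+1) + ⋯ + U n`. -/
def sumIcc (U : ℤ → Submodule K V) (m n : ℤ) : Submodule K V :=
  ⨆ j ∈ Set.Icc m n, U j

/-- Decomposition `[0D]`: the `i`-th subspace is `V_i`. -/
def dec0D (Vs : ℤ → Submodule K V) : ℤ → Submodule K V := Vs

/-- Decomposition `[0*D*]`: the `i`-th subspace is `V*_i`. -/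
def dec0sDs (Vs' : ℤ → Submodule K V) : ℤ → Submodule K V := Vs'

/-- Decomposition `[0*D]`: the `i`-th subspace is `(V*_0+⋯+V*_i) ∩ (V_i+⋯+V_d)`. -/
def dec0sD (d : ℕ) (Vs Vs' : ℤ → Submodule K V) (i : ℤ) : Submodule K V :=
  sumIcc Vs' 0 i ⊓ sumIcc Vs i (d : ℤ)

/-- Decomposition `[0*0]`: the `i`-th subspace is `(V*_0+⋯+V*_i) ∩ (V_0+⋯+V_{d−i})`. -/
def dec0s0 (d : ℕ) (Vs Vs' : ℤ → Submodule K V) (i : ℤ) : Submodule K V :=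
  sumIcc Vs' 0 i ⊓ sumIcc Vs 0 ((d : ℤ) - i)

/-- Decomposition `[D*0]`: the `i`-th subspace is `(V*_{d−i}+⋯+V*_d) ∩ (V_0+⋯+V_{d−i})`. -/
def decDs0 (d : ℕ) (Vs Vs' : ℤ → Submodule K V) (i : ℤ) : Submodule K V :=
  sumIcc Vs' ((d : ℤ) - i) (d : ℤ) ⊓ sumIcc Vs 0 ((d : ℤ) - i)

/-- Decomposition `[D*D]`: the `i`-th subspace is `(V*_{d−i}+⋯+V*_d) ∩ (V_i+⋯+V_d)`. -/
def decDsD (d : ℕ) (Vs Vs' : ℤ → Submodule K V) (i : ℤ) : Submodule K V :=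
  sumIcc Vs' ((d : ℤ) - i) (d : ℤ) ⊓ sumIcc Vs i (d : ℤ)


namespace TDaux

open Polynomial Submodule

section Basic

variable {K : Type*} [Field K] {V : Type*} [AddCommGroup V] [Module K V]

lemma zpow_eq_zero_exp {q : K} (hq0 : q ≠ 0) (hq : ∀ n : ℕ, 0 < n → q ^ n ≠ 1)
    {k : ℤ} (h : q ^ k = 1) : k = 0 := by
  by_contra hk
  rcases lt_or_gt_of_ne hk with hlt | hgt
  · have h2 : q ^ (-k) = 1 := by
      rw [zpow_neg, h, inv_one]
    have h3 : q ^ ((-k).toNat) = 1 := by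
      rw [← zpow_natCast, Int.toNat_of_nonneg (by omega)]; exact h2
    exact hq _ (by omega) h3
  · have h3 : q ^ (k.toNat) = 1 := by
      rw [← zpow_natCast, Int.toNat_of_nonneg (by omega)]; exact h
    exact hq _ (by omega) h3

lemma zpow_injective' {q : K} (hq0 : q ≠ 0) (hq : ∀ n : ℕ, 0 < n → q ^ n ≠ 1)
    {m n : ℤ} (h : q ^ m = q ^ n) : m = n := by
  have : q ^ (m - n) = 1 := by
    rw [zpow_sub₀ hq0, h, div_self (zpow_ne_zero _ hq0)]
  have := zpow_eq_zero_exp hq0 hq this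
  omega

lemma le_sumIcc (U : ℤ → Submodule K V) {m n h : ℤ} (h1 : m ≤ h) (h2 : h ≤ n) :
    U h ≤ sumIcc U m n :=
  le_biSup U (Set.mem_Icc.mpr ⟨h1, h2⟩)

lemma sumIcc_le {U : ℤ → Submodule K V} {m n : ℤ} {W : Submodule K V}
    (h : ∀ j, m ≤ j → j ≤ n → U j ≤ W) : sumIcc U m n ≤ W :=
  iSup₂_le fun j hj => h j hj.1 hj.2

lemma sumIcc_mono {U : ℤ → Submodule K V} {m n m' n' : ℤ} (h1 : m' ≤ m) (h2 : n ≤ n') :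
    sumIcc U m n ≤ sumIcc U m' n' :=
  sumIcc_le fun j hj1 hj2 => le_sumIcc U (le_trans h1 hj1) (le_trans hj2 h2)

lemma sumIcc_bot {U : ℤ → Submodule K V} {m n : ℤ} (h : n < m) : sumIcc U m n = ⊥ :=
  le_bot_iff.mp (sumIcc_le fun j hj1 hj2 => absurd (le_trans hj1 hj2) (not_le.mpr h))

lemma sumIcc_cut_bot {U : ℤ → Submodule K V} {m n : ℤ} (hbot : U m = ⊥) :
    sumIcc U m n ≤ sumIcc U (m + 1) n := by
  apply sumIcc_le
  intro j hj1 hj2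
  rcases eq_or_lt_of_le hj1 with rfl | h
  · rw [hbot]; exact bot_le
  · exact le_sumIcc U (by omega) hj2

lemma sumIcc_cut_top {U : ℤ → Submodule K V} {m n : ℤ} (hbot : U n = ⊥) :
    sumIcc U m n ≤ sumIcc U m (n - 1) := by
  apply sumIcc_le
  intro j hj1 hj2
  rcases eq_or_lt_of_le hj2 with rfl | h
  · rw [hbot]; exact bot_le
  · exact le_sumIcc U hj1 (by omega)

lemma sumIcc_split_top {U : ℤ → Submodule K V} {m n : ℤ} :
    sumIcc U m (n + 1) ≤ sumIcc U m n ⊔ U (n + 1) := by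
  apply sumIcc_le
  intro j hj1 hj2
  rcases eq_or_lt_of_le hj2 with rfl | h
  · exact le_sup_right
  · exact le_trans (le_sumIcc U hj1 (by omega)) le_sup_left

lemma sumIcc_split_bot {U : ℤ → Submodule K V} {m n : ℤ} :
    sumIcc U m n ≤ U m ⊔ sumIcc U (m + 1) n := by
  apply sumIcc_le
  intro j hj1 hj2
  rcases eq_or_lt_of_le hj1 with rfl | h
  · exact le_sup_left
  · exact le_trans (le_sumIcc U (by omega) hj2) le_sup_right

lemma sumIcc_eq_top {U : ℤ → Submodule K V} {d : ℕ} (hd : IsDecomposition d U) :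
    sumIcc U 0 (d : ℤ) = ⊤ := by
  rw [eq_top_iff, ← hd.sup_eq_top]
  apply iSup_le
  intro i
  by_cases h1 : 0 ≤ i
  · by_cases h2 : i ≤ (d : ℤ)
    · exact le_sumIcc U h1 h2
    · rw [hd.bot_of_gt i (by omega)]; exact bot_le
  · rw [hd.bot_of_lt i (by omega)]; exact bot_le

lemma map_sumIcc_le {U : ℤ → Submodule K V} {m n : ℤ} {W : Submodule K V}
    {f : Module.End K V} (h : ∀ j, m ≤ j → j ≤ n → ∀ v ∈ U j, f v ∈ W) :
    ∀ v ∈ sumIcc U m n, f v ∈ W := by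
  intro v hv
  have : sumIcc U m n ≤ Submodule.comap f W :=
    sumIcc_le fun j hj1 hj2 => fun x hx => h j hj1 hj2 x hx
  exact this hv

end Basic

end TDaux

namespace TDaux

open Polynomial Submodule

section Shift

variable {K : Type*} [Field K] {V : Type*} [AddCommGroup V] [Module K V]
variable {U : ℤ → Submodule K V} {N : Module.End K V} {s : ℤ → K}

lemma mapShiftLower (hN : ∀ h : ℤ, ∀ v ∈ U h, N v - s h • v ∈ U (h - 1)) (m n : ℤ) :
    ∀ v ∈ sumIcc U m n, N v - s n • v ∈ sumIcc U (m - 1) (n - 1) := by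
  have := map_sumIcc_le (f := N - s n • 1) (W := sumIcc U (m - 1) (n - 1)) (m := m) (n := n)
    (U := U) ?_
  · intro v hv
    have h2 := this v hv
    simpa [LinearMap.sub_apply, LinearMap.smul_apply] using h2
  · intro j hj1 hj2 v hv
    have h1 : (N - s n • 1) v = (N v - s j • v) + (s j - s n) • v := by
      simp only [LinearMap.sub_apply, LinearMap.smul_apply, Module.End.one_apply, sub_smul]
      abel
    rw [h1]
    apply add_mem
    · exact le_sumIcc U (by omega) (by omega) (hN j v hv)
    · rcases eq_or_lt_of_le hj2 with rfl | h
      · simp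
      · exact le_sumIcc U (by omega) (by omega) (Submodule.smul_mem _ _ hv)

lemma mapShiftUpper (hN : ∀ h : ℤ, ∀ v ∈ U h, N v - s h • v ∈ U (h + 1)) (m n : ℤ) :
    ∀ v ∈ sumIcc U m n, N v - s m • v ∈ sumIcc U (m + 1) (n + 1) := by
  have := map_sumIcc_le (f := N - s m • 1) (W := sumIcc U (m + 1) (n + 1)) (m := m) (n := n)
    (U := U) ?_
  · intro v hv
    have h2 := this v hv
    simpa [LinearMap.sub_apply, LinearMap.smul_apply] using h2
  · intro j hj1 hj2 v hv
    have h1 : (N - s m • 1) v = (N v - s j • v) + (s j - s m) • v := by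
      simp only [LinearMap.sub_apply, LinearMap.smul_apply, Module.End.one_apply, sub_smul]
      abel
    rw [h1]
    apply add_mem
    · exact le_sumIcc U (by omega) (by omega) (hN j v hv)
    · rcases eq_or_lt_of_le hj1 with rfl | h
      · simp
      · exact le_sumIcc U (by omega) (by omega) (Submodule.smul_mem _ _ hv)

lemma mapLower (hN : ∀ h : ℤ, ∀ v ∈ U h, N v - s h • v ∈ U (h - 1)) (m n : ℤ) :
    ∀ v ∈ sumIcc U m n, N v ∈ sumIcc U (m - 1) n := by
  intro v hv
  have h1 := mapShiftLower hN m n v hv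
  have h2 : N v = (N v - s n • v) + s n • v := by abel
  rw [h2]
  exact add_mem (sumIcc_mono (le_refl _) (by omega) h1)
    (Submodule.smul_mem _ _ (sumIcc_mono (by omega) (le_refl _) hv))

lemma mapUpper (hN : ∀ h : ℤ, ∀ v ∈ U h, N v - s h • v ∈ U (h + 1)) (m n : ℤ) :
    ∀ v ∈ sumIcc U m n, N v ∈ sumIcc U m (n + 1) := by
  intro v hv
  have h1 := mapShiftUpper hN m n v hv
  have h2 : N v = (N v - s m • v) + s m • v := by abel
  rw [h2]
  exact add_mem (sumIcc_mono (by omega) (le_refl _) h1)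
    (Submodule.smul_mem _ _ (sumIcc_mono (le_refl _) (by omega) hv))

lemma mapKillTop (hN : ∀ h : ℤ, ∀ v ∈ U h, N v = s h • v) (m n : ℤ) :
    ∀ v ∈ sumIcc U m n, N v - s n • v ∈ sumIcc U m (n - 1) := by
  have key : ∀ j, m ≤ j → j ≤ n → ∀ v ∈ U j, (N - s n • 1) v ∈ sumIcc U m (n - 1) := by
    intro j hj1 hj2 v hv
    have h1 : (N - s n • 1) v = (s j - s n) • v := by
      simp [LinearMap.sub_apply, LinearMap.smul_apply, hN j v hv, sub_smul]
    rw [h1]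
    rcases eq_or_lt_of_le hj2 with rfl | h
    · simp
    · exact le_sumIcc U hj1 (by omega) (Submodule.smul_mem _ _ hv)
  intro v hv
  have h2 := map_sumIcc_le key v hv
  simpa [LinearMap.sub_apply, LinearMap.smul_apply] using h2

lemma mapKillBot (hN : ∀ h : ℤ, ∀ v ∈ U h, N v = s h • v) (m n : ℤ) :
    ∀ v ∈ sumIcc U m n, N v - s m • v ∈ sumIcc U (m + 1) n := by
  have key : ∀ j, m ≤ j → j ≤ n → ∀ v ∈ U j, (N - s m • 1) v ∈ sumIcc U (m + 1) n := by
    intro j hj1 hj2 v hv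
    have h1 : (N - s m • 1) v = (s j - s m) • v := by
      simp [LinearMap.sub_apply, LinearMap.smul_apply, hN j v hv, sub_smul]
    rw [h1]
    rcases eq_or_lt_of_le hj1 with rfl | h
    · simp
    · exact le_sumIcc U (by omega) hj2 (Submodule.smul_mem _ _ hv)
  intro v hv
  have h2 := map_sumIcc_le key v hv
  simpa [LinearMap.sub_apply, LinearMap.smul_apply] using h2

lemma mapTrid (hN : ∀ h : ℤ, ∀ v ∈ U h, N v ∈ U (h - 1) ⊔ U h ⊔ U (h + 1)) (m n : ℤ) :
    ∀ v ∈ sumIcc U m n, N v ∈ sumIcc U (m - 1) (n + 1) := by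
  apply map_sumIcc_le
  intro j hj1 hj2 v hv
  have h1 := hN j v hv
  have h2 : U (j - 1) ⊔ U j ⊔ U (j + 1) ≤ sumIcc U (m - 1) (n + 1) := by
    apply sup_le (sup_le _ _)
    · exact le_sumIcc U (by omega) (by omega)
    · exact le_sumIcc U (by omega) (by omega)
    · exact le_sumIcc U (by omega) (by omega)
  exact h2 h1

end Shift

end TDaux

namespace TDaux

open Polynomial Submodule

section Poly

variable {K : Type*} [Field K] {V : Type*} [AddCommGroup V] [Module K V]

lemma pow_apply_eig {M : Module.End K V} {v : V} {c : K} (h : M v = c • v) (k : ℕ) :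
    (M ^ k) v = c ^ k • v := by
  induction k with
  | zero => simp
  | succ k ih =>
    rw [pow_succ, Module.End.mul_apply, h, map_smul, ih, smul_smul]
    rw [show c * c ^ k = c ^ (k + 1) by rw [pow_succ]; ring]

lemma aeval_apply_eig {M : Module.End K V} {v : V} {c : K} (h : M v = c • v) (p : K[X]) :
    (Polynomial.aeval M p) v = p.eval c • v := by
  induction p using Polynomial.induction_on' with
  | add p r hp hr => rw [map_add, LinearMap.add_apply, hp, hr, eval_add, add_smul]
  | monomial n cc =>
    rw [Polynomial.aeval_monomial, eval_monomial]
    rw [Module.End.mul_apply, pow_apply_eig h, Module.algebraMap_end_apply, smul_smul]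

lemma pow_mem_of_invariant {M : Module.End K V} {W : Submodule K V}
    (hW : ∀ v ∈ W, M v ∈ W) (k : ℕ) : ∀ v ∈ W, (M ^ k) v ∈ W := by
  induction k with
  | zero => intro v hv; simpa using hv
  | succ k ih =>
    intro v hv
    rw [pow_succ, Module.End.mul_apply]
    exact ih _ (hW v hv)

lemma aeval_mem_of_invariant {M : Module.End K V} {W : Submodule K V}
    (hW : ∀ v ∈ W, M v ∈ W) (p : K[X]) : ∀ v ∈ W, (Polynomial.aeval M p) v ∈ W := by
  induction p using Polynomial.induction_on' with
  | add p r hp hr =>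
    intro v hv
    rw [map_add, LinearMap.add_apply]
    exact add_mem (hp v hv) (hr v hv)
  | monomial n cc =>
    intro v hv
    rw [Polynomial.aeval_monomial, Module.End.mul_apply, Module.algebraMap_end_apply]
    exact Submodule.smul_mem _ _ (pow_mem_of_invariant hW n v hv)

/-- The polynomial `∏_{g ∈ [0,d], g ≠ j} (X - μ g)`. -/
noncomputable def projPoly (μ : ℤ → K) (d : ℕ) (j : ℤ) : K[X] :=
  ∏ g ∈ (Finset.Icc (0 : ℤ) (d : ℤ)).erase j, (X - C (μ g))

lemma projPoly_eval_ne_zero {μ : ℤ → K} {d : ℕ} {j : ℤ} {ν : K}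
    (hν : ∀ g : ℤ, 0 ≤ g → g ≤ (d : ℤ) → g ≠ j → μ g ≠ ν) :
    (projPoly μ d j).eval ν ≠ 0 := by
  rw [projPoly, eval_prod]
  apply Finset.prod_ne_zero_iff.mpr
  intro g hg
  rw [Finset.mem_erase, Finset.mem_Icc] at hg
  rw [eval_sub, eval_X, eval_C, sub_ne_zero]
  exact fun hc => hν g hg.2.1 hg.2.2 hg.1 hc.symm

lemma projPoly_eval_eq_zero {μ : ℤ → K} {d : ℕ} {j g : ℤ}
    (h1 : 0 ≤ g) (h2 : g ≤ (d : ℤ)) (h3 : g ≠ j) :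
    (projPoly μ d j).eval (μ g) = 0 := by
  rw [projPoly, eval_prod]
  apply Finset.prod_eq_zero (i := g)
  · rw [Finset.mem_erase, Finset.mem_Icc]; exact ⟨h3, h1, h2⟩
  · simp

/-- Kill lemma: the projector polynomial at `j` annihilates `sumIcc dec m n` if `j ∉ [m,n]`. -/
lemma aeval_projPoly_eq_zero {dec : ℤ → Submodule K V} {M : Module.End K V} {μ : ℤ → K}
    {d : ℕ}
    (hbotl : ∀ i : ℤ, i < 0 → dec i = ⊥) (hbotg : ∀ i : ℤ, (d : ℤ) < i → dec i = ⊥)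
    (heig : ∀ i : ℤ, ∀ v ∈ dec i, M v = μ i • v)
    {j m n : ℤ} (hj : j < m ∨ n < j) :
    ∀ x ∈ sumIcc dec m n, (Polynomial.aeval M (projPoly μ d j)) x = 0 := by
  intro x hx
  have key : ∀ g, m ≤ g → g ≤ n → ∀ v ∈ dec g,
      (Polynomial.aeval M (projPoly μ d j)) v ∈ (⊥ : Submodule K V) := by
    intro g hg1 hg2 v hv
    by_cases hgr : 0 ≤ g ∧ g ≤ (d : ℤ)
    · rw [aeval_apply_eig (heig g v hv), projPoly_eval_eq_zero hgr.1 hgr.2 (by omega)]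
      simp
    · have : dec g = ⊥ := by
        rcases not_and_or.mp hgr with h | h
        · exact hbotl g (by omega)
        · exact hbotg g (by omega)
      rw [this] at hv
      simp only [Submodule.mem_bot] at hv
      simp [hv]
  have := map_sumIcc_le key x hx
  simpa using this

/-- Eigen-component extraction: if `M w = ν • w` and `ν` differs from all eigenvalues
`μ g`, `g ∈ [0,d] \ {j}`, then `w ∈ U j`. -/
lemma mem_of_eigen {d : ℕ} {U : ℤ → Submodule K V} {M : Module.End K V} {μ : ℤ → K}
    (hbotl : ∀ i : ℤ, i < 0 → U i = ⊥) (hbotg : ∀ i : ℤ, (d : ℤ) < i → U i = ⊥)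
    (htop : sumIcc U 0 (d : ℤ) = ⊤)
    (heig : ∀ i : ℤ, ∀ v ∈ U i, M v = μ i • v)
    {j : ℤ} {ν : K} (hν : ∀ g : ℤ, 0 ≤ g → g ≤ (d : ℤ) → g ≠ j → μ g ≠ ν)
    {w : V} (hw : M w = ν • w) : w ∈ U j := by
  set p := projPoly μ d j with hp
  have h1 : (Polynomial.aeval M p) w = p.eval ν • w := aeval_apply_eig hw p
  have h2 : p.eval ν ≠ 0 := projPoly_eval_ne_zero hν
  have h3 : (Polynomial.aeval M p) w ∈ U j := by
    have hw' : w ∈ sumIcc U 0 (d : ℤ) := htop ▸ Submodule.mem_top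
    have key : ∀ g, (0:ℤ) ≤ g → g ≤ (d : ℤ) → ∀ v ∈ U g,
        (Polynomial.aeval M p) v ∈ U j := by
      intro g hg1 hg2 v hv
      by_cases hgj : g = j
      · subst hgj
        rw [aeval_apply_eig (heig g v hv)]
        exact Submodule.smul_mem _ _ hv
      · rw [aeval_apply_eig (heig g v hv), projPoly_eval_eq_zero hg1 hg2 hgj]
        simp
    exact map_sumIcc_le key w hw'
  rw [h1] at h3
  have h4 := Submodule.smul_mem (U j) (p.eval ν)⁻¹ h3
  rwa [smul_smul, inv_mul_cancel₀ h2, one_smul] at h4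

end Poly

end TDaux

namespace TDaux

open Polynomial Submodule

section Split

variable {K : Type*} [Field K] {V : Type*} [AddCommGroup V] [Module K V]
variable {d : ℕ} {dec : ℤ → Submodule K V} {M : Module.End K V} {μ : ℤ → K}

lemma chopTop
    (hbotl : ∀ i : ℤ, i < 0 → dec i = ⊥) (hbotg : ∀ i : ℤ, (d : ℤ) < i → dec i = ⊥)
    (heig : ∀ i : ℤ, ∀ v ∈ dec i, M v = μ i • v)
    (hinj : ∀ g h : ℤ, μ g = μ h → g = h) :
    ∀ (N : ℕ) (m' m n : ℤ) (x : V), x ∈ sumIcc dec m' (n + N) → x ∈ sumIcc dec m n →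
      x ∈ sumIcc dec m' n := by
  intro N
  induction N with
  | zero => intro m' m n x h1 _; simpa using h1
  | succ N ih =>
    intro m' m n x h1 h2
    have hcast : (n + (N + 1 : ℕ) : ℤ) = (n + (N : ℤ)) + 1 := by push_cast; ring
    rw [hcast] at h1
    have h1' := sumIcc_split_top h1
    rcases Submodule.mem_sup.mp h1' with ⟨y, hy, u, hu, hyu⟩
    set j : ℤ := n + (N : ℤ) + 1 with hj
    have hkill1 : (Polynomial.aeval M (projPoly μ d j)) x = 0 :=
      aeval_projPoly_eq_zero hbotl hbotg heig (Or.inr (by omega)) x h2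
    have hkill2 : (Polynomial.aeval M (projPoly μ d j)) y = 0 :=
      aeval_projPoly_eq_zero hbotl hbotg heig (Or.inr (by omega)) y hy
    have heval : (Polynomial.aeval M (projPoly μ d j)) u = (projPoly μ d j).eval (μ j) • u :=
      aeval_apply_eig (heig j u hu) _
    have hne : (projPoly μ d j).eval (μ j) ≠ 0 :=
      projPoly_eval_ne_zero (fun g _ _ hg hc => hg (hinj g j hc))
    have h5 : (0 : V) = (projPoly μ d j).eval (μ j) • u := by
      rw [← hkill1, ← hyu, map_add, hkill2, heval, zero_add]
    have hu0 : u = 0 := ((smul_eq_zero.mp h5.symm).resolve_left hne)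
    rw [hu0, add_zero] at hyu
    rw [← hyu]
    have hnN : y ∈ sumIcc dec m n := hyu ▸ h2
    exact ih m' m n y hy hnN

lemma splitUp {G : ℤ → Submodule K V}
    (hbotl : ∀ i : ℤ, i < 0 → dec i = ⊥) (hbotg : ∀ i : ℤ, (d : ℤ) < i → dec i = ⊥)
    (heig : ∀ i : ℤ, ∀ v ∈ dec i, M v = μ i • v)
    (hinj : ∀ g h : ℤ, μ g = μ h → g = h)
    (hGinv : ∀ k : ℤ, ∀ v ∈ G k, M v ∈ G k)
    (hGanti : ∀ k : ℤ, G (k + 1) ≤ G k)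
    (hdecG : ∀ k : ℤ, dec k ≤ G k)
    (hstep : ∀ k : ℤ, dec k ⊓ G (k + 1) ≤ dec (k + 1))
    (hbase : G 0 = sumIcc dec 0 (d : ℤ)) :
    ∀ k : ℤ, 0 ≤ k → G k = sumIcc dec k (d : ℤ) := by
  have hGanti' : ∀ p r : ℤ, p ≤ r → G r ≤ G p := fun p r hpr =>
    Int.le_induction (motive := fun r _ => G r ≤ G p) (le_refl _)
      (fun n _ ih => le_trans (hGanti n) ih) r hpr
  apply Int.le_induction (motive := fun k _ => G k = sumIcc dec k (d : ℤ))
  · exact hbase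
  · intro n hn ihn
    apply le_antisymm
    · intro x hx
      have hx' : x ∈ sumIcc dec n (d : ℤ) := ihn ▸ (hGanti n hx)
      have hsplit := sumIcc_split_bot hx'
      rcases Submodule.mem_sup.mp hsplit with ⟨y, hy, z, hz, hyz⟩
      set p := projPoly μ d n with hp
      have hkillz : (Polynomial.aeval M p) z = 0 :=
        aeval_projPoly_eq_zero hbotl hbotg heig (Or.inl (by omega)) z hz
      have hevaly : (Polynomial.aeval M p) y = p.eval (μ n) • y :=
        aeval_apply_eig (heig n y hy) _
      have hne : p.eval (μ n) ≠ 0 :=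
        projPoly_eval_ne_zero (fun g _ _ hg hc => hg (hinj g n hc))
      have hmem : (Polynomial.aeval M p) x ∈ G (n + 1) :=
        aeval_mem_of_invariant (hGinv (n + 1)) p x hx
      have heq : (Polynomial.aeval M p) x = p.eval (μ n) • y := by
        rw [← hyz, map_add, hkillz, hevaly, add_zero]
      have hyG : y ∈ G (n + 1) := by
        have h6 := Submodule.smul_mem (G (n + 1)) (p.eval (μ n))⁻¹ (heq ▸ hmem)
        rwa [smul_smul, inv_mul_cancel₀ hne, one_smul] at h6
      have hy1 : y ∈ dec (n + 1) := hstep n ⟨hy, hyG⟩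
      have hy0 : y = 0 := by
        have e1 := heig n y hy
        have e2 := heig (n + 1) y hy1
        have e3 : (μ n - μ (n + 1)) • y = 0 := by
          rw [sub_smul, ← e1, ← e2, sub_self]
        rcases smul_eq_zero.mp e3 with h | h
        · exfalso
          have := hinj n (n + 1) (sub_eq_zero.mp h)
          omega
        · exact h
      rw [← hyz, hy0, zero_add]
      exact hz
    · apply sumIcc_le
      intro h hh1 hh2
      exact le_trans (hdecG h) (hGanti' (n + 1) h hh1)

lemma splitDown {G : ℤ → Submodule K V}
    (hbotl : ∀ i : ℤ, i < 0 → dec i = ⊥) (hbotg : ∀ i : ℤ, (d : ℤ) < i → dec i = ⊥)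
    (heig : ∀ i : ℤ, ∀ v ∈ dec i, M v = μ i • v)
    (hinj : ∀ g h : ℤ, μ g = μ h → g = h)
    (hGinv : ∀ k : ℤ, ∀ v ∈ G k, M v ∈ G k)
    (hGmono : ∀ k : ℤ, G k ≤ G (k + 1))
    (hdecG : ∀ k : ℤ, dec k ≤ G k)
    (hstep : ∀ k : ℤ, dec (k + 1) ⊓ G k ≤ dec k)
    (hbase : G (d : ℤ) = sumIcc dec 0 (d : ℤ)) :
    ∀ j : ℤ, j ≤ (d : ℤ) → G j = sumIcc dec 0 j := by
  have hGmono' : ∀ p r : ℤ, p ≤ r → G p ≤ G r := fun p r hpr =>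
    Int.le_induction (motive := fun r _ => G p ≤ G r) (le_refl _)
      (fun n _ ih => le_trans ih (hGmono n)) r hpr
  have key : ∀ m : ℕ, G ((d : ℤ) - m) = sumIcc dec 0 ((d : ℤ) - m) := by
    intro m
    induction m with
    | zero => simpa using hbase
    | succ m ihm =>
      set j : ℤ := (d : ℤ) - m - 1 with hjdef
      have hcast : ((d : ℤ) - (m + 1 : ℕ)) = j := by push_cast; ring
      rw [hcast]
      have hj1 : (d : ℤ) - m = j + 1 := by omega
      rw [hj1] at ihm
      apply le_antisymm
      · intro x hx
        have hx1 : x ∈ G (j + 1) := hGmono j hx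
        have hx2 : x ∈ sumIcc dec 0 (j + 1) := ihm ▸ hx1
        rcases Submodule.mem_sup.mp (sumIcc_split_top hx2) with ⟨y, hy, u, hu, hyu⟩
        set p := projPoly μ d (j + 1) with hp
        have hkilly : (Polynomial.aeval M p) y = 0 :=
          aeval_projPoly_eq_zero hbotl hbotg heig (Or.inr (by omega)) y hy
        have hevalu : (Polynomial.aeval M p) u = p.eval (μ (j + 1)) • u :=
          aeval_apply_eig (heig (j + 1) u hu) _
        have hne : p.eval (μ (j + 1)) ≠ 0 :=
          projPoly_eval_ne_zero (fun g _ _ hg hc => hg (hinj g (j + 1) hc))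
        have hmem : (Polynomial.aeval M p) x ∈ G j :=
          aeval_mem_of_invariant (hGinv j) p x hx
        have heq : (Polynomial.aeval M p) x = p.eval (μ (j + 1)) • u := by
          rw [← hyu, map_add, hkilly, hevalu, zero_add]
        have huG : u ∈ G j := by
          have h6 := Submodule.smul_mem (G j) (p.eval (μ (j + 1)))⁻¹ (heq ▸ hmem)
          rwa [smul_smul, inv_mul_cancel₀ hne, one_smul] at h6
        have hu1 : u ∈ dec j := hstep j ⟨hu, huG⟩
        have hu2 : u ∈ sumIcc dec 0 j := by
          rcases le_or_gt 0 j with h | h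
          · exact le_sumIcc dec h (le_refl _) hu1
          · rw [hbotl j h, Submodule.mem_bot] at hu1
            rw [hu1]
            exact Submodule.zero_mem _
        rw [← hyu]
        exact add_mem hy hu2
      · apply sumIcc_le
        intro h hh1 hh2
        exact le_trans (hdecG h) (hGmono' h j hh2)
  intro j hj
  have : ((d : ℤ) - ((d : ℤ) - j).toNat) = j := by omega
  calc G j = G ((d : ℤ) - ((d : ℤ) - j).toNat) := by rw [this]
    _ = sumIcc dec 0 ((d : ℤ) - ((d : ℤ) - j).toNat) := key _
    _ = sumIcc dec 0 j := by rw [this]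

end Split

end TDaux

namespace TDaux

open Polynomial Submodule

section More

variable {K : Type*} [Field K] {V : Type*} [AddCommGroup V] [Module K V]

lemma sumIcc_trim {U : ℤ → Submodule K V} {m n m' n' : ℤ}
    (hbot : ∀ i, m ≤ i → i ≤ n → ¬(m' ≤ i ∧ i ≤ n') → U i = ⊥) :
    sumIcc U m n ≤ sumIcc U m' n' := by
  apply sumIcc_le
  intro j hj1 hj2
  by_cases h : m' ≤ j ∧ j ≤ n'
  · exact le_sumIcc U h.1 h.2
  · rw [hbot j hj1 hj2 h]; exact bot_le

lemma zpow_shift {q : K} (hq0 : q ≠ 0) {e f : ℤ} (k : ℤ) (h : e = f + k) :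
    q ^ e = q ^ f * q ^ k := by rw [h, zpow_add₀ hq0]

lemma zpow_flip {q : K} {e f : ℤ} (h : e = -f) : q ^ e = (q ^ f)⁻¹ := by
  rw [h, zpow_neg]

end More

end TDaux
set_option maxHeartbeats 10000000 in
/-- the actions of `B` and `B*` on the six decompositions. -/
theorem stmt6 {K : Type*} [Field K] [IsAlgClosed K]
    {V : Type*} [AddCommGroup V] [Module K V] [FiniteDimensional K V] [Nontrivial V]
    (q : K) (hq0 : q ≠ 0) (hq : ∀ n : ℕ, 0 < n → q ^ n ≠ 1)
    (A A' : Module.End K V) (d : ℕ) (Vs Vs' : ℤ → Submodule K V) (θ θ' : ℤ → K)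
    (hTD : IsTridiagonalPair A A' d Vs Vs' θ θ')
    (a a' : K) (ha : a ≠ 0) (ha' : a' ≠ 0)
    (hθ : ∀ i : ℤ, 0 ≤ i → i ≤ (d : ℤ) → θ i = a * q ^ (2 * i - (d : ℤ)))
    (hθ' : ∀ i : ℤ, 0 ≤ i → i ≤ (d : ℤ) → θ' i = a' * q ^ ((d : ℤ) - 2 * i))
    (b b' : K) (hb : b ≠ 0) (hb' : b' ≠ 0)
    (B : Module.End K V)
    (hB : ∀ i : ℤ, 0 ≤ i → i ≤ (d : ℤ) → ∀ v ∈ dec0s0 d Vs Vs' i,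
      B v = (b * q ^ (2 * i - (d : ℤ))) • v)
    (B' : Module.End K V)
    (hB' : ∀ i : ℤ, 0 ≤ i → i ≤ (d : ℤ) → ∀ v ∈ decDsD d Vs Vs' i,
      B' v = (b' * q ^ ((d : ℤ) - 2 * i)) • v)
    (Kop : Module.End K V)
    (hKop : ∀ i : ℤ, 0 ≤ i → i ≤ (d : ℤ) → ∀ v ∈ dec0sD d Vs Vs' i,
      Kop v = (q ^ (2 * i - (d : ℤ))) • v)
    (Ks : Module.End K V)
    (hKs : ∀ i : ℤ, 0 ≤ i → i ≤ (d : ℤ) → ∀ v ∈ decDs0 d Vs Vs' i,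
      Ks v = (q ^ (2 * i - (d : ℤ))) • v)
    (Kinv Ksinv : Module.End K V)
    (hKinv1 : Kop * Kinv = 1) (hKinv2 : Kinv * Kop = 1)
    (hKsinv1 : Ks * Ksinv = 1) (hKsinv2 : Ksinv * Ks = 1)
    :
    ∀ i : ℤ, 0 ≤ i → i ≤ (d : ℤ) →
      -- [0D]
      (Submodule.map (B - (b * q ^ ((d : ℤ) - 2 * i)) • 1) (dec0D Vs i) ≤ dec0D Vs (i - 1) ∧
        Submodule.map (B' - (b' * q ^ ((d : ℤ) - 2 * i)) • 1) (dec0D Vs i) ≤ dec0D Vs (i + 1)) ∧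
      -- [0*D*]
      (Submodule.map (B - (b * q ^ (2 * i - (d : ℤ))) • 1) (dec0sDs Vs' i) ≤ dec0sDs Vs' (i - 1) ∧
        Submodule.map (B' - (b' * q ^ (2 * i - (d : ℤ))) • 1) (dec0sDs Vs' i) ≤
          dec0sDs Vs' (i + 1)) ∧
      -- [0*D]
      (Submodule.map (B - (b * q ^ (2 * i - (d : ℤ))) • 1) (dec0sD d Vs Vs' i) ≤
          dec0sD d Vs Vs' (i - 1) ∧
        Submodule.map (B' - (b' * q ^ ((d : ℤ) - 2 * i)) • 1) (dec0sD d Vs Vs' i) ≤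
          dec0sD d Vs Vs' (i + 1)) ∧
      -- [0*0]
      (Submodule.map (B - (b * q ^ (2 * i - (d : ℤ))) • 1) (dec0s0 d Vs Vs' i) = ⊥ ∧
        Submodule.map B' (dec0s0 d Vs Vs' i) ≤
          dec0s0 d Vs Vs' (i - 1) ⊔ dec0s0 d Vs Vs' i ⊔ dec0s0 d Vs Vs' (i + 1)) ∧
      -- [D*0]
      (Submodule.map (B - (b * q ^ (2 * i - (d : ℤ))) • 1) (decDs0 d Vs Vs' i) ≤
          decDs0 d Vs Vs' (i + 1) ∧
        Submodule.map (B' - (b' * q ^ ((d : ℤ) - 2 * i)) • 1) (decDs0 d Vs Vs' i) ≤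
          decDs0 d Vs Vs' (i - 1)) ∧
      -- [D*D]
      (Submodule.map B (decDsD d Vs Vs' i) ≤
          decDsD d Vs Vs' (i - 1) ⊔ decDsD d Vs Vs' i ⊔ decDsD d Vs Vs' (i + 1) ∧
        Submodule.map (B' - (b' * q ^ ((d : ℤ) - 2 * i)) • 1) (decDsD d Vs Vs' i) = ⊥) := by
  clear hKop hKs hKinv1 hKinv2 hKsinv1 hKsinv2
  -- basic bottom facts
  have hVbotl := hTD.decompV.bot_of_lt
  have hVbotg := hTD.decompV.bot_of_gt
  have hV'botl := hTD.decompV'.bot_of_lt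
  have hV'botg := hTD.decompV'.bot_of_gt
  have hVtop : sumIcc Vs 0 (d : ℤ) = ⊤ := TDaux.sumIcc_eq_top hTD.decompV
  have hV'top : sumIcc Vs' 0 (d : ℤ) = ⊤ := TDaux.sumIcc_eq_top hTD.decompV'
  -- bottom facts for the split decompositions
  have h0s0botl : ∀ i : ℤ, i < 0 → dec0s0 d Vs Vs' i = ⊥ := by
    intro i hi
    rw [dec0s0, TDaux.sumIcc_bot (show i < 0 from hi), bot_inf_eq]
  have h0s0botg : ∀ i : ℤ, (d : ℤ) < i → dec0s0 d Vs Vs' i = ⊥ := by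
    intro i hi
    rw [dec0s0, TDaux.sumIcc_bot (show (d : ℤ) - i < 0 by omega), inf_bot_eq]
  have hDsDbotl : ∀ i : ℤ, i < 0 → decDsD d Vs Vs' i = ⊥ := by
    intro i hi
    rw [decDsD, TDaux.sumIcc_bot (show (d : ℤ) < (d : ℤ) - i by omega), bot_inf_eq]
  have hDsDbotg : ∀ i : ℤ, (d : ℤ) < i → decDsD d Vs Vs' i = ⊥ := by
    intro i hi
    rw [decDsD, TDaux.sumIcc_bot (show (d : ℤ) < i from hi), inf_bot_eq]
  -- extended eigenvalue facts
  have hBe : ∀ i : ℤ, ∀ v ∈ dec0s0 d Vs Vs' i, B v = (b * q ^ (2 * i - (d : ℤ))) • v := by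
    intro i v hv
    by_cases h1 : 0 ≤ i ∧ i ≤ (d : ℤ)
    · exact hB i h1.1 h1.2 v hv
    · have hbot : dec0s0 d Vs Vs' i = ⊥ := by
        rcases not_and_or.mp h1 with h | h
        · exact h0s0botl i (by omega)
        · exact h0s0botg i (by omega)
      rw [hbot, Submodule.mem_bot] at hv
      rw [hv]; simp
  have hB'e : ∀ i : ℤ, ∀ v ∈ decDsD d Vs Vs' i, B' v = (b' * q ^ ((d : ℤ) - 2 * i)) • v := by
    intro i v hv
    by_cases h1 : 0 ≤ i ∧ i ≤ (d : ℤ)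
    · exact hB' i h1.1 h1.2 v hv
    · have hbot : decDsD d Vs Vs' i = ⊥ := by
        rcases not_and_or.mp h1 with h | h
        · exact hDsDbotl i (by omega)
        · exact hDsDbotg i (by omega)
      rw [hbot, Submodule.mem_bot] at hv
      rw [hv]; simp
  -- injectivity of eigenvalue maps
  have hzinj : ∀ m n : ℤ, q ^ m = q ^ n → m = n := fun m n h =>
    TDaux.zpow_injective' hq0 hq h
  have hβinj : ∀ g h : ℤ, b * q ^ (2 * g - (d : ℤ)) = b * q ^ (2 * h - (d : ℤ)) → g = h := by
    intro g h e
    have := hzinj _ _ (mul_left_cancel₀ hb e)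
    omega
  have hβ'inj : ∀ g h : ℤ, b' * q ^ ((d : ℤ) - 2 * g) = b' * q ^ ((d : ℤ) - 2 * h) → g = h := by
    intro g h e
    have := hzinj _ _ (mul_left_cancel₀ hb' e)
    omega
  -- flag facts for A and A'
  have hAtridV' : ∀ m n : ℤ, ∀ v ∈ sumIcc Vs' m n, A v ∈ sumIcc Vs' (m - 1) (n + 1) :=
    fun m n => TDaux.mapTrid (fun h v hv => hTD.trid' h ⟨v, hv, rfl⟩) m n
  have hA'tridV : ∀ m n : ℤ, ∀ v ∈ sumIcc Vs m n, A' v ∈ sumIcc Vs (m - 1) (n + 1) :=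
    fun m n => TDaux.mapTrid (fun h v hv => hTD.trid h ⟨v, hv, rfl⟩) m n
  have hAkilltopV : ∀ m n : ℤ, ∀ v ∈ sumIcc Vs m n, A v - θ n • v ∈ sumIcc Vs m (n - 1) :=
    fun m n => TDaux.mapKillTop hTD.eig m n
  have hAkillbotV : ∀ m n : ℤ, ∀ v ∈ sumIcc Vs m n, A v - θ m • v ∈ sumIcc Vs (m + 1) n :=
    fun m n => TDaux.mapKillBot hTD.eig m n
  have hA'killtopV' : ∀ m n : ℤ, ∀ v ∈ sumIcc Vs' m n, A' v - θ' n • v ∈ sumIcc Vs' m (n - 1) :=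
    fun m n => TDaux.mapKillTop hTD.eig' m n
  have hA'killbotV' : ∀ m n : ℤ, ∀ v ∈ sumIcc Vs' m n, A' v - θ' m • v ∈ sumIcc Vs' (m + 1) n :=
    fun m n => TDaux.mapKillBot hTD.eig' m n
  -- easy raising and lowering on the split decompositions
  have hr0s0 : ∀ i : ℤ, ∀ v ∈ dec0s0 d Vs Vs' i,
      A v - θ ((d : ℤ) - i) • v ∈ dec0s0 d Vs Vs' (i + 1) := by
    intro i v hv
    obtain ⟨hv1, hv2⟩ := Submodule.mem_inf.mp hv
    refine Submodule.mem_inf.mpr ⟨?_, ?_⟩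
    · have h1 := hAtridV' 0 i v hv1
      have h2 : A v ∈ sumIcc Vs' 0 (i + 1) :=
        TDaux.sumIcc_trim (fun j hj1 hj2 hj3 => hV'botl j (by omega)) h1
      exact sub_mem h2 (Submodule.smul_mem _ _ (TDaux.sumIcc_mono (le_refl 0) (by omega) hv1))
    · have h1 := hAkilltopV 0 ((d : ℤ) - i) v hv2
      exact TDaux.sumIcc_mono (le_refl 0) (by omega) h1
  have hl0s0 : ∀ i : ℤ, ∀ v ∈ dec0s0 d Vs Vs' i,
      A' v - θ' i • v ∈ dec0s0 d Vs Vs' (i - 1) := by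
    intro i v hv
    obtain ⟨hv1, hv2⟩ := Submodule.mem_inf.mp hv
    refine Submodule.mem_inf.mpr ⟨?_, ?_⟩
    · exact hA'killtopV' 0 i v hv1
    · have h1 := hA'tridV 0 ((d : ℤ) - i) v hv2
      have h2 : A' v ∈ sumIcc Vs 0 ((d : ℤ) - (i - 1)) :=
        TDaux.sumIcc_trim (fun j hj1 hj2 hj3 => hVbotl j (by omega)) h1
      exact sub_mem h2 (Submodule.smul_mem _ _ (TDaux.sumIcc_mono (le_refl 0) (by omega) hv2))
  have hrDsD : ∀ i : ℤ, ∀ v ∈ decDsD d Vs Vs' i,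
      A v - θ i • v ∈ decDsD d Vs Vs' (i + 1) := by
    intro i v hv
    obtain ⟨hv1, hv2⟩ := Submodule.mem_inf.mp hv
    refine Submodule.mem_inf.mpr ⟨?_, ?_⟩
    · have h1 := hAtridV' ((d : ℤ) - i) (d : ℤ) v hv1
      have h2 : A v ∈ sumIcc Vs' ((d : ℤ) - (i + 1)) (d : ℤ) :=
        TDaux.sumIcc_trim (fun j hj1 hj2 hj3 => hV'botg j (by omega)) h1
      exact sub_mem h2 (Submodule.smul_mem _ _ (TDaux.sumIcc_mono (by omega) (le_refl _) hv1))
    · exact hAkillbotV i (d : ℤ) v hv2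
  have hlDsD : ∀ i : ℤ, ∀ v ∈ decDsD d Vs Vs' i,
      A' v - θ' ((d : ℤ) - i) • v ∈ decDsD d Vs Vs' (i - 1) := by
    intro i v hv
    obtain ⟨hv1, hv2⟩ := Submodule.mem_inf.mp hv
    refine Submodule.mem_inf.mpr ⟨?_, ?_⟩
    · have h1 := hA'killbotV' ((d : ℤ) - i) (d : ℤ) v hv1
      exact TDaux.sumIcc_mono (by omega) (le_refl _) h1
    · have h1 := hA'tridV i (d : ℤ) v hv2
      have h2 : A' v ∈ sumIcc Vs (i - 1) (d : ℤ) :=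
        TDaux.sumIcc_trim (fun j hj1 hj2 hj3 => hVbotg j (by omega)) h1
      exact sub_mem h2 (Submodule.smul_mem _ _ (TDaux.sumIcc_mono (by omega) (le_refl _) hv2))
  -- spanning of the split decompositions
  have h0s0top : sumIcc (dec0s0 d Vs Vs') 0 (d : ℤ) = ⊤ := by
    set W := sumIcc (dec0s0 d Vs Vs') 0 (d : ℤ) with hW
    have hsub : ∀ j : ℤ, dec0s0 d Vs Vs' j ≤ W := by
      intro j
      by_cases h1 : 0 ≤ j ∧ j ≤ (d : ℤ)
      · exact TDaux.le_sumIcc _ h1.1 h1.2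
      · rcases not_and_or.mp h1 with h | h
        · rw [h0s0botl j (by omega)]; exact bot_le
        · rw [h0s0botg j (by omega)]; exact bot_le
    have hWA : Submodule.map A W ≤ W := by
      rw [Submodule.map_le_iff_le_comap]
      apply TDaux.sumIcc_le
      intro j hj1 hj2 v hv
      rw [Submodule.mem_comap]
      have h2 : A v = (A v - θ ((d : ℤ) - j) • v) + θ ((d : ℤ) - j) • v := by abel
      rw [h2]
      exact add_mem (hsub (j + 1) (hr0s0 j v hv))
        (Submodule.smul_mem _ _ (hsub j hv))
    have hWA' : Submodule.map A' W ≤ W := by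
      rw [Submodule.map_le_iff_le_comap]
      apply TDaux.sumIcc_le
      intro j hj1 hj2 v hv
      rw [Submodule.mem_comap]
      have h2 : A' v = (A' v - θ' j • v) + θ' j • v := by abel
      rw [h2]
      exact add_mem (hsub (j - 1) (hl0s0 j v hv))
        (Submodule.smul_mem _ _ (hsub j hv))
    rcases hTD.irred W hWA hWA' with h | h
    · exfalso
      have hle : Vs' 0 ≤ W := by
        refine le_trans ?_ (hsub 0)
        intro x hx
        refine Submodule.mem_inf.mpr ⟨TDaux.le_sumIcc _ (le_refl _) (le_refl _) hx, ?_⟩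
        have : x ∈ (⊤ : Submodule K V) := Submodule.mem_top
        rw [← hVtop] at this
        exact TDaux.sumIcc_mono (le_refl _) (by omega) this
      rw [h, le_bot_iff] at hle
      exact hTD.decompV'.ne_bot 0 (le_refl _) (by positivity) hle
    · exact h
  have hDsDtop : sumIcc (decDsD d Vs Vs') 0 (d : ℤ) = ⊤ := by
    set W := sumIcc (decDsD d Vs Vs') 0 (d : ℤ) with hW
    have hsub : ∀ j : ℤ, decDsD d Vs Vs' j ≤ W := by
      intro j
      by_cases h1 : 0 ≤ j ∧ j ≤ (d : ℤ)
      · exact TDaux.le_sumIcc _ h1.1 h1.2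
      · rcases not_and_or.mp h1 with h | h
        · rw [hDsDbotl j (by omega)]; exact bot_le
        · rw [hDsDbotg j (by omega)]; exact bot_le
    have hWA : Submodule.map A W ≤ W := by
      rw [Submodule.map_le_iff_le_comap]
      apply TDaux.sumIcc_le
      intro j hj1 hj2 v hv
      rw [Submodule.mem_comap]
      have h2 : A v = (A v - θ j • v) + θ j • v := by abel
      rw [h2]
      exact add_mem (hsub (j + 1) (hrDsD j v hv)) (Submodule.smul_mem _ _ (hsub j hv))
    have hWA' : Submodule.map A' W ≤ W := by
      rw [Submodule.map_le_iff_le_comap]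
      apply TDaux.sumIcc_le
      intro j hj1 hj2 v hv
      rw [Submodule.mem_comap]
      have h2 : A' v = (A' v - θ' ((d : ℤ) - j) • v) + θ' ((d : ℤ) - j) • v := by abel
      rw [h2]
      exact add_mem (hsub (j - 1) (hlDsD j v hv)) (Submodule.smul_mem _ _ (hsub j hv))
    rcases hTD.irred W hWA hWA' with h | h
    · exfalso
      have hle : Vs' (d : ℤ) ≤ W := by
        refine le_trans ?_ (hsub 0)
        intro x hx
        refine Submodule.mem_inf.mpr ⟨TDaux.le_sumIcc _ (by omega) (le_refl _) hx, ?_⟩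
        have : x ∈ (⊤ : Submodule K V) := Submodule.mem_top
        rw [← hVtop] at this
        exact this
      rw [h, le_bot_iff] at hle
      exact hTD.decompV'.ne_bot (d : ℤ) (by positivity) (le_refl _) hle
    · exact h
  -- the q-Weyl commutation relations
  have hqq : q ^ (2 : ℤ) = q * q := by
    rw [show (2 : ℤ) = 1 + 1 by norm_num, zpow_add₀ hq0, zpow_one]
  have hqm2 : q ^ (-2 : ℤ) = (q * q)⁻¹ := by
    rw [show (-2 : ℤ) = -(2 : ℤ) by norm_num, zpow_neg, hqq]
  have kerpt : ∀ (M1 M2 : Module.End K V) (c : K) (v : V),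
      ((q • (M1 ∘ₗ M2) - q⁻¹ • (M2 ∘ₗ M1)) - c • (LinearMap.id : V →ₗ[K] V)) v =
        q • M1 (M2 v) - q⁻¹ • M2 (M1 v) - c • v := by
    intro M1 M2 c v
    simp only [LinearMap.sub_apply, LinearMap.smul_apply, LinearMap.comp_apply,
      LinearMap.id_apply]
  have com1 : ∀ v : V, q • A (B v) - q⁻¹ • B (A v) = ((q - q⁻¹) * (a * b)) • v := by
    have hker : sumIcc (dec0s0 d Vs Vs') 0 (d : ℤ) ≤
        LinearMap.ker ((q • (A ∘ₗ B) - q⁻¹ • (B ∘ₗ A)) -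
          ((q - q⁻¹) * (a * b)) • (LinearMap.id : V →ₗ[K] V)) := by
      apply TDaux.sumIcc_le
      intro i h1 h2 v hv
      rw [LinearMap.mem_ker, kerpt]
      have hθdi : θ ((d : ℤ) - i) = a * (q ^ (2 * i - (d : ℤ)))⁻¹ := by
        rw [hθ ((d : ℤ) - i) (by omega) (by omega),
          TDaux.zpow_flip (show 2 * ((d : ℤ) - i) - (d : ℤ) = -(2 * i - (d : ℤ)) by ring)]
      obtain ⟨r, hrmem, hAv⟩ : ∃ r, r ∈ dec0s0 d Vs Vs' (i + 1) ∧
          A v = r + (a * (q ^ (2 * i - (d : ℤ)))⁻¹) • v := by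
        refine ⟨A v - θ ((d : ℤ) - i) • v, hr0s0 i v hv, ?_⟩
        rw [← hθdi]; abel
      have hBv : B v = (b * q ^ (2 * i - (d : ℤ))) • v := hBe i v hv
      have hBr : B r = (b * q ^ (2 * (i + 1) - (d : ℤ))) • r := hBe (i + 1) r hrmem
      have hsh : q ^ (2 * (i + 1) - (d : ℤ)) = q ^ (2 * i - (d : ℤ)) * (q * q) :=
        (TDaux.zpow_shift hq0 (e := 2 * (i + 1) - (d : ℤ)) (f := 2 * i - (d : ℤ)) 2
          (by ring)).trans (by rw [hqq])
      have htne : q ^ (2 * i - (d : ℤ)) ≠ 0 := zpow_ne_zero _ hq0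
      have e1 : A (B v) = (b * q ^ (2 * i - (d : ℤ))) •
          (r + (a * (q ^ (2 * i - (d : ℤ)))⁻¹) • v) := by
        rw [hBv, map_smul, hAv]
      have e2 : B (A v) = (b * (q ^ (2 * i - (d : ℤ)) * (q * q))) • r +
          ((a * (q ^ (2 * i - (d : ℤ)))⁻¹) * (b * q ^ (2 * i - (d : ℤ)))) • v := by
        rw [hAv, map_add, map_smul, hBv, hBr, hsh, smul_smul]
      rw [e1, e2]
      match_scalars <;> (field_simp; try ring)
    intro v
    have hv := hker (show v ∈ sumIcc (dec0s0 d Vs Vs') 0 (d : ℤ) by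
      rw [h0s0top]; exact Submodule.mem_top)
    rw [LinearMap.mem_ker, kerpt] at hv
    exact sub_eq_zero.mp hv
  have com2 : ∀ v : V, q • B (A' v) - q⁻¹ • A' (B v) = ((q - q⁻¹) * (a' * b)) • v := by
    have hker : sumIcc (dec0s0 d Vs Vs') 0 (d : ℤ) ≤
        LinearMap.ker ((q • (B ∘ₗ A') - q⁻¹ • (A' ∘ₗ B)) -
          ((q - q⁻¹) * (a' * b)) • (LinearMap.id : V →ₗ[K] V)) := by
      apply TDaux.sumIcc_le
      intro i h1 h2 v hv
      rw [LinearMap.mem_ker, kerpt]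
      have hθ'i : θ' i = a' * (q ^ (2 * i - (d : ℤ)))⁻¹ := by
        rw [hθ' i (by omega) (by omega),
          TDaux.zpow_flip (show (d : ℤ) - 2 * i = -(2 * i - (d : ℤ)) by ring)]
      obtain ⟨l, hlmem, hA'v⟩ : ∃ l, l ∈ dec0s0 d Vs Vs' (i - 1) ∧
          A' v = l + (a' * (q ^ (2 * i - (d : ℤ)))⁻¹) • v := by
        refine ⟨A' v - θ' i • v, hl0s0 i v hv, ?_⟩
        rw [← hθ'i]; abel
      have hBv : B v = (b * q ^ (2 * i - (d : ℤ))) • v := hBe i v hv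
      have hBl : B l = (b * q ^ (2 * (i - 1) - (d : ℤ))) • l := hBe (i - 1) l hlmem
      have hsh : q ^ (2 * (i - 1) - (d : ℤ)) = q ^ (2 * i - (d : ℤ)) * (q * q)⁻¹ :=
        (TDaux.zpow_shift hq0 (e := 2 * (i - 1) - (d : ℤ)) (f := 2 * i - (d : ℤ)) (-2)
          (by ring)).trans (by rw [hqm2])
      have htne : q ^ (2 * i - (d : ℤ)) ≠ 0 := zpow_ne_zero _ hq0
      have e1 : B (A' v) = (b * (q ^ (2 * i - (d : ℤ)) * (q * q)⁻¹)) • l +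
          ((a' * (q ^ (2 * i - (d : ℤ)))⁻¹) * (b * q ^ (2 * i - (d : ℤ)))) • v := by
        rw [hA'v, map_add, map_smul, hBv, hBl, hsh, smul_smul]
      have e2 : A' (B v) = (b * q ^ (2 * i - (d : ℤ))) •
          (l + (a' * (q ^ (2 * i - (d : ℤ)))⁻¹) • v) := by
        rw [hBv, map_smul, hA'v]
      rw [e1, e2]
      match_scalars <;> (field_simp; try ring)
    intro v
    have hv := hker (show v ∈ sumIcc (dec0s0 d Vs Vs') 0 (d : ℤ) by
      rw [h0s0top]; exact Submodule.mem_top)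
    rw [LinearMap.mem_ker, kerpt] at hv
    exact sub_eq_zero.mp hv
  have com3 : ∀ v : V, q • B' (A v) - q⁻¹ • A (B' v) = ((q - q⁻¹) * (a * b')) • v := by
    have hker : sumIcc (decDsD d Vs Vs') 0 (d : ℤ) ≤
        LinearMap.ker ((q • (B' ∘ₗ A) - q⁻¹ • (A ∘ₗ B')) -
          ((q - q⁻¹) * (a * b')) • (LinearMap.id : V →ₗ[K] V)) := by
      apply TDaux.sumIcc_le
      intro i h1 h2 v hv
      rw [LinearMap.mem_ker, kerpt]
      have hθi : θ i = a * q ^ (2 * i - (d : ℤ)) := hθ i (by omega) (by omega)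
      obtain ⟨r, hrmem, hAv⟩ : ∃ r, r ∈ decDsD d Vs Vs' (i + 1) ∧
          A v = r + (a * q ^ (2 * i - (d : ℤ))) • v := by
        refine ⟨A v - θ i • v, hrDsD i v hv, ?_⟩
        rw [← hθi]; abel
      have hflip : q ^ ((d : ℤ) - 2 * i) = (q ^ (2 * i - (d : ℤ)))⁻¹ :=
        TDaux.zpow_flip (by ring)
      have hB'v : B' v = (b' * (q ^ (2 * i - (d : ℤ)))⁻¹) • v := by
        rw [hB'e i v hv, hflip]
      have hB'r : B' r = (b' * ((q ^ (2 * i - (d : ℤ)))⁻¹ * (q * q)⁻¹)) • r := by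
        rw [hB'e (i + 1) r hrmem,
          (TDaux.zpow_shift hq0 (e := (d : ℤ) - 2 * (i + 1)) (f := (d : ℤ) - 2 * i) (-2)
            (by ring)).trans (by rw [hqm2, hflip])]
      have htne : q ^ (2 * i - (d : ℤ)) ≠ 0 := zpow_ne_zero _ hq0
      have e1 : B' (A v) = (b' * ((q ^ (2 * i - (d : ℤ)))⁻¹ * (q * q)⁻¹)) • r +
          ((a * q ^ (2 * i - (d : ℤ))) * (b' * (q ^ (2 * i - (d : ℤ)))⁻¹)) • v := by
        rw [hAv, map_add, map_smul, hB'v, hB'r, smul_smul]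
      have e2 : A (B' v) = (b' * (q ^ (2 * i - (d : ℤ)))⁻¹) •
          (r + (a * q ^ (2 * i - (d : ℤ))) • v) := by
        rw [hB'v, map_smul, hAv]
      rw [e1, e2]
      match_scalars <;> (field_simp; try ring)
    intro v
    have hv := hker (show v ∈ sumIcc (decDsD d Vs Vs') 0 (d : ℤ) by
      rw [hDsDtop]; exact Submodule.mem_top)
    rw [LinearMap.mem_ker, kerpt] at hv
    exact sub_eq_zero.mp hv
  have com4 : ∀ v : V, q • A' (B' v) - q⁻¹ • B' (A' v) = ((q - q⁻¹) * (a' * b')) • v := by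
    have hker : sumIcc (decDsD d Vs Vs') 0 (d : ℤ) ≤
        LinearMap.ker ((q • (A' ∘ₗ B') - q⁻¹ • (B' ∘ₗ A')) -
          ((q - q⁻¹) * (a' * b')) • (LinearMap.id : V →ₗ[K] V)) := by
      apply TDaux.sumIcc_le
      intro i h1 h2 v hv
      rw [LinearMap.mem_ker, kerpt]
      have hθ'di : θ' ((d : ℤ) - i) = a' * q ^ (2 * i - (d : ℤ)) := by
        rw [hθ' ((d : ℤ) - i) (by omega) (by omega),
          show (d : ℤ) - 2 * ((d : ℤ) - i) = 2 * i - (d : ℤ) by ring]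
      obtain ⟨l, hlmem, hA'v⟩ : ∃ l, l ∈ decDsD d Vs Vs' (i - 1) ∧
          A' v = l + (a' * q ^ (2 * i - (d : ℤ))) • v := by
        refine ⟨A' v - θ' ((d : ℤ) - i) • v, hlDsD i v hv, ?_⟩
        rw [← hθ'di]; abel
      have hflip : q ^ ((d : ℤ) - 2 * i) = (q ^ (2 * i - (d : ℤ)))⁻¹ :=
        TDaux.zpow_flip (by ring)
      have hB'v : B' v = (b' * (q ^ (2 * i - (d : ℤ)))⁻¹) • v := by
        rw [hB'e i v hv, hflip]
      have hB'l : B' l = (b' * ((q ^ (2 * i - (d : ℤ)))⁻¹ * (q * q))) • l := by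
        rw [hB'e (i - 1) l hlmem,
          (TDaux.zpow_shift hq0 (e := (d : ℤ) - 2 * (i - 1)) (f := (d : ℤ) - 2 * i) 2
            (by ring)).trans (by rw [hqq, hflip])]
      have htne : q ^ (2 * i - (d : ℤ)) ≠ 0 := zpow_ne_zero _ hq0
      have e1 : A' (B' v) = (b' * (q ^ (2 * i - (d : ℤ)))⁻¹) •
          (l + (a' * q ^ (2 * i - (d : ℤ))) • v) := by
        rw [hB'v, map_smul, hA'v]
      have e2 : B' (A' v) = (b' * ((q ^ (2 * i - (d : ℤ)))⁻¹ * (q * q))) • l +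
          ((a' * q ^ (2 * i - (d : ℤ))) * (b' * (q ^ (2 * i - (d : ℤ)))⁻¹)) • v := by
        rw [hA'v, map_add, map_smul, hB'v, hB'l, smul_smul]
      rw [e1, e2]
      match_scalars <;> (field_simp; try ring)
    intro v
    have hv := hker (show v ∈ sumIcc (decDsD d Vs Vs') 0 (d : ℤ) by
      rw [hDsDtop]; exact Submodule.mem_top)
    rw [LinearMap.mem_ker, kerpt] at hv
    exact sub_eq_zero.mp hv
  -- bidiagonal action of B, B' on the eigenspaces of A and A'
  have bidiag1 : ∀ h : ℤ, ∀ v ∈ Vs h,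
      B v - (b * q ^ ((d : ℤ) - 2 * h)) • v ∈ Vs (h - 1) := by
    intro h v hv
    by_cases hr : 0 ≤ h ∧ h ≤ (d : ℤ)
    · have hAv : A v = (a * q ^ (2 * h - (d : ℤ))) • v := by
        rw [hTD.eig h v hv, hθ h hr.1 hr.2]
      have htne : q ^ (2 * h - (d : ℤ)) ≠ 0 := zpow_ne_zero _ hq0
      have h2 := com1 v
      rw [hAv, map_smul, smul_smul] at h2
      have h6 : q • A (B v) = ((q - q⁻¹) * (a * b)) • v +
          (q⁻¹ * (a * q ^ (2 * h - (d : ℤ)))) • B v := sub_eq_iff_eq_add.mp h2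
      have hAw : A (B v - (b * q ^ ((d : ℤ) - 2 * h)) • v) =
          (a * q ^ (2 * (h - 1) - (d : ℤ))) •
            (B v - (b * q ^ ((d : ℤ) - 2 * h)) • v) := by
        apply smul_right_injective V hq0
        show q • _ = q • _
        rw [map_sub, map_smul, hAv, smul_sub, h6,
          TDaux.zpow_flip (show (d : ℤ) - 2 * h = -(2 * h - (d : ℤ)) by ring),
          (TDaux.zpow_shift hq0 (e := 2 * (h - 1) - (d : ℤ)) (f := 2 * h - (d : ℤ)) (-2)
            (by ring)).trans (by rw [hqm2])]
        match_scalars <;> (field_simp; try ring)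
      refine TDaux.mem_of_eigen hVbotl hVbotg hVtop hTD.eig ?_ hAw
      intro g hg1 hg2 hgne heq
      rw [hθ g hg1 hg2] at heq
      have := hzinj _ _ (mul_left_cancel₀ ha heq)
      omega
    · have hbot : Vs h = ⊥ := by
        rcases not_and_or.mp hr with h' | h'
        · exact hVbotl h (by omega)
        · exact hVbotg h (by omega)
      rw [hbot, Submodule.mem_bot] at hv
      rw [hv]
      simp
  have bidiag2 : ∀ h : ℤ, ∀ v ∈ Vs h,
      B' v - (b' * q ^ ((d : ℤ) - 2 * h)) • v ∈ Vs (h + 1) := by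
    intro h v hv
    by_cases hr : 0 ≤ h ∧ h ≤ (d : ℤ)
    · have hAv : A v = (a * q ^ (2 * h - (d : ℤ))) • v := by
        rw [hTD.eig h v hv, hθ h hr.1 hr.2]
      have htne : q ^ (2 * h - (d : ℤ)) ≠ 0 := zpow_ne_zero _ hq0
      have h2 := com3 v
      rw [hAv, map_smul, smul_smul] at h2
      have h5 : (q * (a * q ^ (2 * h - (d : ℤ)))) • B' v =
          ((q - q⁻¹) * (a * b')) • v + q⁻¹ • A (B' v) := sub_eq_iff_eq_add.mp h2
      have h6 : q⁻¹ • A (B' v) = (q * (a * q ^ (2 * h - (d : ℤ)))) • B' v -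
          ((q - q⁻¹) * (a * b')) • v := by
        rw [h5]; abel
      have hAw : A (B' v - (b' * q ^ ((d : ℤ) - 2 * h)) • v) =
          (a * q ^ (2 * (h + 1) - (d : ℤ))) •
            (B' v - (b' * q ^ ((d : ℤ) - 2 * h)) • v) := by
        apply smul_right_injective V (inv_ne_zero hq0)
        show q⁻¹ • _ = q⁻¹ • _
        rw [map_sub, map_smul, hAv, smul_sub, h6,
          TDaux.zpow_flip (show (d : ℤ) - 2 * h = -(2 * h - (d : ℤ)) by ring),
          (TDaux.zpow_shift hq0 (e := 2 * (h + 1) - (d : ℤ)) (f := 2 * h - (d : ℤ)) 2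
            (by ring)).trans (by rw [hqq])]
        match_scalars <;> (field_simp; try ring)
      refine TDaux.mem_of_eigen hVbotl hVbotg hVtop hTD.eig ?_ hAw
      intro g hg1 hg2 hgne heq
      rw [hθ g hg1 hg2] at heq
      have := hzinj _ _ (mul_left_cancel₀ ha heq)
      omega
    · have hbot : Vs h = ⊥ := by
        rcases not_and_or.mp hr with h' | h'
        · exact hVbotl h (by omega)
        · exact hVbotg h (by omega)
      rw [hbot, Submodule.mem_bot] at hv
      rw [hv]
      simp
  have bidiag3 : ∀ h : ℤ, ∀ v ∈ Vs' h,
      B v - (b * q ^ (2 * h - (d : ℤ))) • v ∈ Vs' (h - 1) := by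
    intro h v hv
    by_cases hr : 0 ≤ h ∧ h ≤ (d : ℤ)
    · have hA'v : A' v = (a' * q ^ ((d : ℤ) - 2 * h)) • v := by
        rw [hTD.eig' h v hv, hθ' h hr.1 hr.2]
      have htne : q ^ (2 * h - (d : ℤ)) ≠ 0 := zpow_ne_zero _ hq0
      have hune : q ^ ((d : ℤ) - 2 * h) ≠ 0 := zpow_ne_zero _ hq0
      have h2 := com2 v
      rw [hA'v, map_smul, smul_smul] at h2
      have h5 : (q * (a' * q ^ ((d : ℤ) - 2 * h))) • B v =
          ((q - q⁻¹) * (a' * b)) • v + q⁻¹ • A' (B v) := sub_eq_iff_eq_add.mp h2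
      have h6 : q⁻¹ • A' (B v) = (q * (a' * q ^ ((d : ℤ) - 2 * h))) • B v -
          ((q - q⁻¹) * (a' * b)) • v := by
        rw [h5]; abel
      have hA'w : A' (B v - (b * q ^ (2 * h - (d : ℤ))) • v) =
          (a' * q ^ ((d : ℤ) - 2 * (h - 1))) •
            (B v - (b * q ^ (2 * h - (d : ℤ))) • v) := by
        apply smul_right_injective V (inv_ne_zero hq0)
        show q⁻¹ • _ = q⁻¹ • _
        rw [map_sub, map_smul, hA'v, smul_sub, h6,
          (TDaux.zpow_shift hq0 (e := (d : ℤ) - 2 * (h - 1)) (f := (d : ℤ) - 2 * h) 2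
            (by ring)).trans (by rw [hqq]),
          TDaux.zpow_flip (show (d : ℤ) - 2 * h = -(2 * h - (d : ℤ)) by ring)]
        match_scalars <;> (field_simp; try ring)
      refine TDaux.mem_of_eigen hV'botl hV'botg hV'top hTD.eig' ?_ hA'w
      intro g hg1 hg2 hgne heq
      rw [hθ' g hg1 hg2] at heq
      have := hzinj _ _ (mul_left_cancel₀ ha' heq)
      omega
    · have hbot : Vs' h = ⊥ := by
        rcases not_and_or.mp hr with h' | h'
        · exact hV'botl h (by omega)
        · exact hV'botg h (by omega)
      rw [hbot, Submodule.mem_bot] at hv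
      rw [hv]
      simp
  have bidiag4 : ∀ h : ℤ, ∀ v ∈ Vs' h,
      B' v - (b' * q ^ (2 * h - (d : ℤ))) • v ∈ Vs' (h + 1) := by
    intro h v hv
    by_cases hr : 0 ≤ h ∧ h ≤ (d : ℤ)
    · have hA'v : A' v = (a' * q ^ ((d : ℤ) - 2 * h)) • v := by
        rw [hTD.eig' h v hv, hθ' h hr.1 hr.2]
      have htne : q ^ (2 * h - (d : ℤ)) ≠ 0 := zpow_ne_zero _ hq0
      have hune : q ^ ((d : ℤ) - 2 * h) ≠ 0 := zpow_ne_zero _ hq0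
      have h2 := com4 v
      rw [hA'v, map_smul, smul_smul] at h2
      have h6 : q • A' (B' v) = ((q - q⁻¹) * (a' * b')) • v +
          (q⁻¹ * (a' * q ^ ((d : ℤ) - 2 * h))) • B' v := sub_eq_iff_eq_add.mp h2
      have hA'w : A' (B' v - (b' * q ^ (2 * h - (d : ℤ))) • v) =
          (a' * q ^ ((d : ℤ) - 2 * (h + 1))) •
            (B' v - (b' * q ^ (2 * h - (d : ℤ))) • v) := by
        apply smul_right_injective V hq0
        show q • _ = q • _
        rw [map_sub, map_smul, hA'v, smul_sub, h6,
          (TDaux.zpow_shift hq0 (e := (d : ℤ) - 2 * (h + 1)) (f := (d : ℤ) - 2 * h) (-2)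
            (by ring)).trans (by rw [hqm2]),
          TDaux.zpow_flip (show (d : ℤ) - 2 * h = -(2 * h - (d : ℤ)) by ring)]
        match_scalars <;> (field_simp; try ring)
      refine TDaux.mem_of_eigen hV'botl hV'botg hV'top hTD.eig' ?_ hA'w
      intro g hg1 hg2 hgne heq
      rw [hθ' g hg1 hg2] at heq
      have := hzinj _ _ (mul_left_cancel₀ ha' heq)
      omega
    · have hbot : Vs' h = ⊥ := by
        rcases not_and_or.mp hr with h' | h'
        · exact hV'botl h (by omega)
        · exact hV'botg h (by omega)
      rw [hbot, Submodule.mem_bot] at hv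
      rw [hv]
      simp
  -- flag shifts for B and B'
  have hBlowVs : ∀ m n : ℤ, ∀ v ∈ sumIcc Vs m n,
      B v - (b * q ^ ((d : ℤ) - 2 * n)) • v ∈ sumIcc Vs (m - 1) (n - 1) :=
    TDaux.mapShiftLower (s := fun h => b * q ^ ((d : ℤ) - 2 * h)) bidiag1
  have hBlowVs' : ∀ m n : ℤ, ∀ v ∈ sumIcc Vs' m n,
      B v - (b * q ^ (2 * n - (d : ℤ))) • v ∈ sumIcc Vs' (m - 1) (n - 1) :=
    TDaux.mapShiftLower (s := fun h => b * q ^ (2 * h - (d : ℤ))) bidiag3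
  have hB'raiseVs : ∀ m n : ℤ, ∀ v ∈ sumIcc Vs m n,
      B' v - (b' * q ^ ((d : ℤ) - 2 * m)) • v ∈ sumIcc Vs (m + 1) (n + 1) :=
    TDaux.mapShiftUpper (s := fun h => b' * q ^ ((d : ℤ) - 2 * h)) bidiag2
  have hB'raiseVs' : ∀ m n : ℤ, ∀ v ∈ sumIcc Vs' m n,
      B' v - (b' * q ^ (2 * m - (d : ℤ))) • v ∈ sumIcc Vs' (m + 1) (n + 1) :=
    TDaux.mapShiftUpper (s := fun h => b' * q ^ (2 * h - (d : ℤ))) bidiag4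
  have hBVs : ∀ m n : ℤ, ∀ v ∈ sumIcc Vs m n, B v ∈ sumIcc Vs (m - 1) n :=
    TDaux.mapLower (s := fun h => b * q ^ ((d : ℤ) - 2 * h)) bidiag1
  have hBVs' : ∀ m n : ℤ, ∀ v ∈ sumIcc Vs' m n, B v ∈ sumIcc Vs' (m - 1) n :=
    TDaux.mapLower (s := fun h => b * q ^ (2 * h - (d : ℤ))) bidiag3
  have hB'Vs : ∀ m n : ℤ, ∀ v ∈ sumIcc Vs m n, B' v ∈ sumIcc Vs m (n + 1) :=
    TDaux.mapUpper (s := fun h => b' * q ^ ((d : ℤ) - 2 * h)) bidiag2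
  have hB'Vs' : ∀ m n : ℤ, ∀ v ∈ sumIcc Vs' m n, B' v ∈ sumIcc Vs' m (n + 1) :=
    TDaux.mapUpper (s := fun h => b' * q ^ (2 * h - (d : ℤ))) bidiag4
  -- split identities
  have E1 : ∀ j : ℤ, sumIcc Vs' 0 j = sumIcc (dec0s0 d Vs Vs') 0 j := by
    have main := TDaux.splitDown (G := fun j => sumIcc Vs' 0 j)
      (μ := fun i => b * q ^ (2 * i - (d : ℤ))) h0s0botl h0s0botg hBe hβinj
      (fun k v hv => TDaux.sumIcc_trim (fun j a b c => hV'botl j (by omega)) (hBVs' 0 k v hv))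
      (fun k => TDaux.sumIcc_mono (le_refl _) (by omega))
      (fun k => inf_le_left)
      (fun j x hx => by
        obtain ⟨hx1, hx2⟩ := Submodule.mem_inf.mp hx
        obtain ⟨hx11, hx12⟩ := Submodule.mem_inf.mp hx1
        exact Submodule.mem_inf.mpr ⟨hx2, TDaux.sumIcc_mono (le_refl _) (by omega) hx12⟩)
      (hV'top.trans h0s0top.symm)
    intro j
    rcases le_or_gt j (d : ℤ) with h | h
    · exact main j h
    · have l1 : sumIcc Vs' 0 j = ⊤ :=
        eq_top_iff.mpr (by rw [← hV'top]; exact TDaux.sumIcc_mono (le_refl _) (by omega))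
      have l2 : sumIcc (dec0s0 d Vs Vs') 0 j = ⊤ :=
        eq_top_iff.mpr (by rw [← h0s0top]; exact TDaux.sumIcc_mono (le_refl _) (by omega))
      rw [l1, l2]
  have E2 : ∀ k : ℤ, sumIcc Vs 0 ((d : ℤ) - k) = sumIcc (dec0s0 d Vs Vs') k (d : ℤ) := by
    have main := TDaux.splitUp (G := fun k => sumIcc Vs 0 ((d : ℤ) - k))
      (μ := fun i => b * q ^ (2 * i - (d : ℤ))) h0s0botl h0s0botg hBe hβinj
      (fun k v hv => TDaux.sumIcc_trim (fun j a b c => hVbotl j (by omega)) (hBVs 0 ((d : ℤ) - k) v hv))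
      (fun k => TDaux.sumIcc_mono (le_refl _) (by omega))
      (fun k => inf_le_right)
      (fun k x hx => by
        obtain ⟨hx1, hx2⟩ := Submodule.mem_inf.mp hx
        obtain ⟨hx11, hx12⟩ := Submodule.mem_inf.mp hx1
        exact Submodule.mem_inf.mpr ⟨TDaux.sumIcc_mono (le_refl _) (by omega) hx11, hx2⟩)
      ((by rw [show (d : ℤ) - 0 = (d : ℤ) by ring, hVtop, ← h0s0top] :
        sumIcc Vs 0 ((d : ℤ) - 0) = sumIcc (dec0s0 d Vs Vs') 0 (d : ℤ)))
    intro k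
    rcases le_or_gt 0 k with h | h
    · exact main k h
    · have l1 : sumIcc Vs 0 ((d : ℤ) - k) = ⊤ :=
        eq_top_iff.mpr (by rw [← hVtop]; exact TDaux.sumIcc_mono (le_refl _) (by omega))
      have l2 : sumIcc (dec0s0 d Vs Vs') k (d : ℤ) = ⊤ :=
        eq_top_iff.mpr (by rw [← h0s0top]; exact TDaux.sumIcc_mono (by omega) (le_refl _))
      rw [l1, l2]
  have E3 : ∀ j : ℤ, sumIcc Vs' ((d : ℤ) - j) (d : ℤ) = sumIcc (decDsD d Vs Vs') 0 j := by
    have main := TDaux.splitDown (G := fun j => sumIcc Vs' ((d : ℤ) - j) (d : ℤ))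
      (μ := fun i => b' * q ^ ((d : ℤ) - 2 * i)) hDsDbotl hDsDbotg hB'e hβ'inj
      (fun k v hv => TDaux.sumIcc_trim (fun j a b c => hV'botg j (by omega))
        (hB'Vs' ((d : ℤ) - k) (d : ℤ) v hv))
      (fun k => TDaux.sumIcc_mono (by omega) (le_refl _))
      (fun k => inf_le_left)
      (fun j x hx => by
        obtain ⟨hx1, hx2⟩ := Submodule.mem_inf.mp hx
        obtain ⟨hx11, hx12⟩ := Submodule.mem_inf.mp hx1
        exact Submodule.mem_inf.mpr ⟨hx2, TDaux.sumIcc_mono (by omega) (le_refl _) hx12⟩)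
      ((by rw [show (d : ℤ) - (d : ℤ) = 0 by ring, hV'top, ← hDsDtop] :
        sumIcc Vs' ((d : ℤ) - (d : ℤ)) (d : ℤ) = sumIcc (decDsD d Vs Vs') 0 (d : ℤ)))
    intro j
    rcases le_or_gt j (d : ℤ) with h | h
    · exact main j h
    · have l1 : sumIcc Vs' ((d : ℤ) - j) (d : ℤ) = ⊤ :=
        eq_top_iff.mpr (by rw [← hV'top]; exact TDaux.sumIcc_mono (by omega) (le_refl _))
      have l2 : sumIcc (decDsD d Vs Vs') 0 j = ⊤ :=
        eq_top_iff.mpr (by rw [← hDsDtop]; exact TDaux.sumIcc_mono (le_refl _) (by omega))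
      rw [l1, l2]
  have E4 : ∀ k : ℤ, sumIcc Vs k (d : ℤ) = sumIcc (decDsD d Vs Vs') k (d : ℤ) := by
    have main := TDaux.splitUp (G := fun k => sumIcc Vs k (d : ℤ))
      (μ := fun i => b' * q ^ ((d : ℤ) - 2 * i)) hDsDbotl hDsDbotg hB'e hβ'inj
      (fun k v hv => TDaux.sumIcc_trim (fun j a b c => hVbotg j (by omega))
        (hB'Vs k (d : ℤ) v hv))
      (fun k => TDaux.sumIcc_mono (by omega) (le_refl _))
      (fun k => inf_le_right)
      (fun k x hx => by
        obtain ⟨hx1, hx2⟩ := Submodule.mem_inf.mp hx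
        obtain ⟨hx11, hx12⟩ := Submodule.mem_inf.mp hx1
        exact Submodule.mem_inf.mpr ⟨TDaux.sumIcc_mono (by omega) (le_refl _) hx11, hx2⟩)
      (hVtop.trans hDsDtop.symm)
    intro k
    rcases le_or_gt 0 k with h | h
    · exact main k h
    · have l1 : sumIcc Vs k (d : ℤ) = ⊤ :=
        eq_top_iff.mpr (by rw [← hVtop]; exact TDaux.sumIcc_mono (by omega) (le_refl _))
      have l2 : sumIcc (decDsD d Vs Vs') k (d : ℤ) = ⊤ :=
        eq_top_iff.mpr (by rw [← hDsDtop]; exact TDaux.sumIcc_mono (by omega) (le_refl _))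
      rw [l1, l2]
  have chop0 := TDaux.chopTop (μ := fun i => b * q ^ (2 * i - (d : ℤ)))
    h0s0botl h0s0botg hBe hβinj
  have chopD := TDaux.chopTop (μ := fun i => b' * q ^ ((d : ℤ) - 2 * i))
    hDsDbotl hDsDbotg hB'e hβ'inj
  have happly : ∀ (N : Module.End K V) (c : K) (v : V),
      (N - c • (1 : Module.End K V)) v = N v - c • v := by
    intro N c v
    simp [LinearMap.sub_apply, LinearMap.smul_apply]
  intro i h1 h2
  refine ⟨⟨?_, ?_⟩, ⟨?_, ?_⟩, ⟨?_, ?_⟩, ⟨?_, ?_⟩, ⟨?_, ?_⟩, ⟨?_, ?_⟩⟩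
  -- [0D].1
  · refine Submodule.map_le_iff_le_comap.mpr fun v hv => Submodule.mem_comap.mpr ?_
    rw [happly]
    exact bidiag1 i v hv
  -- [0D].2
  · refine Submodule.map_le_iff_le_comap.mpr fun v hv => Submodule.mem_comap.mpr ?_
    rw [happly]
    exact bidiag2 i v hv
  -- [0*D*].1
  · refine Submodule.map_le_iff_le_comap.mpr fun v hv => Submodule.mem_comap.mpr ?_
    rw [happly]
    exact bidiag3 i v hv
  -- [0*D*].2
  · refine Submodule.map_le_iff_le_comap.mpr fun v hv => Submodule.mem_comap.mpr ?_
    rw [happly]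
    exact bidiag4 i v hv
  -- [0*D].1
  · refine Submodule.map_le_iff_le_comap.mpr fun v hv => Submodule.mem_comap.mpr ?_
    rw [happly]
    obtain ⟨hv1, hv2⟩ := Submodule.mem_inf.mp hv
    refine Submodule.mem_inf.mpr ⟨?_, ?_⟩
    · exact TDaux.sumIcc_trim (fun j a b c => hV'botl j (by omega)) (hBlowVs' 0 i v hv1)
    · exact sub_mem (hBVs i (d : ℤ) v hv2)
        (Submodule.smul_mem _ _ (TDaux.sumIcc_mono (by omega) (le_refl _) hv2))
  -- [0*D].2
  · refine Submodule.map_le_iff_le_comap.mpr fun v hv => Submodule.mem_comap.mpr ?_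
    rw [happly]
    obtain ⟨hv1, hv2⟩ := Submodule.mem_inf.mp hv
    refine Submodule.mem_inf.mpr ⟨?_, ?_⟩
    · exact sub_mem (hB'Vs' 0 i v hv1)
        (Submodule.smul_mem _ _ (TDaux.sumIcc_mono (le_refl _) (by omega) hv1))
    · exact TDaux.sumIcc_trim (fun j a b c => hVbotg j (by omega)) (hB'raiseVs i (d : ℤ) v hv2)
  -- [0*0].1
  · rw [eq_bot_iff]
    refine Submodule.map_le_iff_le_comap.mpr fun v hv => Submodule.mem_comap.mpr ?_
    rw [happly, hBe i v hv]
    simp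
  -- [0*0].2
  · refine Submodule.map_le_iff_le_comap.mpr fun v hv => Submodule.mem_comap.mpr ?_
    obtain ⟨hv1, hv2⟩ := Submodule.mem_inf.mp hv
    have hg1 : B' v ∈ sumIcc (dec0s0 d Vs Vs') 0 (i + 1) := by
      rw [← E1 (i + 1)]
      exact hB'Vs' 0 i v hv1
    have hg2 : B' v ∈ sumIcc (dec0s0 d Vs Vs') (i - 1) (d : ℤ) := by
      rw [← E2 (i - 1)]
      exact TDaux.sumIcc_mono (le_refl _) (by omega) (hB'Vs 0 ((d : ℤ) - i) v hv2)
    have hg3 : B' v ∈ sumIcc (dec0s0 d Vs Vs') (i - 1)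
        ((i + 1) + (((d : ℤ) - (i + 1)).toNat : ℤ)) :=
      TDaux.sumIcc_mono (le_refl _) (by omega) hg2
    have hg4 := chop0 (((d : ℤ) - (i + 1)).toNat) (i - 1) 0 (i + 1) (B' v) hg3 hg1
    refine TDaux.sumIcc_le (W := dec0s0 d Vs Vs' (i - 1) ⊔ dec0s0 d Vs Vs' i ⊔
      dec0s0 d Vs Vs' (i + 1)) ?_ hg4
    intro j hj1 hj2
    have hj : j = i - 1 ∨ j = i ∨ j = i + 1 := by omega
    rcases hj with rfl | rfl | rfl
    · exact le_trans le_sup_left le_sup_left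
    · exact le_trans le_sup_right le_sup_left
    · exact le_sup_right
  -- [D*0].1
  · refine Submodule.map_le_iff_le_comap.mpr fun v hv => Submodule.mem_comap.mpr ?_
    rw [happly]
    obtain ⟨hv1, hv2⟩ := Submodule.mem_inf.mp hv
    refine Submodule.mem_inf.mpr ⟨?_, ?_⟩
    · exact sub_mem (TDaux.sumIcc_mono (by omega) (le_refl _) (hBVs' ((d : ℤ) - i) (d : ℤ) v hv1))
        (Submodule.smul_mem _ _ (TDaux.sumIcc_mono (by omega) (le_refl _) hv1))
    · rw [show b * q ^ (2 * i - (d : ℤ)) = b * q ^ ((d : ℤ) - 2 * ((d : ℤ) - i)) by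
        rw [show (d : ℤ) - 2 * ((d : ℤ) - i) = 2 * i - (d : ℤ) by ring]]
      exact TDaux.sumIcc_trim (fun j a b c => hVbotl j (by omega))
        (hBlowVs 0 ((d : ℤ) - i) v hv2)
  -- [D*0].2
  · refine Submodule.map_le_iff_le_comap.mpr fun v hv => Submodule.mem_comap.mpr ?_
    rw [happly]
    obtain ⟨hv1, hv2⟩ := Submodule.mem_inf.mp hv
    refine Submodule.mem_inf.mpr ⟨?_, ?_⟩
    · rw [show b' * q ^ ((d : ℤ) - 2 * i) = b' * q ^ (2 * ((d : ℤ) - i) - (d : ℤ)) by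
        rw [show 2 * ((d : ℤ) - i) - (d : ℤ) = (d : ℤ) - 2 * i by ring]]
      exact TDaux.sumIcc_trim (fun j a b c => hV'botg j (by omega))
        (hB'raiseVs' ((d : ℤ) - i) (d : ℤ) v hv1)
    · exact sub_mem (TDaux.sumIcc_mono (le_refl _) (by omega) (hB'Vs 0 ((d : ℤ) - i) v hv2))
        (Submodule.smul_mem _ _ (TDaux.sumIcc_mono (le_refl _) (by omega) hv2))
  -- [D*D].1
  · refine Submodule.map_le_iff_le_comap.mpr fun v hv => Submodule.mem_comap.mpr ?_
    obtain ⟨hv1, hv2⟩ := Submodule.mem_inf.mp hv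
    have hg1 : B v ∈ sumIcc (decDsD d Vs Vs') 0 (i + 1) := by
      rw [← E3 (i + 1)]
      exact TDaux.sumIcc_mono (by omega) (le_refl _) (hBVs' ((d : ℤ) - i) (d : ℤ) v hv1)
    have hg2 : B v ∈ sumIcc (decDsD d Vs Vs') (i - 1) (d : ℤ) := by
      rw [← E4 (i - 1)]
      exact hBVs i (d : ℤ) v hv2
    have hg3 : B v ∈ sumIcc (decDsD d Vs Vs') (i - 1)
        ((i + 1) + (((d : ℤ) - (i + 1)).toNat : ℤ)) :=
      TDaux.sumIcc_mono (le_refl _) (by omega) hg2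
    have hg4 := chopD (((d : ℤ) - (i + 1)).toNat) (i - 1) 0 (i + 1) (B v) hg3 hg1
    refine TDaux.sumIcc_le (W := decDsD d Vs Vs' (i - 1) ⊔ decDsD d Vs Vs' i ⊔
      decDsD d Vs Vs' (i + 1)) ?_ hg4
    intro j hj1 hj2
    have hj : j = i - 1 ∨ j = i ∨ j = i + 1 := by omega
    rcases hj with rfl | rfl | rfl
    · exact le_trans le_sup_left le_sup_left
    · exact le_trans le_sup_right le_sup_left
    · exact le_sup_right
  -- [D*D].2
  · rw [eq_bot_iff]
    refine Submodule.map_le_iff_le_comap.mpr fun v hv => Submodule.mem_comap.mpr ?_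
    rw [happly, hB'e i v hv]
    simp
end
end

section
/- The pair B, B* is a tridiagonal pair on V. Moreover the sequence bq^{2i−d} (0 ≤ i ≤ d) is a standard ordering of the eigenvalues of B, and the sequence b*q^{d−2i} (0 ≤ i ≤ d) is a standard ordering of the eigenvalues of B*. -/
noncomputable section

open Submodule

variable {K : Type*} [Field K]

variable {V : Type*} [AddCommGroup V] [Module K V]

namespace TD7

variable {U : ℤ → Submodule K V} {d : ℕ}

lemma le_sumIcc {m n j : ℤ} (h1 : m ≤ j) (h2 : j ≤ n) : U j ≤ sumIcc U m n :=
  le_biSup (f := U) (i := j) ⟨h1, h2⟩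

lemma sumIcc_le {m n : ℤ} {P : Submodule K V} (h : ∀ j, m ≤ j → j ≤ n → U j ≤ P) :
    sumIcc U m n ≤ P := by
  refine iSup₂_le fun j hj => h j hj.1 hj.2

lemma sumIcc_mono {m n m' n' : ℤ} (h1 : m ≤ m') (h2 : n' ≤ n) :
    sumIcc U m' n' ≤ sumIcc U m n :=
  sumIcc_le fun j hj1 hj2 => le_sumIcc (h1.trans hj1) (hj2.trans h2)

lemma sumIcc_empty {m n : ℤ} (h : n < m) : sumIcc U m n = ⊥ := by
  refine le_bot_iff.mp (sumIcc_le fun j hj1 hj2 => absurd (hj1.trans hj2) (by omega))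

lemma map_sumIcc (f : Module.End K V) {m n : ℤ} :
    (sumIcc U m n).map f = ⨆ j ∈ Set.Icc m n, (U j).map f := by
  simp [sumIcc, Submodule.map_iSup]

lemma map_sumIcc_le {f : Module.End K V} {m n : ℤ} {P : Submodule K V}
    (h : ∀ j, m ≤ j → j ≤ n → (U j).map f ≤ P) : (sumIcc U m n).map f ≤ P := by
  rw [map_sumIcc]; exact iSup₂_le fun j hj => h j hj.1 hj.2

variable (hD : IsDecomposition d U)
include hD

lemma sumIcc_eq_top {m n : ℤ} (hm : m ≤ 0) (hn : (d:ℤ) ≤ n) : sumIcc U m n = ⊤ := by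
  rw [← top_le_iff, ← hD.sup_eq_top]
  refine iSup_le fun j => ?_
  rcases lt_or_ge j 0 with h | h
  · rw [hD.bot_of_lt j h]; exact bot_le
  rcases le_or_gt j (d:ℤ) with h2 | h2
  · exact le_sumIcc (by omega) (by omega)
  · rw [hD.bot_of_gt j h2]; exact bot_le

lemma sumIcc_normalize {m n : ℤ} : sumIcc U m n = sumIcc U (max m 0) (min n (d:ℤ)) := by
  refine le_antisymm (sumIcc_le fun j hj1 hj2 => ?_) (sumIcc_mono (le_max_left _ _) (min_le_left _ _))
  rcases lt_or_ge j 0 with h | h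
  · rw [hD.bot_of_lt j h]; exact bot_le
  rcases le_or_gt j (d:ℤ) with h2 | h2
  · exact le_sumIcc (by omega) (by omega)
  · rw [hD.bot_of_gt j h2]; exact bot_le

/-- Every element of a finite biSup has a component representation. -/
lemma repr_subset (s : Finset ℤ) :
    ∀ v ∈ ⨆ j ∈ (s : Set ℤ), U j, ∃ f : ℤ → V,
      (∀ j, f j ∈ U j) ∧ (∀ j, j ∉ s → f j = 0) ∧ v = ∑ j ∈ s, f j := by
  set S : Submodule K V :=
    { carrier := {v | ∃ f : ℤ → V, (∀ j, f j ∈ U j) ∧ (∀ j, j ∉ s → f j = 0) ∧ v = ∑ j ∈ s, f j}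
      add_mem' := by
        rintro x y ⟨f, hf1, hf2, rfl⟩ ⟨g, hg1, hg2, rfl⟩
        exact ⟨f + g, fun j => add_mem (hf1 j) (hg1 j),
          fun j hj => by simp [hf2 j hj, hg2 j hj], by simp [Finset.sum_add_distrib]⟩
      zero_mem' := ⟨0, fun j => zero_mem _, fun j _ => rfl, by simp⟩
      smul_mem' := by
        rintro c x ⟨f, hf1, hf2, rfl⟩
        exact ⟨c • f, fun j => smul_mem _ _ (hf1 j),
          fun j hj => by simp [hf2 j hj], by simp [Finset.smul_sum]⟩ }
  intro v hv
  refine (iSup₂_le (fun j hj => ?_) : _ ≤ S) hv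
  intro x hx
  refine ⟨fun l => if l = j then x else 0, ?_, ?_, ?_⟩
  · intro l; by_cases h : l = j <;> simp [h, hx]
  · intro l hl; simp [show l ≠ j from fun h => hl (h ▸ hj)]
  · rw [Finset.sum_eq_single j (fun l _ hl => by simp [hl]) (fun h => absurd hj h)]; simp

omit hD in
lemma mem_sumIcc_repr (hD : IsDecomposition d U) {m n : ℤ} {v : V} (hv : v ∈ sumIcc U m n) :
    ∃ f : ℤ → V, (∀ j, f j ∈ U j) ∧ (∀ j, j ∉ Finset.Icc m n → f j = 0) ∧
      v = ∑ j ∈ Finset.Icc m n, f j := by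
  have : v ∈ ⨆ j ∈ ((Finset.Icc m n : Finset ℤ) : Set ℤ), U j := by
    rwa [Finset.coe_Icc]
  exact repr_subset hD _ v this

lemma components_eq_zero {f : ℤ → V} (hf : ∀ j, f j ∈ U j)
    (hsum : ∑ j ∈ Finset.Icc (0:ℤ) (d:ℤ), f j = 0) : ∀ j, f j = 0 := by
  have key : ∀ j ∈ Finset.Icc (0:ℤ) (d:ℤ), f j = 0 := by
    intro j hj
    have h1 : f j = - ∑ l ∈ (Finset.Icc (0:ℤ) (d:ℤ)).erase j, f l := by
      have := Finset.add_sum_erase _ f hj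
      rw [hsum] at this
      exact eq_neg_of_add_eq_zero_left this
    have h2 : f j ∈ U j ⊓ ⨆ l ∈ (((Finset.Icc (0:ℤ) (d:ℤ)).erase j : Finset ℤ) : Set ℤ), U l := by
      refine ⟨hf j, ?_⟩
      rw [h1]
      refine neg_mem (Submodule.sum_mem _ fun l hl => ?_)
      exact le_biSup (f := U) (i := l) (by exact_mod_cast hl) (hf l)
    have hdisj := hD.indep.disjoint_biSup (x := j)
      (y := (((Finset.Icc (0:ℤ) (d:ℤ)).erase j : Finset ℤ) : Set ℤ)) (by simp)
    have hb : f j ∈ (⊥ : Submodule K V) := by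
      rw [← hdisj.eq_bot]; exact h2
    simpa using hb
  intro j
  by_cases h : j ∈ Finset.Icc (0:ℤ) (d:ℤ)
  · exact key j h
  · have : U j = ⊥ := by
      simp only [Finset.mem_Icc, not_and_or, not_le] at h
      rcases h with h | h
      · exact hD.bot_of_lt j h
      · exact hD.bot_of_gt j h
    simpa [this] using hf j

lemma biSup_inf_biSup {s t : Finset ℤ} (hs : s ⊆ Finset.Icc (0:ℤ) (d:ℤ))
    (ht : t ⊆ Finset.Icc (0:ℤ) (d:ℤ)) :
    (⨆ j ∈ (s : Set ℤ), U j) ⊓ (⨆ j ∈ (t : Set ℤ), U j) = ⨆ j ∈ ((s ∩ t : Finset ℤ) : Set ℤ), U j := by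
  refine le_antisymm ?_ ?_
  · rintro v ⟨hv1, hv2⟩
    obtain ⟨f, hf1, hf2, hf3⟩ := repr_subset hD s v hv1
    obtain ⟨g, hg1, hg2, hg3⟩ := repr_subset hD t v hv2
    have hsum : ∑ j ∈ Finset.Icc (0:ℤ) (d:ℤ), (f j - g j) = 0 := by
      rw [Finset.sum_sub_distrib]
      rw [← Finset.sum_subset hs (fun x _ hx => hf2 x hx),
        ← Finset.sum_subset ht (fun x _ hx => hg2 x hx), ← hf3, ← hg3, sub_self]
    have hz := components_eq_zero hD (f := fun j => f j - g j)
      (fun j => sub_mem (hf1 j) (hg1 j)) hsum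
    have hfg : ∀ j, f j = g j := fun j => by have := hz j; rwa [sub_eq_zero] at this
    have : v = ∑ j ∈ s ∩ t, f j := by
      rw [hf3]
      refine (Finset.sum_subset Finset.inter_subset_left fun x hx hx2 => ?_).symm
      have : x ∉ t := fun h => hx2 (Finset.mem_inter.mpr ⟨hx, h⟩)
      rw [hfg x]; exact hg2 x this
    rw [this]
    exact Submodule.sum_mem _ fun j hj => le_biSup (f := U) (i := j) (by exact_mod_cast hj) (hf1 j)
  · refine iSup₂_le fun j hj => ?_
    have hj' : j ∈ (s ∩ t : Finset ℤ) := by exact_mod_cast hj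
    exact le_inf (le_biSup (f := U) (i := j) (by simpa using (Finset.mem_inter.mp hj').1))
      (le_biSup (f := U) (i := j) (by simpa using (Finset.mem_inter.mp hj').2))

omit hD in
lemma sumIcc_coe (m n : ℤ) : sumIcc U m n = ⨆ j ∈ ((Finset.Icc m n : Finset ℤ) : Set ℤ), U j := by
  rw [Finset.coe_Icc]; rfl

lemma sumIcc_inf_sumIcc {m n m' n' : ℤ} :
    sumIcc U m n ⊓ sumIcc U m' n' ≤ sumIcc U (max m m') (min n n') := by
  rw [show sumIcc U m n = sumIcc U (max m 0) (min n (d:ℤ)) from sumIcc_normalize hD,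
    show sumIcc U m' n' = sumIcc U (max m' 0) (min n' (d:ℤ)) from sumIcc_normalize hD]
  rw [sumIcc_coe, sumIcc_coe]
  rw [biSup_inf_biSup hD (by intro x; simp; omega) (by intro x; simp; omega)]
  have he : Finset.Icc (max m 0) (min n (d:ℤ)) ∩ Finset.Icc (max m' 0) (min n' (d:ℤ))
      = Finset.Icc (max (max m 0) (max m' 0)) (min (min n (d:ℤ)) (min n' (d:ℤ))) := by
    ext x; simp only [Finset.mem_inter, Finset.mem_Icc]; omega
  rw [he, ← sumIcc_coe]
  exact sumIcc_mono (by omega) (by omega)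

lemma disjoint_sumIcc {m n m' n' : ℤ} (h : n < m') :
    sumIcc U m n ⊓ sumIcc U m' n' = ⊥ := by
  refine le_bot_iff.mp ((sumIcc_inf_sumIcc hD).trans ?_)
  exact le_of_eq (sumIcc_empty (by omega))

section Eigen

open Polynomial

variable (E : Module.End K V) (mu : ℤ → K)

/-- `annPoly E mu s = ∏_{l ∈ s} (E - mu l)` as an endomorphism. -/
def annProd (s : Finset ℤ) : Module.End K V :=
  Polynomial.aeval E (∏ l ∈ s, (X - C (mu l)))

omit hD in
lemma annProd_empty : annProd E mu (∅ : Finset ℤ) = 1 := by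
  simp [annProd]

omit hD in
lemma annProd_insert {a : ℤ} {s : Finset ℤ} (ha : a ∉ s) (v : V) :
    annProd E mu (insert a s) v = E (annProd E mu s v) - mu a • annProd E mu s v := by
  rw [annProd, Finset.prod_insert ha, map_mul, Module.End.mul_apply, map_sub, aeval_X, aeval_C,
    LinearMap.sub_apply, Module.algebraMap_end_apply]
  rfl

omit hD in
lemma annProd_insert' {a : ℤ} {s : Finset ℤ} (ha : a ∉ s) (v : V) :
    annProd E mu (insert a s) v = annProd E mu s (E v - mu a • v) := by
  have hc : (∏ l ∈ s, (X - C (mu l))) * (X - C (mu a)) = ∏ l ∈ insert a s, (X - C (mu l)) := by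
    rw [Finset.prod_insert ha, mul_comm]
  rw [annProd, ← hc, map_mul, Module.End.mul_apply]
  congr 1
  rw [map_sub, aeval_X, aeval_C, LinearMap.sub_apply, Module.algebraMap_end_apply]

omit hD in
lemma annProd_apply_of_mem (heig : ∀ i, ∀ v ∈ U i, E v = mu i • v) (s : Finset ℤ) {m : ℤ} {v : V}
    (hv : v ∈ U m) : annProd E mu s v = (∏ l ∈ s, (mu m - mu l)) • v := by
  classical
  induction s using Finset.induction_on with
  | empty => simp [annProd_empty]
  | insert a s ha ih =>
    rw [annProd_insert E mu ha, ih, Finset.prod_insert ha]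
    rw [map_smul, heig m v hv, smul_smul, smul_smul, ← sub_smul]
    congr 1
    ring

omit hD in
lemma annProd_ann_of_mem (heig : ∀ i, ∀ v ∈ U i, E v = mu i • v) {s : Finset ℤ} {m : ℤ}
    (hm : m ∈ s) {v : V} (hv : v ∈ U m) : annProd E mu s v = 0 := by
  rw [annProd_apply_of_mem E mu heig s hv, Finset.prod_eq_zero hm (by ring), zero_smul]

omit hD in
lemma annProd_ann_sumIcc (heig : ∀ i, ∀ v ∈ U i, E v = mu i • v) {m n : ℤ} {v : V}
    (hv : v ∈ sumIcc U m n) : annProd E mu (Finset.Icc m n) v = 0 := by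
  revert v hv
  suffices h : sumIcc U m n ≤ LinearMap.ker (annProd E mu (Finset.Icc m n)) by
    intro v hv; exact LinearMap.mem_ker.mp (h hv)
  refine sumIcc_le fun j hj1 hj2 v hv => LinearMap.mem_ker.mpr ?_
  exact annProd_ann_of_mem E mu heig (Finset.mem_Icc.mpr ⟨hj1, hj2⟩) hv

lemma mem_biSup_of_annProd_eq_zero (heig : ∀ i, ∀ v ∈ U i, E v = mu i • v) {s : Finset ℤ}
    (hs : s ⊆ Finset.Icc (0:ℤ) (d:ℤ))
    (hne : ∀ m, 0 ≤ m → m ≤ (d:ℤ) → m ∉ s → ∀ l ∈ s, mu m ≠ mu l) {w : V}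
    (hw : annProd E mu s w = 0) :
    w ∈ ⨆ j ∈ (s : Set ℤ), U j := by
  have hw' : w ∈ sumIcc U 0 (d:ℤ) := by rw [sumIcc_eq_top hD le_rfl le_rfl]; trivial
  obtain ⟨f, hf1, hf2, hf3⟩ := mem_sumIcc_repr hD hw'
  have hcomp : ∀ j, (∏ l ∈ s, (mu j - mu l)) • f j = 0 := by
    refine components_eq_zero hD (fun j => Submodule.smul_mem _ _ (hf1 j)) ?_
    have : annProd E mu s w = ∑ j ∈ Finset.Icc (0:ℤ) (d:ℤ), (∏ l ∈ s, (mu j - mu l)) • f j := by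
      rw [hf3, map_sum]
      exact Finset.sum_congr rfl fun j _ => annProd_apply_of_mem E mu heig s (hf1 j)
    rw [← this, hw]
  have hfz : ∀ j ∈ Finset.Icc (0:ℤ) (d:ℤ), j ∉ s → f j = 0 := by
    intro j hj hjs
    have hne' : (∏ l ∈ s, (mu j - mu l)) ≠ 0 := by
      refine Finset.prod_ne_zero_iff.mpr fun l hl => sub_ne_zero.mpr ?_
      exact hne j (Finset.mem_Icc.mp hj).1 (Finset.mem_Icc.mp hj).2 hjs l hl
    exact (smul_eq_zero.mp (hcomp j)).resolve_left hne'
  have : w = ∑ j ∈ s, f j := by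
    rw [hf3]
    exact (Finset.sum_subset hs fun x hx hx2 => hfz x hx hx2).symm
  rw [this]
  exact Submodule.sum_mem _ fun j hj => le_biSup (f := U) (i := j) (by exact_mod_cast hj) (hf1 j)

omit hD in
lemma annProd_mem_invariant {W : Submodule K V} (hW : ∀ w ∈ W, E w ∈ W) (s : Finset ℤ) {w : V}
    (hw : w ∈ W) : annProd E mu s w ∈ W := by
  classical
  induction s using Finset.induction_on with
  | empty => simpa [annProd_empty] using hw
  | insert a s ha ih =>
    rw [annProd_insert E mu ha]
    exact sub_mem (hW _ ih) (Submodule.smul_mem _ _ ih)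

lemma component_mem_invariant (heig : ∀ i, ∀ v ∈ U i, E v = mu i • v)
    (hinj : ∀ i j, 0 ≤ i → i ≤ (d:ℤ) → 0 ≤ j → j ≤ (d:ℤ) → mu i = mu j → i = j)
    {W : Submodule K V} (hW : ∀ w ∈ W, E w ∈ W) {s : Finset ℤ} (hs : s ⊆ Finset.Icc (0:ℤ) (d:ℤ))
    {f : ℤ → V} (hf1 : ∀ j, f j ∈ U j) (hf2 : ∀ j, j ∉ s → f j = 0)
    (hw : ∑ j ∈ s, f j ∈ W) : ∀ j, f j ∈ W := by
  intro j
  by_cases hjs : j ∈ s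
  · have hj : j ∈ Finset.Icc (0:ℤ) (d:ℤ) := hs hjs
    set t := (Finset.Icc (0:ℤ) (d:ℤ)).erase j with ht
    have h1 : annProd E mu t (∑ x ∈ s, f x) ∈ W := annProd_mem_invariant E mu hW _ hw
    have h2 : annProd E mu t (∑ x ∈ s, f x) = (∏ l ∈ t, (mu j - mu l)) • f j := by
      rw [map_sum, Finset.sum_eq_single j]
      · exact annProd_apply_of_mem E mu heig _ (hf1 j)
      · intro m hm hmj
        exact annProd_ann_of_mem E mu heig (Finset.mem_erase.mpr ⟨hmj, hs hm⟩) (hf1 m)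
      · intro h; exact absurd hjs h
    have hc : (∏ l ∈ t, (mu j - mu l)) ≠ 0 := by
      refine Finset.prod_ne_zero_iff.mpr fun l hl => sub_ne_zero.mpr fun he => ?_
      obtain ⟨hlj, hl'⟩ := Finset.mem_erase.mp hl
      exact hlj ((hinj j l (Finset.mem_Icc.mp hj).1 (Finset.mem_Icc.mp hj).2
        (Finset.mem_Icc.mp hl').1 (Finset.mem_Icc.mp hl').2 he).symm)
    have : f j = (∏ l ∈ t, (mu j - mu l))⁻¹ • annProd E mu t (∑ x ∈ s, f x) := by
      rw [h2, smul_smul, inv_mul_cancel₀ hc, one_smul]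
    rw [this]
    exact Submodule.smul_mem _ _ h1
  · rw [hf2 j hjs]; exact zero_mem _

end Eigen

section Split

variable (S T : Module.End K V) (X Y : ℤ → Submodule K V) (sg tu : ℤ → K) (d : ℕ)

structure SplitHyps : Prop where
  irr : ∀ W : Submodule K V, W.map S ≤ W → W.map T ≤ W → W = ⊥ ∨ W = ⊤
  Xmono : ∀ i j : ℤ, i ≤ j → X i ≤ X j
  Ymono : ∀ i j : ℤ, i ≤ j → Y j ≤ Y i
  Xbot : X (-1) = ⊥
  Xtop : X (d:ℤ) = ⊤
  Ytop : Y 0 = ⊤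
  Ybot : Y ((d:ℤ)+1) = ⊥
  Y1ne : Y 1 ≠ ⊤
  X0ne : X 0 ≠ ⊥
  Xne : ∀ i : ℤ, 0 ≤ i → i ≤ (d:ℤ) → X (i-1) ≠ X i
  SX : ∀ i : ℤ, ∀ v ∈ X i, S v - sg i • v ∈ X (i-1)
  TX : ∀ i : ℤ, (X i).map T ≤ X (i+1)
  TY : ∀ i : ℤ, ∀ v ∈ Y i, T v - tu i • v ∈ Y (i+1)
  SY : ∀ i : ℤ, (Y i).map S ≤ Y (i-1)

structure SplitFacts : Prop where
  decomp : IsDecomposition d (fun i => X i ⊓ Y i)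
  zero : ∀ i : ℤ, X (i-1) ⊓ Y i = ⊥
  low : ∀ i : ℤ, -1 ≤ i → i ≤ (d:ℤ) → sumIcc (fun j => X j ⊓ Y j) 0 i = X i
  high : ∀ i : ℤ, 0 ≤ i → i ≤ (d:ℤ)+1 → sumIcc (fun j => X j ⊓ Y j) i (d:ℤ) = Y i
  lower : ∀ i : ℤ, ∀ v ∈ X i ⊓ Y i, S v - sg i • v ∈ X (i-1) ⊓ Y (i-1)
  raise : ∀ i : ℤ, ∀ v ∈ X i ⊓ Y i, T v - tu i • v ∈ X (i+1) ⊓ Y (i+1)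

variable {S T X Y sg tu d}

omit hD

lemma SplitHyps.Xbot' (h : SplitHyps S T X Y sg tu d) {i : ℤ} (hi : i < 0) : X i = ⊥ :=
  le_bot_iff.mp (h.Xbot ▸ h.Xmono i (-1) (by omega))

lemma SplitHyps.Xtop' (h : SplitHyps S T X Y sg tu d) {i : ℤ} (hi : (d:ℤ) ≤ i) : X i = ⊤ :=
  top_le_iff.mp (h.Xtop ▸ h.Xmono (d:ℤ) i hi)

lemma SplitHyps.Ytop' (h : SplitHyps S T X Y sg tu d) {i : ℤ} (hi : i ≤ 0) : Y i = ⊤ :=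
  top_le_iff.mp (h.Ytop ▸ h.Ymono i 0 hi)

lemma SplitHyps.Ybot' (h : SplitHyps S T X Y sg tu d) {i : ℤ} (hi : (d:ℤ) < i) : Y i = ⊥ :=
  le_bot_iff.mp (h.Ybot ▸ h.Ymono ((d:ℤ)+1) i (by omega))

lemma SplitHyps.lower' (h : SplitHyps S T X Y sg tu d) (i : ℤ) :
    ∀ v ∈ X i ⊓ Y i, S v - sg i • v ∈ X (i-1) ⊓ Y (i-1) := by
  rintro v ⟨hv1, hv2⟩
  refine ⟨h.SX i v hv1, ?_⟩
  have h1 : S v ∈ Y (i-1) := h.SY i ⟨v, hv2, rfl⟩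
  have h2 : sg i • v ∈ Y (i-1) := Submodule.smul_mem _ _ (h.Ymono (i-1) i (by omega) hv2)
  exact sub_mem h1 h2

lemma SplitHyps.raise' (h : SplitHyps S T X Y sg tu d) (i : ℤ) :
    ∀ v ∈ X i ⊓ Y i, T v - tu i • v ∈ X (i+1) ⊓ Y (i+1) := by
  rintro v ⟨hv1, hv2⟩
  refine ⟨?_, h.TY i v hv2⟩
  have h1 : T v ∈ X (i+1) := h.TX i ⟨v, hv1, rfl⟩
  have h2 : tu i • v ∈ X (i+1) := Submodule.smul_mem _ _ (h.Xmono i (i+1) (by omega) hv1)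
  exact sub_mem h1 h2

lemma SplitHyps.zero (h : SplitHyps S T X Y sg tu d) : ∀ i : ℤ, X (i-1) ⊓ Y i = ⊥ := by
  set W : Submodule K V := ⨆ i : ℤ, (X (i-1) ⊓ Y i) with hW
  have hle : ∀ i : ℤ, X (i-1) ⊓ Y i ≤ W := fun i => le_iSup (fun i : ℤ => X (i-1) ⊓ Y i) i
  have hSW : W.map S ≤ W := by
    rw [hW, Submodule.map_iSup]
    refine iSup_le fun i => Submodule.map_le_iff_le_comap.mpr ?_
    rintro v ⟨hv1, hv2⟩
    have key : S v - sg (i-1) • v ∈ X (i-1-1) ⊓ Y (i-1) := by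
      refine ⟨h.SX (i-1) v hv1, ?_⟩
      exact sub_mem (h.SY i ⟨v, hv2, rfl⟩)
        (Submodule.smul_mem _ _ (h.Ymono (i-1) i (by omega) hv2))
    have h2 : sg (i-1) • v ∈ X (i-1) ⊓ Y i :=
      ⟨Submodule.smul_mem _ _ hv1, Submodule.smul_mem _ _ hv2⟩
    have he : S v = (S v - sg (i-1) • v) + sg (i-1) • v := by abel
    show S v ∈ W
    rw [he]
    exact add_mem (hle (i-1) key) (hle i h2)
  have hTW : W.map T ≤ W := by
    rw [hW, Submodule.map_iSup]
    refine iSup_le fun i => Submodule.map_le_iff_le_comap.mpr ?_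
    rintro v ⟨hv1, hv2⟩
    have key : T v - tu i • v ∈ X (i+1-1) ⊓ Y (i+1) := by
      refine ⟨?_, h.TY i v hv2⟩
      have h1 : T v ∈ X (i-1+1) := h.TX (i-1) ⟨v, hv1, rfl⟩
      have h1' : T v ∈ X (i+1-1) := by
        refine h.Xmono _ _ (by omega) h1
      exact sub_mem h1' (Submodule.smul_mem _ _ (h.Xmono (i-1) (i+1-1) (by omega) hv1))
    have h2 : tu i • v ∈ X (i-1) ⊓ Y i :=
      ⟨Submodule.smul_mem _ _ hv1, Submodule.smul_mem _ _ hv2⟩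
    have he : T v = (T v - tu i • v) + tu i • v := by abel
    show T v ∈ W
    rw [he]
    exact add_mem (hle (i+1) key) (hle i h2)
  have hWY : W ≤ Y 1 := by
    refine iSup_le fun i => ?_
    rcases le_or_gt i 0 with hi | hi
    · rw [h.Xbot' (show i - 1 < 0 by omega)]
      simp
    · exact inf_le_right.trans (h.Ymono 1 i (by omega))
  have : W = ⊥ ∨ W = ⊤ := h.irr W hSW hTW
  rcases this with hB | hT
  · intro i
    exact le_bot_iff.mp (hB ▸ hle i)
  · exact absurd (top_le_iff.mp (hT ▸ hWY)) h.Y1ne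

lemma SplitHyps.sup_top (h : SplitHyps S T X Y sg tu d) :
    (⨆ i : ℤ, (X i ⊓ Y i)) = ⊤ := by
  set W : Submodule K V := ⨆ i : ℤ, (X i ⊓ Y i) with hW
  have hle : ∀ i : ℤ, X i ⊓ Y i ≤ W := fun i => le_iSup (fun i : ℤ => X i ⊓ Y i) i
  have hSW : W.map S ≤ W := by
    rw [hW, Submodule.map_iSup]
    refine iSup_le fun i => Submodule.map_le_iff_le_comap.mpr ?_
    intro v hv
    have key := h.lower' i v hv
    have h2 : sg i • v ∈ X i ⊓ Y i := Submodule.smul_mem _ _ hv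
    have he : S v = (S v - sg i • v) + sg i • v := by abel
    show S v ∈ W
    rw [he]
    exact add_mem (hle (i-1) key) (hle i h2)
  have hTW : W.map T ≤ W := by
    rw [hW, Submodule.map_iSup]
    refine iSup_le fun i => Submodule.map_le_iff_le_comap.mpr ?_
    intro v hv
    have key := h.raise' i v hv
    have h2 : tu i • v ∈ X i ⊓ Y i := Submodule.smul_mem _ _ hv
    have he : T v = (T v - tu i • v) + tu i • v := by abel
    show T v ∈ W
    rw [he]
    exact add_mem (hle (i+1) key) (hle i h2)
  rcases h.irr W hSW hTW with hB | hT
  · exfalso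
    refine h.X0ne (le_bot_iff.mp ?_)
    have : X 0 ⊓ Y 0 ≤ ⊥ := hB ▸ hle 0
    rwa [h.Ytop, inf_top_eq] at this
  · exact hT

lemma SplitHyps.low (h : SplitHyps S T X Y sg tu d) :
    ∀ i : ℤ, -1 ≤ i → sumIcc (fun j => X j ⊓ Y j) 0 i = X i := by
  intro i hi
  refine le_antisymm (sumIcc_le fun j hj1 hj2 => inf_le_left.trans (h.Xmono j i hj2)) ?_
  have hsplit : (⊤ : Submodule K V) ≤ sumIcc (fun j => X j ⊓ Y j) 0 i ⊔ Y (i+1) := by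
    rw [← h.sup_top]
    refine iSup_le fun j => ?_
    rcases lt_or_ge j 0 with hj | hj
    · simp [h.Xbot' hj]
    rcases le_or_gt j i with hj2 | hj2
    · exact le_sup_of_le_left (le_sumIcc (U := fun j => X j ⊓ Y j) hj hj2)
    · exact le_sup_of_le_right (inf_le_right.trans (h.Ymono (i+1) j (by omega)))
  have hP : sumIcc (fun j => X j ⊓ Y j) 0 i ≤ X i :=
    sumIcc_le fun j hj1 hj2 => inf_le_left.trans (h.Xmono j i hj2)
  calc X i = X i ⊓ (sumIcc (fun j => X j ⊓ Y j) 0 i ⊔ Y (i+1)) := by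
        rw [inf_eq_left.mpr (le_top.trans hsplit)]
    _ ≤ sumIcc (fun j => X j ⊓ Y j) 0 i := by
        rw [inf_comm, sup_inf_assoc_of_le _ hP]
        have : Y (i+1) ⊓ X i ≤ ⊥ := by
          rw [inf_comm]
          exact le_of_eq (by have := h.zero (i+1); simpa using this)
        refine sup_le le_rfl (this.trans bot_le)

lemma SplitHyps.high (h : SplitHyps S T X Y sg tu d) :
    ∀ i : ℤ, i ≤ (d:ℤ)+1 → sumIcc (fun j => X j ⊓ Y j) i (d:ℤ) = Y i := by
  intro i hi
  refine le_antisymm (sumIcc_le fun j hj1 hj2 => inf_le_right.trans (h.Ymono i j hj1)) ?_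
  have hsplit : (⊤ : Submodule K V) ≤ sumIcc (fun j => X j ⊓ Y j) i (d:ℤ) ⊔ X (i-1) := by
    rw [← h.sup_top]
    refine iSup_le fun j => ?_
    rcases lt_or_ge (d:ℤ) j with hj | hj
    · have : Y j = ⊥ := h.Ybot' hj
      rw [this]; simp
    rcases le_or_gt i j with hj2 | hj2
    · exact le_sup_of_le_left (le_sumIcc (U := fun j => X j ⊓ Y j) hj2 hj)
    · exact le_sup_of_le_right (inf_le_left.trans (h.Xmono j (i-1) (by omega)))
  have hP : sumIcc (fun j => X j ⊓ Y j) i (d:ℤ) ≤ Y i :=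
    sumIcc_le fun j hj1 hj2 => inf_le_right.trans (h.Ymono i j hj1)
  calc Y i = Y i ⊓ (sumIcc (fun j => X j ⊓ Y j) i (d:ℤ) ⊔ X (i-1)) := by
        rw [inf_eq_left.mpr (le_top.trans hsplit)]
    _ ≤ sumIcc (fun j => X j ⊓ Y j) i (d:ℤ) := by
        rw [inf_comm, sup_inf_assoc_of_le _ hP]
        have : X (i-1) ⊓ Y i ≤ ⊥ := le_of_eq (h.zero i)
        refine sup_le le_rfl (this.trans bot_le)

lemma SplitHyps.facts (h : SplitHyps S T X Y sg tu d) : SplitFacts S T X Y sg tu d := by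
  have hbotlt : ∀ i : ℤ, i < 0 → X i ⊓ Y i = ⊥ := fun i hi => by
    rw [h.Xbot' hi, bot_inf_eq]
  have hbotgt : ∀ i : ℤ, (d:ℤ) < i → X i ⊓ Y i = ⊥ := fun i hi => by
    rw [h.Ybot' hi, inf_bot_eq]
  refine ⟨⟨hbotlt, hbotgt, ?_, ?_, ?_⟩, h.zero, fun i h1 h2 => h.low i h1,
    fun i h1 h2 => h.high i h2, h.lower', h.raise'⟩
  · -- ne_bot
    intro i hi1 hi2 hbot
    refine h.Xne i hi1 hi2 ?_
    have hlow := h.low i (by omega)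
    have hlow' : sumIcc (fun j => X j ⊓ Y j) 0 (i-1) = X (i-1) := h.low (i-1) (by omega)
    rw [← hlow, ← hlow']
    refine le_antisymm (sumIcc_mono le_rfl (by omega)) (sumIcc_le fun j hj1 hj2 => ?_)
    rcases eq_or_lt_of_le hj2 with heq | hj3
    · show X j ⊓ Y j ≤ _
      rw [heq, hbot]; exact bot_le
    · exact le_sumIcc (U := fun j => X j ⊓ Y j) hj1 (by omega)
  · -- indep
    intro i
    rw [disjoint_iff]
    refine le_bot_iff.mp ?_
    have hrest : (⨆ j : ℤ, ⨆ (_ : j ≠ i), (X j ⊓ Y j)) ≤ X (i-1) ⊔ Y (i+1) := by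
      refine iSup₂_le fun j hj => ?_
      rcases lt_or_ge j i with hij | hij
      · exact le_sup_of_le_left (inf_le_left.trans (h.Xmono j (i-1) (by omega)))
      · have : i < j := lt_of_le_of_ne hij (Ne.symm hj)
        exact le_sup_of_le_right (inf_le_right.trans (h.Ymono (i+1) j (by omega)))
    refine le_trans (inf_le_inf_left _ hrest) ?_
    rintro v ⟨hv, hv2⟩
    obtain ⟨p, hp, r, hr, rfl⟩ := Submodule.mem_sup.mp hv2
    have hrX : r ∈ X i := by
      have : r = (p + r) - p := by abel
      rw [this]
      exact sub_mem hv.1 (h.Xmono (i-1) i (by omega) hp)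
    have hr0 : r = 0 := by
      have : r ∈ X (i+1-1) ⊓ Y (i+1) := ⟨h.Xmono i (i+1-1) (by omega) hrX, hr⟩
      have hz := h.zero (i+1)
      rw [hz] at this
      simpa using this
    have hp' : p ∈ X (i-1) ⊓ Y i := by
      refine ⟨hp, ?_⟩
      have : p = (p + r) - r := by abel
      rw [this]
      exact sub_mem hv.2 (by rw [hr0]; exact zero_mem _)
    rw [h.zero i] at hp'
    simp only [Submodule.mem_bot] at hp'
    simp [hp', hr0]
  · -- sup_eq_top
    exact h.sup_top

end Split

section Helpers

variable (E : Module.End K V) (mu : ℤ → K)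

omit hD in
lemma sumIcc_self (j : ℤ) : sumIcc U j j = U j := by
  refine le_antisymm (sumIcc_le fun l h1 h2 => ?_) (le_sumIcc le_rfl le_rfl)
  have : l = j := le_antisymm h2 h1
  rw [this]

lemma piece_le {j m n : ℤ} (h : (m ≤ j ∧ j ≤ n) ∨ j < 0 ∨ (d:ℤ) < j) :
    U j ≤ sumIcc U m n := by
  rcases h with ⟨h1, h2⟩ | h | h
  · exact le_sumIcc h1 h2
  · rw [hD.bot_of_lt j h]; exact bot_le
  · rw [hD.bot_of_gt j h]; exact bot_le

lemma proper_low : sumIcc U 0 ((d:ℤ)-1) ≠ ⊤ := by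
  intro htop
  refine hD.ne_bot (d:ℤ) (by omega) le_rfl ?_
  have : U (d:ℤ) = U (d:ℤ) ⊓ sumIcc U 0 ((d:ℤ)-1) := by rw [htop]; simp
  rw [this, ← sumIcc_self (U := U) (d:ℤ), inf_comm]
  exact disjoint_sumIcc hD (by omega)

lemma proper_high : sumIcc U 1 (d:ℤ) ≠ ⊤ := by
  intro htop
  refine hD.ne_bot 0 le_rfl (by omega) ?_
  have : U 0 = U 0 ⊓ sumIcc U 1 (d:ℤ) := by rw [htop]; simp
  rw [this, ← sumIcc_self (U := U) 0]
  exact disjoint_sumIcc hD (by omega)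

lemma strict_low {i : ℤ} (h1 : 0 ≤ i) (h2 : i ≤ (d:ℤ)) :
    sumIcc U 0 (i-1) ≠ sumIcc U 0 i := by
  intro heq
  refine hD.ne_bot i h1 h2 ?_
  have hle : U i ≤ sumIcc U 0 (i-1) := heq ▸ le_sumIcc h1 le_rfl
  have : U i = U i ⊓ sumIcc U 0 (i-1) := by rw [inf_eq_left.mpr hle]
  rw [this, ← sumIcc_self (U := U) i, inf_comm]
  exact disjoint_sumIcc hD (by omega)

lemma strict_high {i : ℤ} (h1 : 0 ≤ i) (h2 : i ≤ (d:ℤ)) :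
    sumIcc U (i+1) (d:ℤ) ≠ sumIcc U i (d:ℤ) := by
  intro heq
  refine hD.ne_bot i h1 h2 ?_
  have hle : U i ≤ sumIcc U (i+1) (d:ℤ) := heq ▸ le_sumIcc le_rfl h2
  have : U i = U i ⊓ sumIcc U (i+1) (d:ℤ) := by rw [inf_eq_left.mpr hle]
  rw [this, ← sumIcc_self (U := U) i]
  exact disjoint_sumIcc hD (by omega)

omit hD in
lemma peel_top (heig : ∀ i, ∀ v ∈ U i, E v = mu i • v) (m n : ℤ) :
    ∀ v ∈ sumIcc U m n, E v - mu n • v ∈ sumIcc U m (n-1) := by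
  suffices h : sumIcc U m n ≤
      Submodule.comap (E - mu n • (1 : Module.End K V)) (sumIcc U m (n-1)) by
    intro v hv
    simpa using h hv
  refine sumIcc_le fun j hj1 hj2 v hv => ?_
  simp only [Submodule.mem_comap, LinearMap.sub_apply, LinearMap.smul_apply,
    Module.End.one_apply, heig j v hv, ← sub_smul]
  rcases eq_or_lt_of_le hj2 with heq | hlt
  · rw [heq]; simp
  · exact Submodule.smul_mem _ _ (le_sumIcc (U := U) (m := m) (n := n-1) hj1 (by omega) hv)

omit hD in
lemma peel_bot (heig : ∀ i, ∀ v ∈ U i, E v = mu i • v) (m n : ℤ) :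
    ∀ v ∈ sumIcc U m n, E v - mu m • v ∈ sumIcc U (m+1) n := by
  suffices h : sumIcc U m n ≤
      Submodule.comap (E - mu m • (1 : Module.End K V)) (sumIcc U (m+1) n) by
    intro v hv
    simpa using h hv
  refine sumIcc_le fun j hj1 hj2 v hv => ?_
  simp only [Submodule.mem_comap, LinearMap.sub_apply, LinearMap.smul_apply,
    Module.End.one_apply, heig j v hv, ← sub_smul]
  rcases eq_or_lt_of_le hj1 with heq | hlt
  · rw [← heq]; simp
  · exact Submodule.smul_mem _ _ (le_sumIcc (U := U) (m := m+1) (n := n) (by omega) hj2 hv)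

omit hD in
lemma diag_preserve (heig : ∀ i, ∀ v ∈ U i, E v = mu i • v) (m n : ℤ) :
    (sumIcc U m n).map E ≤ sumIcc U m n := by
  refine map_sumIcc_le fun j hj1 hj2 => ?_
  rintro x ⟨v, hv, rfl⟩
  rw [heig j v hv]
  exact Submodule.smul_mem _ _ (le_sumIcc hj1 hj2 hv)

lemma ext_of_decomposition {F G : Module.End K V}
    (h : ∀ i, 0 ≤ i → i ≤ (d:ℤ) → ∀ v ∈ U i, F v = G v) : F = G := by
  ext v
  have hv : v ∈ ⨆ i, U i := by rw [hD.sup_eq_top]; trivial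
  refine Submodule.iSup_induction (motive := fun x => F x = G x) U hv ?_ ?_ ?_
  · intro i x hx
    rcases lt_or_ge i 0 with hi | hi
    · rw [hD.bot_of_lt i hi] at hx
      simp only [Submodule.mem_bot] at hx
      simp [hx]
    rcases le_or_gt i (d:ℤ) with hi2 | hi2
    · exact h i hi hi2 x hx
    · rw [hD.bot_of_gt i hi2] at hx
      simp only [Submodule.mem_bot] at hx
      simp [hx]
  · simp
  · intro x y hx hy
    rw [map_add, map_add, hx, hy]

end Helpers

section Main

variable {q a a' b b' : K} {A A' B B' : Module.End K V} {d : ℕ}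
variable {Vs Vs' : ℤ → Submodule K V} {θ θ' : ℤ → K}

structure Ctx (q a a' b b' : K) (A A' B B' : Module.End K V) (d : ℕ)
    (Vs Vs' : ℤ → Submodule K V) (θ θ' : ℤ → K) : Prop where
  hq0 : q ≠ 0
  hq : ∀ n : ℕ, 0 < n → q ^ n ≠ 1
  hTD : IsTridiagonalPair A A' d Vs Vs' θ θ'
  ha : a ≠ 0
  ha' : a' ≠ 0
  hθ : ∀ i : ℤ, 0 ≤ i → i ≤ (d : ℤ) → θ i = a * q ^ (2 * i - (d : ℤ))
  hθ' : ∀ i : ℤ, 0 ≤ i → i ≤ (d : ℤ) → θ' i = a' * q ^ ((d : ℤ) - 2 * i)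
  hb : b ≠ 0
  hb' : b' ≠ 0
  hB : ∀ i : ℤ, 0 ≤ i → i ≤ (d : ℤ) → ∀ v ∈ dec0s0 d Vs Vs' i,
      B v = (b * q ^ (2 * i - (d : ℤ))) • v
  hB' : ∀ i : ℤ, 0 ≤ i → i ≤ (d : ℤ) → ∀ v ∈ decDsD d Vs Vs' i,
      B' v = (b' * q ^ ((d : ℤ) - 2 * i)) • v

variable (hc : Ctx q a a' b b' A A' B B' d Vs Vs' θ θ')

omit hD
include hc

/-- `q^m = q^n → m = n`. -/
lemma Ctx.qinj {m n : ℤ} (h : q ^ m = q ^ n) : m = n := by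
  by_contra hne
  rcases lt_or_gt_of_ne hne with hlt | hlt
  · have h1 : q ^ (n - m) = 1 := by
      rw [zpow_sub₀ hc.hq0, h, div_self (zpow_ne_zero _ hc.hq0)]
    have h2 : q ^ ((n - m).toNat) = 1 := by
      rw [← zpow_natCast, Int.toNat_of_nonneg (by omega)]
      exact h1
    exact hc.hq _ (by omega) h2
  · have h1 : q ^ (m - n) = 1 := by
      rw [zpow_sub₀ hc.hq0, h, div_self (zpow_ne_zero _ hc.hq0)]
    have h2 : q ^ ((m - n).toNat) = 1 := by
      rw [← zpow_natCast, Int.toNat_of_nonneg (by omega)]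
      exact h1
    exact hc.hq _ (by omega) h2

lemma Ctx.beta_inj : ∀ i j : ℤ, 0 ≤ i → i ≤ (d:ℤ) → 0 ≤ j → j ≤ (d:ℤ) →
    b * q ^ (2 * i - (d:ℤ)) = b * q ^ (2 * j - (d:ℤ)) → i = j := by
  intro i j _ _ _ _ h
  have := mul_left_cancel₀ hc.hb h
  have := hc.qinj this
  omega

lemma Ctx.beta'_inj : ∀ i j : ℤ, 0 ≤ i → i ≤ (d:ℤ) → 0 ≤ j → j ≤ (d:ℤ) →
    b' * q ^ ((d:ℤ) - 2 * i) = b' * q ^ ((d:ℤ) - 2 * j) → i = j := by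
  intro i j _ _ _ _ h
  have := mul_left_cancel₀ hc.hb' h
  have := hc.qinj this
  omega

/-- The split hypotheses for the decomposition `[0*0]`. -/
lemma Ctx.hyps1 : SplitHyps A' A (fun i => sumIcc Vs' 0 i)
    (fun i => sumIcc Vs 0 ((d:ℤ) - i)) θ' (fun i => θ ((d:ℤ) - i)) d := by
  have hV := hc.hTD.decompV
  have hV' := hc.hTD.decompV'
  refine ⟨fun W h1 h2 => hc.hTD.irred W h2 h1, ?_, ?_, ?_, ?_, ?_, ?_, ?_, ?_, ?_, ?_, ?_, ?_, ?_⟩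
  · exact fun i j hij => sumIcc_mono le_rfl hij
  · exact fun i j hij => sumIcc_mono le_rfl (by omega)
  · exact sumIcc_empty (by omega)
  · exact sumIcc_eq_top hV' le_rfl le_rfl
  · exact sumIcc_eq_top hV le_rfl (by omega)
  · exact sumIcc_empty (by omega)
  · have : (d:ℤ) - 1 = (d:ℤ) - 1 := rfl
    exact proper_low hV
  · rw [sumIcc_self]
    exact hV'.ne_bot 0 le_rfl (by omega)
  · exact fun i h1 h2 => strict_low hV' h1 h2
  · exact fun i => peel_top A' θ' hc.hTD.eig' 0 i
  · -- A (X i) ≤ X (i+1)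
    intro i
    refine map_sumIcc_le fun j hj1 hj2 => (hc.hTD.trid' j).trans ?_
    refine sup_le (sup_le ?_ ?_) ?_
    · exact piece_le hV' (by omega)
    · exact piece_le hV' (by omega)
    · exact piece_le hV' (by omega)
  · -- (A - θ (d - i)) (Y i) ≤ Y (i+1)
    intro i v hv
    have := peel_top A θ hc.hTD.eig 0 ((d:ℤ) - i) v hv
    have he : (d:ℤ) - i - 1 = (d:ℤ) - (i+1) := by omega
    rwa [he] at this
  · -- A' (Y i) ≤ Y (i-1)
    intro i
    refine map_sumIcc_le fun j hj1 hj2 => (hc.hTD.trid j).trans ?_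
    refine sup_le (sup_le ?_ ?_) ?_
    · exact piece_le hV (by omega)
    · exact piece_le hV (by omega)
    · exact piece_le hV (by omega)

/-- The split hypotheses for the decomposition `[D*D]`. -/
lemma Ctx.hyps2 : SplitHyps A' A (fun i => sumIcc Vs' ((d:ℤ) - i) (d:ℤ))
    (fun i => sumIcc Vs i (d:ℤ)) (fun i => θ' ((d:ℤ) - i)) θ d := by
  have hV := hc.hTD.decompV
  have hV' := hc.hTD.decompV'
  refine ⟨fun W h1 h2 => hc.hTD.irred W h2 h1, ?_, ?_, ?_, ?_, ?_, ?_, ?_, ?_, ?_, ?_, ?_, ?_, ?_⟩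
  · exact fun i j hij => sumIcc_mono (by omega) le_rfl
  · exact fun i j hij => sumIcc_mono hij le_rfl
  · exact sumIcc_empty (by omega)
  · exact sumIcc_eq_top hV' (by omega) le_rfl
  · exact sumIcc_eq_top hV le_rfl le_rfl
  · exact sumIcc_empty (by omega)
  · exact proper_high hV
  · have he : (d:ℤ) - 0 = (d:ℤ) := by omega
    rw [he, sumIcc_self]
    exact hV'.ne_bot (d:ℤ) (by omega) le_rfl
  · intro i h1 h2 heq
    have he : (d:ℤ) - (i-1) = ((d:ℤ) - i) + 1 := by omega
    rw [he] at heq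
    exact strict_high hV' (by omega) (by omega) heq
  · intro i v hv
    have := peel_bot A' θ' hc.hTD.eig' ((d:ℤ) - i) (d:ℤ) v hv
    have he : (d:ℤ) - i + 1 = (d:ℤ) - (i-1) := by omega
    rwa [he] at this
  · intro i
    refine map_sumIcc_le fun j hj1 hj2 => (hc.hTD.trid' j).trans ?_
    refine sup_le (sup_le ?_ ?_) ?_
    · exact piece_le hV' (by omega)
    · exact piece_le hV' (by omega)
    · exact piece_le hV' (by omega)
  · exact fun i => peel_bot A θ hc.hTD.eig i (d:ℤ)
  · intro i
    refine map_sumIcc_le fun j hj1 hj2 => (hc.hTD.trid j).trans ?_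
    refine sup_le (sup_le ?_ ?_) ?_
    · exact piece_le hV (by omega)
    · exact piece_le hV (by omega)
    · exact piece_le hV (by omega)

lemma Ctx.facts1 : SplitFacts A' A (fun i => sumIcc Vs' 0 i)
    (fun i => sumIcc Vs 0 ((d:ℤ) - i)) θ' (fun i => θ ((d:ℤ) - i)) d := hc.hyps1.facts

lemma Ctx.facts2 : SplitFacts A' A (fun i => sumIcc Vs' ((d:ℤ) - i) (d:ℤ))
    (fun i => sumIcc Vs i (d:ℤ)) (fun i => θ' ((d:ℤ) - i)) θ d := hc.hyps2.facts

lemma Ctx.decompU : IsDecomposition d (dec0s0 d Vs Vs') := hc.facts1.decomp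

lemma Ctx.decompU' : IsDecomposition d (decDsD d Vs Vs') := hc.facts2.decomp

end Main

section Comm

variable (E F : Module.End K V) (bf tf : ℤ → K) (e : ℤ) (x y c : K)

lemma comm_FE
    (hE : ∀ i : ℤ, 0 ≤ i → i ≤ (d:ℤ) → ∀ v ∈ U i, E v = bf i • v)
    (hF : ∀ i : ℤ, 0 ≤ i → i ≤ (d:ℤ) → ∀ v ∈ U i, F v - tf i • v ∈ U (i+e))
    (hc1 : ∀ i : ℤ, 0 ≤ i → i ≤ (d:ℤ) → (x - y) * (bf i * tf i) = c)
    (hc2 : ∀ i : ℤ, 0 ≤ i → i ≤ (d:ℤ) → 0 ≤ i+e → i+e ≤ (d:ℤ) →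
      x * bf i - y * bf (i+e) = 0) :
    x • (F * E) - y • (E * F) = c • (1 : Module.End K V) := by
  refine ext_of_decomposition hD fun i h1 h2 v hv => ?_
  obtain ⟨w, hwU, hFv⟩ : ∃ w, w ∈ U (i+e) ∧ F v = tf i • v + w :=
    ⟨F v - tf i • v, hF i h1 h2 v hv, by abel⟩
  have hEv : E v = bf i • v := hE i h1 h2 v hv
  have hEw : E w = bf (i+e) • w := by
    by_cases hin : 0 ≤ i + e ∧ i + e ≤ (d:ℤ)
    · exact hE _ hin.1 hin.2 w hwU
    · have hbot : U (i+e) = ⊥ := by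
        rcases (by omega : i+e < 0 ∨ (d:ℤ) < i+e) with h | h
        · exact hD.bot_of_lt _ h
        · exact hD.bot_of_gt _ h
      rw [hbot] at hwU
      simp only [Submodule.mem_bot] at hwU
      simp [hwU]
  have hco : x * bf i - y * bf (i+e) = 0 ∨ w = 0 := by
    by_cases hin : 0 ≤ i + e ∧ i + e ≤ (d:ℤ)
    · exact Or.inl (hc2 i h1 h2 hin.1 hin.2)
    · refine Or.inr ?_
      have hbot : U (i+e) = ⊥ := by
        rcases (by omega : i+e < 0 ∨ (d:ℤ) < i+e) with h | h
        · exact hD.bot_of_lt _ h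
        · exact hD.bot_of_gt _ h
      rw [hbot] at hwU
      simpa using hwU
  have hFEv : F (E v) = bf i • (tf i • v) + bf i • w := by
    rw [hEv, map_smul, hFv, smul_add]
  have hEFv : E (F v) = tf i • (bf i • v) + bf (i+e) • w := by
    rw [hFv, map_add, map_smul, hEv, hEw]
  simp only [LinearMap.sub_apply, LinearMap.smul_apply, Module.End.mul_apply, Module.End.one_apply]
  rw [hFEv, hEFv]
  rcases hco with hco | hw0
  · match_scalars
    · linear_combination hc1 i h1 h2
    · linear_combination hco
  · rw [hw0]
    simp only [smul_zero, add_zero]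
    match_scalars
    linear_combination hc1 i h1 h2

lemma comm_EF
    (hE : ∀ i : ℤ, 0 ≤ i → i ≤ (d:ℤ) → ∀ v ∈ U i, E v = bf i • v)
    (hF : ∀ i : ℤ, 0 ≤ i → i ≤ (d:ℤ) → ∀ v ∈ U i, F v - tf i • v ∈ U (i+e))
    (hc1 : ∀ i : ℤ, 0 ≤ i → i ≤ (d:ℤ) → (x - y) * (bf i * tf i) = c)
    (hc2 : ∀ i : ℤ, 0 ≤ i → i ≤ (d:ℤ) → 0 ≤ i+e → i+e ≤ (d:ℤ) →
      x * bf (i+e) - y * bf i = 0) :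
    x • (E * F) - y • (F * E) = c • (1 : Module.End K V) := by
  refine ext_of_decomposition hD fun i h1 h2 v hv => ?_
  obtain ⟨w, hwU, hFv⟩ : ∃ w, w ∈ U (i+e) ∧ F v = tf i • v + w :=
    ⟨F v - tf i • v, hF i h1 h2 v hv, by abel⟩
  have hEv : E v = bf i • v := hE i h1 h2 v hv
  have hEw : E w = bf (i+e) • w := by
    by_cases hin : 0 ≤ i + e ∧ i + e ≤ (d:ℤ)
    · exact hE _ hin.1 hin.2 w hwU
    · have hbot : U (i+e) = ⊥ := by
        rcases (by omega : i+e < 0 ∨ (d:ℤ) < i+e) with h | h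
        · exact hD.bot_of_lt _ h
        · exact hD.bot_of_gt _ h
      rw [hbot] at hwU
      simp only [Submodule.mem_bot] at hwU
      simp [hwU]
  have hco : x * bf (i+e) - y * bf i = 0 ∨ w = 0 := by
    by_cases hin : 0 ≤ i + e ∧ i + e ≤ (d:ℤ)
    · exact Or.inl (hc2 i h1 h2 hin.1 hin.2)
    · refine Or.inr ?_
      have hbot : U (i+e) = ⊥ := by
        rcases (by omega : i+e < 0 ∨ (d:ℤ) < i+e) with h | h
        · exact hD.bot_of_lt _ h
        · exact hD.bot_of_gt _ h
      rw [hbot] at hwU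
      simpa using hwU
  have hFEv : F (E v) = bf i • (tf i • v) + bf i • w := by
    rw [hEv, map_smul, hFv, smul_add]
  have hEFv : E (F v) = tf i • (bf i • v) + bf (i+e) • w := by
    rw [hFv, map_add, map_smul, hEv, hEw]
  simp only [LinearMap.sub_apply, LinearMap.smul_apply, Module.End.mul_apply, Module.End.one_apply]
  rw [hFEv, hEFv]
  rcases hco with hco | hw0
  · match_scalars
    · linear_combination hc1 i h1 h2
    · linear_combination hco
  · rw [hw0]
    simp only [smul_zero, add_zero]
    match_scalars
    linear_combination hc1 i h1 h2

end Comm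

section Relations

variable {q a a' b b' : K} {A A' B B' : Module.End K V} {d : ℕ}
variable {Vs Vs' : ℤ → Submodule K V} {θ θ' : ℤ → K}
variable (hc : Ctx q a a' b b' A A' B B' d Vs Vs' θ θ')

omit hD
include hc

lemma Ctx.qmul (m n : ℤ) : q ^ m * q ^ n = q ^ (m + n) := (zpow_add₀ hc.hq0 m n).symm

lemma Ctx.qq (m n : ℤ) (h : n = m + 2) :
    q * q ^ m - q⁻¹ * q ^ n = 0 := by
  have e1 := hc.qmul 1 m
  rw [zpow_one] at e1
  have e2 := hc.qmul (-1) n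
  rw [zpow_neg_one] at e2
  have e3 : (1:ℤ) + m = -1 + n := by omega
  rw [e3] at e1
  linear_combination e1 - e2

lemma Ctx.qab (m n : ℤ) (h : m + n = 0) : q ^ m * q ^ n = 1 := by
  rw [hc.qmul m n, h, zpow_zero]

/-- Relation R2 : `q A B - q⁻¹ B A = (q - q⁻¹) a b`. -/
lemma Ctx.R2 : q • (A * B) - q⁻¹ • (B * A)
    = ((q - q⁻¹) * (a * b)) • (1 : Module.End K V) := by
  refine comm_FE hc.decompU B A (fun i => b * q ^ (2*i - (d:ℤ)))
    (fun i => θ ((d:ℤ) - i)) 1 q q⁻¹ _ hc.hB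
    (fun i h1 h2 v hv => hc.facts1.raise i v hv) ?_ ?_
  · intro i h1 h2
    rw [hc.hθ ((d:ℤ) - i) (by omega) (by omega)]
    have hz := hc.qab (2*i - (d:ℤ)) (2*((d:ℤ)-i) - (d:ℤ)) (by ring)
    linear_combination (q - q⁻¹) * a * b * hz
  · intro i h1 h2 h3 h4
    linear_combination b * hc.qq (2*i - (d:ℤ)) (2*(i+1) - (d:ℤ)) (by ring)

/-- Relation R1 : `q B A' - q⁻¹ A' B = (q - q⁻¹) a' b`. -/
lemma Ctx.R1 : q • (B * A') - q⁻¹ • (A' * B)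
    = ((q - q⁻¹) * (a' * b)) • (1 : Module.End K V) := by
  refine comm_EF hc.decompU B A' (fun i => b * q ^ (2*i - (d:ℤ))) θ' (-1) q q⁻¹ _ hc.hB
    (fun i h1 h2 v hv => by
      have := hc.facts1.lower i v hv
      rwa [show i - 1 = i + (-1) by ring] at this) ?_ ?_
  · intro i h1 h2
    rw [hc.hθ' i h1 h2]
    have hz := hc.qab (2*i - (d:ℤ)) ((d:ℤ) - 2*i) (by ring)
    linear_combination (q - q⁻¹) * a' * b * hz
  · intro i h1 h2 h3 h4
    linear_combination b * hc.qq (2*(i + (-1)) - (d:ℤ)) (2*i - (d:ℤ)) (by ring)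

/-- Relation R3 : `q A' B' - q⁻¹ B' A' = (q - q⁻¹) a' b'`. -/
lemma Ctx.R3 : q • (A' * B') - q⁻¹ • (B' * A')
    = ((q - q⁻¹) * (a' * b')) • (1 : Module.End K V) := by
  refine comm_FE hc.decompU' B' A' (fun i => b' * q ^ ((d:ℤ) - 2*i))
    (fun i => θ' ((d:ℤ) - i)) (-1) q q⁻¹ _ hc.hB'
    (fun i h1 h2 v hv => by
      have := hc.facts2.lower i v hv
      rwa [show i - 1 = i + (-1) by ring] at this) ?_ ?_
  · intro i h1 h2
    rw [hc.hθ' ((d:ℤ) - i) (by omega) (by omega)]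
    have hz := hc.qab ((d:ℤ) - 2*i) ((d:ℤ) - 2*((d:ℤ)-i)) (by ring)
    linear_combination (q - q⁻¹) * a' * b' * hz
  · intro i h1 h2 h3 h4
    linear_combination b' * hc.qq ((d:ℤ) - 2*i) ((d:ℤ) - 2*(i + (-1))) (by ring)

/-- Relation R4 : `q B' A - q⁻¹ A B' = (q - q⁻¹) a b'`. -/
lemma Ctx.R4 : q • (B' * A) - q⁻¹ • (A * B')
    = ((q - q⁻¹) * (a * b')) • (1 : Module.End K V) := by
  refine comm_EF hc.decompU' B' A (fun i => b' * q ^ ((d:ℤ) - 2*i)) θ 1 q q⁻¹ _ hc.hB'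
    (fun i h1 h2 v hv => hc.facts2.raise i v hv) ?_ ?_
  · intro i h1 h2
    rw [hc.hθ i h1 h2]
    have hz := hc.qab ((d:ℤ) - 2*i) (2*i - (d:ℤ)) (by ring)
    linear_combination (q - q⁻¹) * a * b' * hz
  · intro i h1 h2 h3 h4
    linear_combination b' * hc.qq ((d:ℤ) - 2*(i+1)) ((d:ℤ) - 2*i) (by ring)

end Relations

section GLemmas

variable {q a a' b b' : K} {A A' B B' : Module.End K V} {d : ℕ}
variable {Vs Vs' : ℤ → Submodule K V} {θ θ' : ℤ → K}
variable (hc : Ctx q a a' b b' A A' B B' d Vs Vs' θ θ')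

omit hD
include hc

lemma Ctx.q_up (m : ℤ) : q * (q * q^m) = q^(m+2) := by
  have e1 := hc.qmul 1 m
  rw [zpow_one] at e1
  have e2 := hc.qmul 1 (1+m)
  rw [zpow_one] at e2
  rw [e1, e2]
  congr 1
  ring

lemma Ctx.q_down (m : ℤ) : q⁻¹ * (q⁻¹ * q^m) = q^(m-2) := by
  have e1 := hc.qmul (-1) m
  rw [zpow_neg_one] at e1
  have e2 := hc.qmul (-1) (-1+m)
  rw [zpow_neg_one] at e2
  rw [e1, e2]
  congr 1
  ring

lemma Ctx.theta_succ {j : ℤ} (h1 : 0 ≤ j) (h2 : j+1 ≤ (d:ℤ)) :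
    θ (j+1) = q * (q * θ j) := by
  rw [hc.hθ (j+1) (by omega) (by omega), hc.hθ j (by omega) (by omega)]
  have e : 2*(j+1)-(d:ℤ) = (2*j-(d:ℤ))+2 := by ring
  rw [e, ← hc.q_up]
  ring

lemma Ctx.theta'_succ {j : ℤ} (h1 : 0 ≤ j) (h2 : j+1 ≤ (d:ℤ)) :
    θ' (j+1) = q⁻¹ * (q⁻¹ * θ' j) := by
  rw [hc.hθ' (j+1) (by omega) (by omega), hc.hθ' j (by omega) (by omega)]
  have e : (d:ℤ)-2*(j+1) = ((d:ℤ)-2*j)-2 := by ring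
  rw [e, ← hc.q_down]
  ring

lemma Ctx.theta_pred {j : ℤ} (h1 : 1 ≤ j) (h2 : j ≤ (d:ℤ)) :
    θ (j-1) = q⁻¹ * (q⁻¹ * θ j) := by
  rw [hc.hθ (j-1) (by omega) (by omega), hc.hθ j (by omega) (by omega)]
  have e : 2*(j-1)-(d:ℤ) = (2*j-(d:ℤ))-2 := by ring
  rw [e, ← hc.q_down]
  ring

lemma Ctx.theta'_pred {j : ℤ} (h1 : 1 ≤ j) (h2 : j ≤ (d:ℤ)) :
    θ' (j-1) = q * (q * θ' j) := by
  rw [hc.hθ' (j-1) (by omega) (by omega), hc.hθ' j (by omega) (by omega)]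
  have e : (d:ℤ)-2*(j-1) = ((d:ℤ)-2*j)+2 := by ring
  rw [e, ← hc.q_up]
  ring

lemma Ctx.R1point (v : V) : q • (B (A' v)) - q⁻¹ • (A' (B v))
    = ((q - q⁻¹) * (a' * b)) • v := by
  have h := LinearMap.congr_fun hc.R1 v
  simpa only [LinearMap.sub_apply, LinearMap.smul_apply, Module.End.mul_apply,
    Module.End.one_apply] using h

lemma Ctx.R2point (v : V) : q • (A (B v)) - q⁻¹ • (B (A v))
    = ((q - q⁻¹) * (a * b)) • v := by
  have h := LinearMap.congr_fun hc.R2 v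
  simpa only [LinearMap.sub_apply, LinearMap.smul_apply, Module.End.mul_apply,
    Module.End.one_apply] using h

lemma Ctx.R3point (v : V) : q • (A' (B' v)) - q⁻¹ • (B' (A' v))
    = ((q - q⁻¹) * (a' * b')) • v := by
  have h := LinearMap.congr_fun hc.R3 v
  simpa only [LinearMap.sub_apply, LinearMap.smul_apply, Module.End.mul_apply,
    Module.End.one_apply] using h

lemma Ctx.R4point (v : V) : q • (B' (A v)) - q⁻¹ • (A (B' v))
    = ((q - q⁻¹) * (a * b')) • v := by
  have h := LinearMap.congr_fun hc.R4 v
  simpa only [LinearMap.sub_apply, LinearMap.smul_apply, Module.End.mul_apply,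
    Module.End.one_apply] using h

/-- Core induction for `B' W_i ⊆ W_{i+1}`. -/
lemma Ctx.G3core : ∀ k : ℕ, ∀ i : ℤ, i = (k:ℤ) - 1 → i ≤ (d:ℤ) - 1 →
    ∀ v ∈ sumIcc Vs' 0 i, annProd A' θ' (Finset.Icc 0 (i+1)) (B' v) = 0 := by
  intro k
  induction k with
  | zero =>
    intro i hi _ v hv
    rw [show i = -1 by omega, sumIcc_empty (by omega)] at hv
    simp only [Submodule.mem_bot] at hv
    simp [hv]
  | succ k IH =>
    intro i hi hile v hv
    have hj1 : 0 ≤ i := by omega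
    have hj2 : i + 1 ≤ (d:ℤ) := by omega
    set u := A' v - θ' i • v with hu
    have huW : u ∈ sumIcc Vs' 0 (i-1) := peel_top A' θ' hc.hTD.eig' 0 i v hv
    have hAv : A' v = θ' i • v + u := by rw [hu]; abel
    have hrel := hc.R3point v
    rw [hAv, map_add, map_smul] at hrel
    -- solve for A' (B' v)
    have hsolve : A' (B' v) = (q⁻¹ * (q⁻¹ * θ' i)) • B' v + (q⁻¹ * q⁻¹) • B' u
        + (q⁻¹ * ((q - q⁻¹) * (a' * b'))) • v := by
      have h5 : A' (B' v) = q⁻¹ • (q • A' (B' v)) := by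
        rw [smul_smul, inv_mul_cancel₀ hc.hq0, one_smul]
      have h4 : q • A' (B' v) = q⁻¹ • (θ' i • B' v) + q⁻¹ • B' u
          + ((q - q⁻¹) * (a' * b')) • v := by
        have := hrel
        rw [smul_add] at this
        linear_combination (norm := module) this
      rw [h4] at h5
      rw [h5]
      simp only [smul_add, smul_smul]
    have hkey : A' (B' v) - θ' (i+1) • B' v = (q⁻¹ * q⁻¹) • B' u
        + (q⁻¹ * ((q - q⁻¹) * (a' * b'))) • v := by
      rw [hsolve, hc.theta'_succ hj1 hj2]
      abel
    have hins : Finset.Icc (0:ℤ) (i+1) = insert (i+1) (Finset.Icc 0 i) := by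
      ext x; simp only [Finset.mem_Icc, Finset.mem_insert]; omega
    rw [hins, annProd_insert' A' θ' (by simp) (B' v), hkey, map_add, map_smul, map_smul]
    have hIH : annProd A' θ' (Finset.Icc 0 i) (B' u) = 0 := by
      have := IH (i-1) (by omega) (by omega) u huW
      rwa [show i - 1 + 1 = i by ring] at this
    have hv0 : annProd A' θ' (Finset.Icc 0 i) v = 0 :=
      annProd_ann_sumIcc A' θ' hc.hTD.eig' hv
    rw [hIH, hv0]
    simp

lemma Ctx.G3 : ∀ i : ℤ, (sumIcc Vs' 0 i).map B' ≤ sumIcc Vs' 0 (i+1) := by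
  intro i
  rcases lt_or_ge i 0 with hi | hi
  · rw [sumIcc_empty (by omega)]
    simp
  rcases le_or_gt (d:ℤ) i with hi2 | hi2
  · rw [show sumIcc Vs' 0 (i+1) = ⊤ from sumIcc_eq_top hc.hTD.decompV' le_rfl (by omega)]
    exact le_top
  rintro x ⟨v, hv, rfl⟩
  have h0 := hc.G3core (i+1).toNat i (by omega) (by omega) v hv
  have hmem := mem_biSup_of_annProd_eq_zero hc.hTD.decompV' A' θ'
    hc.hTD.eig' (s := Finset.Icc 0 (i+1)) (by intro x hx; simp only [Finset.mem_Icc] at *; omega)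
    (fun m hm1 hm2 hms l hl he => by
      simp only [Finset.mem_Icc] at hms hl
      have := hc.hTD.theta'_inj m l hm1 hm2 (by omega) (by omega) he
      omega) h0
  rwa [← sumIcc_coe] at hmem

end GLemmas

section GLemmas2

variable {q a a' b b' : K} {A A' B B' : Module.End K V} {d : ℕ}
variable {Vs Vs' : ℤ → Submodule K V} {θ θ' : ℤ → K}
variable (hc : Ctx q a a' b b' A A' B B' d Vs Vs' θ θ')

omit hD
include hc

lemma Ctx.G4core : ∀ k : ℕ, ∀ i : ℤ, i = (k:ℤ) - 1 → i ≤ (d:ℤ) - 1 →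
    ∀ v ∈ sumIcc Vs 0 i, annProd A θ (Finset.Icc 0 (i+1)) (B' v) = 0 := by
  intro k
  induction k with
  | zero =>
    intro i hi _ v hv
    rw [show i = -1 by omega, sumIcc_empty (by omega)] at hv
    simp only [Submodule.mem_bot] at hv
    simp [hv]
  | succ k IH =>
    intro i hi hile v hv
    have hj1 : 0 ≤ i := by omega
    have hj2 : i + 1 ≤ (d:ℤ) := by omega
    set u := A v - θ i • v with hu
    have huW : u ∈ sumIcc Vs 0 (i-1) := peel_top A θ hc.hTD.eig 0 i v hv
    have hAv : A v = θ i • v + u := by rw [hu]; abel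
    have hrel := hc.R4point v
    rw [hAv, map_add, map_smul] at hrel
    have hsolve : A (B' v) = (q * (q * θ i)) • B' v + (q * q) • B' u
        - (q * ((q - q⁻¹) * (a * b'))) • v := by
      have h5 : A (B' v) = q • (q⁻¹ • A (B' v)) := by
        rw [smul_smul, mul_inv_cancel₀ hc.hq0, one_smul]
      have h4 : q⁻¹ • A (B' v) = q • (θ i • B' v) + q • B' u
          - ((q - q⁻¹) * (a * b')) • v := by
        have := hrel
        rw [smul_add] at this
        linear_combination (norm := module) (-1 : K) • this
      rw [h4] at h5
      rw [h5]
      simp only [smul_add, smul_sub, smul_smul]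
    have hkey : A (B' v) - θ (i+1) • B' v = (q * q) • B' u
        - (q * ((q - q⁻¹) * (a * b'))) • v := by
      rw [hsolve, hc.theta_succ hj1 hj2]
      abel
    have hins : Finset.Icc (0:ℤ) (i+1) = insert (i+1) (Finset.Icc 0 i) := by
      ext x; simp only [Finset.mem_Icc, Finset.mem_insert]; omega
    rw [hins, annProd_insert' A θ (by simp) (B' v), hkey, map_sub, map_smul, map_smul]
    have hIH : annProd A θ (Finset.Icc 0 i) (B' u) = 0 := by
      have := IH (i-1) (by omega) (by omega) u huW
      rwa [show i - 1 + 1 = i by ring] at this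
    have hv0 : annProd A θ (Finset.Icc 0 i) v = 0 :=
      annProd_ann_sumIcc A θ hc.hTD.eig hv
    rw [hIH, hv0]
    simp

lemma Ctx.G4 : ∀ i : ℤ, (sumIcc Vs 0 i).map B' ≤ sumIcc Vs 0 (i+1) := by
  intro i
  rcases lt_or_ge i 0 with hi | hi
  · rw [sumIcc_empty (by omega)]
    simp
  rcases le_or_gt (d:ℤ) i with hi2 | hi2
  · rw [show sumIcc Vs 0 (i+1) = ⊤ from sumIcc_eq_top hc.hTD.decompV le_rfl (by omega)]
    exact le_top
  rintro x ⟨v, hv, rfl⟩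
  have h0 := hc.G4core (i+1).toNat i (by omega) (by omega) v hv
  have hmem := mem_biSup_of_annProd_eq_zero hc.hTD.decompV A θ
    hc.hTD.eig (s := Finset.Icc 0 (i+1)) (by intro x hx; simp only [Finset.mem_Icc] at *; omega)
    (fun m hm1 hm2 hms l hl he => by
      simp only [Finset.mem_Icc] at hms hl
      have := hc.hTD.theta_inj m l hm1 hm2 (by omega) (by omega) he
      omega) h0
  rwa [← sumIcc_coe] at hmem

lemma Ctx.G1core : ∀ k : ℕ, ∀ i : ℤ, i = (d:ℤ) + 1 - (k:ℤ) → 1 ≤ i →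
    ∀ v ∈ sumIcc Vs i (d:ℤ), annProd A θ (Finset.Icc (i-1) (d:ℤ)) (B v) = 0 := by
  intro k
  induction k with
  | zero =>
    intro i hi _ v hv
    rw [show i = (d:ℤ)+1 by omega, sumIcc_empty (by omega)] at hv
    simp only [Submodule.mem_bot] at hv
    simp [hv]
  | succ k IH =>
    intro i hi hige v hv
    have hj2 : i ≤ (d:ℤ) := by omega
    set u := A v - θ i • v with hu
    have huW : u ∈ sumIcc Vs (i+1) (d:ℤ) := peel_bot A θ hc.hTD.eig i (d:ℤ) v hv
    have hAv : A v = θ i • v + u := by rw [hu]; abel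
    have hrel := hc.R2point v
    rw [hAv, map_add, map_smul] at hrel
    have hsolve : A (B v) = (q⁻¹ * (q⁻¹ * θ i)) • B v + (q⁻¹ * q⁻¹) • B u
        + (q⁻¹ * ((q - q⁻¹) * (a * b))) • v := by
      have h5 : A (B v) = q⁻¹ • (q • A (B v)) := by
        rw [smul_smul, inv_mul_cancel₀ hc.hq0, one_smul]
      have h4 : q • A (B v) = q⁻¹ • (θ i • B v) + q⁻¹ • B u
          + ((q - q⁻¹) * (a * b)) • v := by
        have := hrel
        rw [smul_add] at this
        linear_combination (norm := module) this
      rw [h4] at h5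
      rw [h5]
      simp only [smul_add, smul_smul]
    have hkey : A (B v) - θ (i-1) • B v = (q⁻¹ * q⁻¹) • B u
        + (q⁻¹ * ((q - q⁻¹) * (a * b))) • v := by
      rw [hsolve, hc.theta_pred hige hj2]
      abel
    have hins : Finset.Icc (i-1) (d:ℤ) = insert (i-1) (Finset.Icc i (d:ℤ)) := by
      ext x; simp only [Finset.mem_Icc, Finset.mem_insert]; omega
    rw [hins, annProd_insert' A θ (by simp) (B v), hkey, map_add, map_smul, map_smul]
    have hIH : annProd A θ (Finset.Icc i (d:ℤ)) (B u) = 0 := by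
      have := IH (i+1) (by omega) (by omega) u huW
      rwa [show i + 1 - 1 = i by ring] at this
    have hv0 : annProd A θ (Finset.Icc i (d:ℤ)) v = 0 :=
      annProd_ann_sumIcc A θ hc.hTD.eig hv
    rw [hIH, hv0]
    simp

lemma Ctx.G1 : ∀ i : ℤ, (sumIcc Vs i (d:ℤ)).map B ≤ sumIcc Vs (i-1) (d:ℤ) := by
  intro i
  rcases lt_or_ge (d:ℤ) i with hi | hi
  · rw [sumIcc_empty (by omega)]
    simp
  rcases le_or_gt i 0 with hi2 | hi2
  · rw [show sumIcc Vs (i-1) (d:ℤ) = ⊤ from sumIcc_eq_top hc.hTD.decompV (by omega) le_rfl]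
    exact le_top
  rintro x ⟨v, hv, rfl⟩
  have h0 := hc.G1core ((d:ℤ)+1-i).toNat i (by omega) (by omega) v hv
  have hmem := mem_biSup_of_annProd_eq_zero hc.hTD.decompV A θ
    hc.hTD.eig (s := Finset.Icc (i-1) (d:ℤ))
    (by intro x hx; simp only [Finset.mem_Icc] at *; omega)
    (fun m hm1 hm2 hms l hl he => by
      simp only [Finset.mem_Icc] at hms hl
      have := hc.hTD.theta_inj m l hm1 hm2 (by omega) (by omega) he
      omega) h0
  rwa [← sumIcc_coe] at hmem

lemma Ctx.G2core : ∀ k : ℕ, ∀ i : ℤ, i = (d:ℤ) + 1 - (k:ℤ) → 1 ≤ i →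
    ∀ v ∈ sumIcc Vs' i (d:ℤ), annProd A' θ' (Finset.Icc (i-1) (d:ℤ)) (B v) = 0 := by
  intro k
  induction k with
  | zero =>
    intro i hi _ v hv
    rw [show i = (d:ℤ)+1 by omega, sumIcc_empty (by omega)] at hv
    simp only [Submodule.mem_bot] at hv
    simp [hv]
  | succ k IH =>
    intro i hi hige v hv
    have hj2 : i ≤ (d:ℤ) := by omega
    set u := A' v - θ' i • v with hu
    have huW : u ∈ sumIcc Vs' (i+1) (d:ℤ) := peel_bot A' θ' hc.hTD.eig' i (d:ℤ) v hv
    have hAv : A' v = θ' i • v + u := by rw [hu]; abel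
    have hrel := hc.R1point v
    rw [hAv, map_add, map_smul] at hrel
    have hsolve : A' (B v) = (q * (q * θ' i)) • B v + (q * q) • B u
        - (q * ((q - q⁻¹) * (a' * b))) • v := by
      have h5 : A' (B v) = q • (q⁻¹ • A' (B v)) := by
        rw [smul_smul, mul_inv_cancel₀ hc.hq0, one_smul]
      have h4 : q⁻¹ • A' (B v) = q • (θ' i • B v) + q • B u
          - ((q - q⁻¹) * (a' * b)) • v := by
        have := hrel
        rw [smul_add] at this
        linear_combination (norm := module) (-1 : K) • this
      rw [h4] at h5
      rw [h5]
      simp only [smul_add, smul_sub, smul_smul]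
    have hkey : A' (B v) - θ' (i-1) • B v = (q * q) • B u
        - (q * ((q - q⁻¹) * (a' * b))) • v := by
      rw [hsolve, hc.theta'_pred hige hj2]
      abel
    have hins : Finset.Icc (i-1) (d:ℤ) = insert (i-1) (Finset.Icc i (d:ℤ)) := by
      ext x; simp only [Finset.mem_Icc, Finset.mem_insert]; omega
    rw [hins, annProd_insert' A' θ' (by simp) (B v), hkey, map_sub, map_smul, map_smul]
    have hIH : annProd A' θ' (Finset.Icc i (d:ℤ)) (B u) = 0 := by
      have := IH (i+1) (by omega) (by omega) u huW
      rwa [show i + 1 - 1 = i by ring] at this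
    have hv0 : annProd A' θ' (Finset.Icc i (d:ℤ)) v = 0 :=
      annProd_ann_sumIcc A' θ' hc.hTD.eig' hv
    rw [hIH, hv0]
    simp

lemma Ctx.G2 : ∀ i : ℤ, (sumIcc Vs' i (d:ℤ)).map B ≤ sumIcc Vs' (i-1) (d:ℤ) := by
  intro i
  rcases lt_or_ge (d:ℤ) i with hi | hi
  · rw [sumIcc_empty (by omega)]
    simp
  rcases le_or_gt i 0 with hi2 | hi2
  · rw [show sumIcc Vs' (i-1) (d:ℤ) = ⊤ from sumIcc_eq_top hc.hTD.decompV' (by omega) le_rfl]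
    exact le_top
  rintro x ⟨v, hv, rfl⟩
  have h0 := hc.G2core ((d:ℤ)+1-i).toNat i (by omega) (by omega) v hv
  have hmem := mem_biSup_of_annProd_eq_zero hc.hTD.decompV' A' θ'
    hc.hTD.eig' (s := Finset.Icc (i-1) (d:ℤ))
    (by intro x hx; simp only [Finset.mem_Icc] at *; omega)
    (fun m hm1 hm2 hms l hl he => by
      simp only [Finset.mem_Icc] at hms hl
      have := hc.hTD.theta'_inj m l hm1 hm2 (by omega) (by omega) he
      omega) h0
  rwa [← sumIcc_coe] at hmem

end GLemmas2

section InvariantCounting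

variable [FiniteDimensional K V]
variable (E : Module.End K V) (mu : ℤ → K)

lemma inter_biSup_of_invariant (heig : ∀ i, ∀ v ∈ U i, E v = mu i • v)
    (hinj : ∀ i j, 0 ≤ i → i ≤ (d:ℤ) → 0 ≤ j → j ≤ (d:ℤ) → mu i = mu j → i = j)
    {W : Submodule K V} (hW : ∀ w ∈ W, E w ∈ W) {s : Finset ℤ}
    (hs : s ⊆ Finset.Icc (0:ℤ) (d:ℤ)) :
    W ⊓ (⨆ j ∈ (s : Set ℤ), U j) = ⨆ j ∈ (s : Set ℤ), (W ⊓ U j) := by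
  refine le_antisymm ?_ ?_
  · rintro x ⟨hxW, hxU⟩
    obtain ⟨f, hf1, hf2, hf3⟩ := repr_subset hD s x hxU
    have hfW : ∀ j, f j ∈ W :=
      component_mem_invariant hD E mu heig hinj hW hs hf1 hf2 (hf3 ▸ hxW)
    rw [hf3]
    refine Submodule.sum_mem _ fun j hj => ?_
    exact le_biSup (f := fun j => W ⊓ U j) (i := j) (by exact_mod_cast hj) ⟨hfW j, hf1 j⟩
  · refine iSup₂_le fun j hj => le_inf inf_le_left ?_
    exact inf_le_right.trans (le_biSup (f := U) (i := j) hj)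

lemma finrank_biSup_inter {W : Submodule K V} {s : Finset ℤ} :
    Module.finrank K (↥(⨆ j ∈ (s : Set ℤ), (W ⊓ U j)))
      = ∑ j ∈ s, Module.finrank K ↥(W ⊓ U j) := by
  classical
  induction s using Finset.induction_on with
  | empty => simp
  | insert c s ha ih =>
    rw [Finset.coe_insert, iSup_insert, Finset.sum_insert ha, ← ih]
    have hdisj : (W ⊓ U c) ⊓ (⨆ j ∈ (s : Set ℤ), (W ⊓ U j)) = ⊥ := by
      have h1 : (⨆ j ∈ (s : Set ℤ), (W ⊓ U j)) ≤ ⨆ j ∈ (s : Set ℤ), U j :=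
        iSup₂_mono fun j _ => inf_le_right
      have h2 := hD.indep.disjoint_biSup (x := c) (y := (s : Set ℤ)) (by simpa using ha)
      refine le_bot_iff.mp ?_
      refine le_trans (inf_le_inf (inf_le_right) h1) ?_
      exact h2.le_bot
    have := Submodule.finrank_sup_add_finrank_inf_eq (W ⊓ U c) (⨆ j ∈ (s : Set ℤ), (W ⊓ U j))
    rw [hdisj] at this
    simp only [finrank_bot, add_zero] at this
    exact this

end InvariantCounting

section Irred

variable [FiniteDimensional K V]
variable {q a a' b b' : K} {A A' B B' : Module.End K V} {d : ℕ}
variable {Vs Vs' : ℤ → Submodule K V} {θ θ' : ℤ → K}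
variable (hc : Ctx q a a' b b' A A' B B' d Vs Vs' θ θ')

omit hD
include hc

lemma Ctx.heigB : ∀ i : ℤ, ∀ v ∈ dec0s0 d Vs Vs' i,
    B v = (b * q ^ (2*i - (d:ℤ))) • v := by
  intro i v hv
  rcases lt_or_ge i 0 with h | h
  · rw [hc.decompU.bot_of_lt i h] at hv
    simp only [Submodule.mem_bot] at hv
    simp [hv]
  rcases le_or_gt i (d:ℤ) with h2 | h2
  · exact hc.hB i h h2 v hv
  · rw [hc.decompU.bot_of_gt i h2] at hv
    simp only [Submodule.mem_bot] at hv
    simp [hv]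

lemma Ctx.heigB' : ∀ i : ℤ, ∀ v ∈ decDsD d Vs Vs' i,
    B' v = (b' * q ^ ((d:ℤ) - 2*i)) • v := by
  intro i v hv
  rcases lt_or_ge i 0 with h | h
  · rw [hc.decompU'.bot_of_lt i h] at hv
    simp only [Submodule.mem_bot] at hv
    simp [hv]
  rcases le_or_gt i (d:ℤ) with h2 | h2
  · exact hc.hB' i h h2 v hv
  · rw [hc.decompU'.bot_of_gt i h2] at hv
    simp only [Submodule.mem_bot] at hv
    simp [hv]

lemma Ctx.low1 {t : ℤ} (h1 : -1 ≤ t) (h2 : t ≤ (d:ℤ)) :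
    sumIcc (dec0s0 d Vs Vs') 0 t = sumIcc Vs' 0 t := by
  exact hc.facts1.low t h1 h2

lemma Ctx.high1 {t : ℤ} (h1 : 0 ≤ t) (h2 : t ≤ (d:ℤ)+1) :
    sumIcc (dec0s0 d Vs Vs') t (d:ℤ) = sumIcc Vs 0 ((d:ℤ)-t) := by
  exact hc.facts1.high t h1 h2

lemma Ctx.low2 {t : ℤ} (h1 : -1 ≤ t) (h2 : t ≤ (d:ℤ)) :
    sumIcc (decDsD d Vs Vs') 0 t = sumIcc Vs' ((d:ℤ)-t) (d:ℤ) := by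
  exact hc.facts2.low t h1 h2

lemma Ctx.high2 {t : ℤ} (h1 : 0 ≤ t) (h2 : t ≤ (d:ℤ)+1) :
    sumIcc (decDsD d Vs Vs') t (d:ℤ) = sumIcc Vs t (d:ℤ) := by
  exact hc.facts2.high t h1 h2

lemma Ctx.irredBB' :
    ∀ W : Submodule K V, W.map B ≤ W → W.map B' ≤ W → W = ⊥ ∨ W = ⊤ := by
  intro W hWB hWB'
  have hWBe : ∀ w ∈ W, B w ∈ W := fun w hw => hWB ⟨w, hw, rfl⟩
  have hWB'e : ∀ w ∈ W, B' w ∈ W := fun w hw => hWB' ⟨w, hw, rfl⟩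
  set Us := dec0s0 d Vs Vs' with hUs
  set Us' := decDsD d Vs Vs' with hUs'
  -- counting identities
  have hcount : ∀ s : Finset ℤ, s ⊆ Finset.Icc (0:ℤ) (d:ℤ) →
      Module.finrank K ↥(W ⊓ ⨆ j ∈ (s : Set ℤ), Us j)
        = ∑ j ∈ s, Module.finrank K ↥(W ⊓ Us j) := by
    intro s hs
    rw [inter_biSup_of_invariant hc.decompU B (fun i => b * q ^ (2*i - (d:ℤ)))
      hc.heigB hc.beta_inj hWBe hs, finrank_biSup_inter hc.decompU]
  have hcount' : ∀ s : Finset ℤ, s ⊆ Finset.Icc (0:ℤ) (d:ℤ) →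
      Module.finrank K ↥(W ⊓ ⨆ j ∈ (s : Set ℤ), Us' j)
        = ∑ j ∈ s, Module.finrank K ↥(W ⊓ Us' j) := by
    intro s hs
    rw [inter_biSup_of_invariant hc.decompU' B' (fun i => b' * q ^ ((d:ℤ) - 2*i))
      hc.heigB' hc.beta'_inj hWB'e hs, finrank_biSup_inter hc.decompU']
  have hcountIcc : ∀ m n : ℤ, 0 ≤ m → n ≤ (d:ℤ) →
      Module.finrank K ↥(W ⊓ sumIcc Us m n)
        = ∑ j ∈ Finset.Icc m n, Module.finrank K ↥(W ⊓ Us j) := by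
    intro m n h1 h2
    rw [sumIcc_coe]
    exact hcount _ (by intro x hx; simp only [Finset.mem_Icc] at *; omega)
  have hcountIcc' : ∀ m n : ℤ, 0 ≤ m → n ≤ (d:ℤ) →
      Module.finrank K ↥(W ⊓ sumIcc Us' m n)
        = ∑ j ∈ Finset.Icc m n, Module.finrank K ↥(W ⊓ Us' j) := by
    intro m n h1 h2
    rw [sumIcc_coe]
    exact hcount' _ (by intro x hx; simp only [Finset.mem_Icc] at *; omega)
  set n := Module.finrank K ↥W with hn
  have htot : ∑ j ∈ Finset.Icc (0:ℤ) (d:ℤ), Module.finrank K ↥(W ⊓ Us j) = n := by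
    rw [← hcountIcc 0 (d:ℤ) le_rfl le_rfl,
      show sumIcc Us 0 (d:ℤ) = ⊤ from sumIcc_eq_top hc.decompU le_rfl le_rfl, inf_top_eq]
  have htot' : ∑ j ∈ Finset.Icc (0:ℤ) (d:ℤ), Module.finrank K ↥(W ⊓ Us' j) = n := by
    rw [← hcountIcc' 0 (d:ℤ) le_rfl le_rfl,
      show sumIcc Us' 0 (d:ℤ) = ⊤ from sumIcc_eq_top hc.decompU' le_rfl le_rfl, inf_top_eq]
  -- the two flag splittings
  have main : ∀ t : ℤ, 0 ≤ t → t ≤ (d:ℤ) - 1 →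
      (W ⊓ sumIcc Vs' 0 t) ⊔ (W ⊓ sumIcc Vs' (t+1) (d:ℤ)) = W ∧
      (W ⊓ sumIcc Vs 0 ((d:ℤ)-t-1)) ⊔ (W ⊓ sumIcc Vs ((d:ℤ)-t) (d:ℤ)) = W := by
    intro t ht1 ht2
    have hA1 : Module.finrank K ↥(W ⊓ sumIcc Vs' 0 t)
        = ∑ j ∈ Finset.Icc (0:ℤ) t, Module.finrank K ↥(W ⊓ Us j) := by
      rw [← hc.low1 (by omega) (by omega)]
      exact hcountIcc 0 t (by omega) (by omega)
    have hA2 : Module.finrank K ↥(W ⊓ sumIcc Vs' (t+1) (d:ℤ))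
        = ∑ j ∈ Finset.Icc (0:ℤ) ((d:ℤ)-t-1), Module.finrank K ↥(W ⊓ Us' j) := by
      rw [show sumIcc Vs' (t+1) (d:ℤ) = sumIcc Vs' ((d:ℤ)-((d:ℤ)-t-1)) (d:ℤ) by
        congr 1; omega, ← hc.low2 (by omega) (by omega)]
      exact hcountIcc' 0 ((d:ℤ)-t-1) (by omega) (by omega)
    have hB1 : Module.finrank K ↥(W ⊓ sumIcc Vs 0 ((d:ℤ)-t-1))
        = ∑ j ∈ Finset.Icc (t+1) (d:ℤ), Module.finrank K ↥(W ⊓ Us j) := by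
      rw [show sumIcc Vs 0 ((d:ℤ)-t-1) = sumIcc Vs 0 ((d:ℤ)-(t+1)) by congr 1; omega,
        ← hc.high1 (by omega) (by omega)]
      exact hcountIcc (t+1) (d:ℤ) (by omega) (by omega)
    have hB2 : Module.finrank K ↥(W ⊓ sumIcc Vs ((d:ℤ)-t) (d:ℤ))
        = ∑ j ∈ Finset.Icc ((d:ℤ)-t) (d:ℤ), Module.finrank K ↥(W ⊓ Us' j) := by
      rw [← hc.high2 (by omega) (by omega)]
      exact hcountIcc' ((d:ℤ)-t) (d:ℤ) (by omega) (by omega)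
    -- disjointness of the two parts
    have hdisjA : (W ⊓ sumIcc Vs' 0 t) ⊓ (W ⊓ sumIcc Vs' (t+1) (d:ℤ)) = ⊥ := by
      refine le_bot_iff.mp ?_
      refine le_trans (inf_le_inf inf_le_right inf_le_right) ?_
      exact le_of_eq (disjoint_sumIcc hc.hTD.decompV' (by omega))
    have hdisjB : (W ⊓ sumIcc Vs 0 ((d:ℤ)-t-1)) ⊓ (W ⊓ sumIcc Vs ((d:ℤ)-t) (d:ℤ)) = ⊥ := by
      refine le_bot_iff.mp ?_
      refine le_trans (inf_le_inf inf_le_right inf_le_right) ?_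
      exact le_of_eq (disjoint_sumIcc hc.hTD.decompV (by omega))
    -- rank of the sups
    have hsupA : Module.finrank K ↥((W ⊓ sumIcc Vs' 0 t) ⊔ (W ⊓ sumIcc Vs' (t+1) (d:ℤ)))
        = Module.finrank K ↥(W ⊓ sumIcc Vs' 0 t)
          + Module.finrank K ↥(W ⊓ sumIcc Vs' (t+1) (d:ℤ)) := by
      have := Submodule.finrank_sup_add_finrank_inf_eq
        (W ⊓ sumIcc Vs' 0 t) (W ⊓ sumIcc Vs' (t+1) (d:ℤ))
      rw [hdisjA] at this
      simpa using this
    have hsupB : Module.finrank K ↥((W ⊓ sumIcc Vs 0 ((d:ℤ)-t-1)) ⊔ (W ⊓ sumIcc Vs ((d:ℤ)-t) (d:ℤ)))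
        = Module.finrank K ↥(W ⊓ sumIcc Vs 0 ((d:ℤ)-t-1))
          + Module.finrank K ↥(W ⊓ sumIcc Vs ((d:ℤ)-t) (d:ℤ)) := by
      have := Submodule.finrank_sup_add_finrank_inf_eq
        (W ⊓ sumIcc Vs 0 ((d:ℤ)-t-1)) (W ⊓ sumIcc Vs ((d:ℤ)-t) (d:ℤ))
      rw [hdisjB] at this
      simpa using this
    have hleA : (W ⊓ sumIcc Vs' 0 t) ⊔ (W ⊓ sumIcc Vs' (t+1) (d:ℤ)) ≤ W :=
      sup_le inf_le_left inf_le_left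
    have hleB : (W ⊓ sumIcc Vs 0 ((d:ℤ)-t-1)) ⊔ (W ⊓ sumIcc Vs ((d:ℤ)-t) (d:ℤ)) ≤ W :=
      sup_le inf_le_left inf_le_left
    have hrkA : Module.finrank K ↥((W ⊓ sumIcc Vs' 0 t) ⊔ (W ⊓ sumIcc Vs' (t+1) (d:ℤ))) ≤ n :=
      Submodule.finrank_mono hleA
    have hrkB : Module.finrank K
        ↥((W ⊓ sumIcc Vs 0 ((d:ℤ)-t-1)) ⊔ (W ⊓ sumIcc Vs ((d:ℤ)-t) (d:ℤ))) ≤ n :=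
      Submodule.finrank_mono hleB
    -- sum splittings of the totals
    have hsplitU : ∑ j ∈ Finset.Icc (0:ℤ) t, Module.finrank K ↥(W ⊓ Us j)
        + ∑ j ∈ Finset.Icc (t+1) (d:ℤ), Module.finrank K ↥(W ⊓ Us j) = n := by
      rw [← htot, ← Finset.sum_union (by
        simp only [Finset.disjoint_left, Finset.mem_Icc]
        omega)]
      congr 1
      ext x
      simp only [Finset.mem_union, Finset.mem_Icc]
      omega
    have hsplitU' : ∑ j ∈ Finset.Icc (0:ℤ) ((d:ℤ)-t-1), Module.finrank K ↥(W ⊓ Us' j)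
        + ∑ j ∈ Finset.Icc ((d:ℤ)-t) (d:ℤ), Module.finrank K ↥(W ⊓ Us' j) = n := by
      rw [← htot', ← Finset.sum_union (by
        simp only [Finset.disjoint_left, Finset.mem_Icc]
        omega)]
      congr 1
      ext x
      simp only [Finset.mem_union, Finset.mem_Icc]
      omega
    -- combine
    rw [hsupA, hA1, hA2] at hrkA
    rw [hsupB, hB1, hB2] at hrkB
    have heqA : ∑ j ∈ Finset.Icc (0:ℤ) t, Module.finrank K ↥(W ⊓ Us j)
        + ∑ j ∈ Finset.Icc (0:ℤ) ((d:ℤ)-t-1), Module.finrank K ↥(W ⊓ Us' j) = n := by omega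
    have heqB : ∑ j ∈ Finset.Icc (t+1) (d:ℤ), Module.finrank K ↥(W ⊓ Us j)
        + ∑ j ∈ Finset.Icc ((d:ℤ)-t) (d:ℤ), Module.finrank K ↥(W ⊓ Us' j) = n := by omega
    constructor
    · refine Submodule.eq_of_le_of_finrank_le hleA ?_
      rw [hsupA, hA1, hA2, heqA]
    · refine Submodule.eq_of_le_of_finrank_le hleB ?_
      rw [hsupB, hB1, hB2, heqB]
  -- A-invariance of W
  have hstepV : ∀ k : ℕ, ∀ l : ℤ, l = (d:ℤ) + 1 - (k:ℤ) → 0 ≤ l →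
      W ⊓ sumIcc Vs l (d:ℤ) ≤ sumIcc (fun j => W ⊓ Vs j) l (d:ℤ) := by
    intro k
    induction k with
    | zero =>
      intro l hl _
      rw [show l = (d:ℤ)+1 by omega, sumIcc_empty (U := Vs) (by omega)]
      simp
    | succ k IH =>
      intro l hl hl0
      have hld : l ≤ (d:ℤ) := by omega
      rcases eq_or_lt_of_le hld with heq | hlt
      · rw [heq, sumIcc_self (U := Vs)]
        exact le_trans le_rfl (le_sumIcc (U := fun j => W ⊓ Vs j) le_rfl le_rfl)
      · have hm := (main ((d:ℤ)-1-l) (by omega) (by omega)).2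
        have heq1 : (d:ℤ) - ((d:ℤ)-1-l) - 1 = l := by omega
        have heq2 : (d:ℤ) - ((d:ℤ)-1-l) = l + 1 := by omega
        rw [heq1, heq2] at hm
        rintro x ⟨hxW, hxK⟩
        have hxsup : x ∈ (W ⊓ sumIcc Vs 0 l) ⊔ (W ⊓ sumIcc Vs (l+1) (d:ℤ)) := by
          rw [hm]; exact hxW
        obtain ⟨p, hp, r, hr, rfl⟩ := Submodule.mem_sup.mp hxsup
        have hrT : r ∈ sumIcc (fun j => W ⊓ Vs j) (l+1) (d:ℤ) :=
          IH (l+1) (by omega) (by omega) hr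
        have hpK : p ∈ sumIcc Vs l (d:ℤ) := by
          have : p = (p + r) - r := by abel
          rw [this]
          exact sub_mem hxK (sumIcc_mono (by omega) le_rfl hr.2)
        have hpV : p ∈ Vs l := by
          have h1 : p ∈ sumIcc Vs 0 l ⊓ sumIcc Vs l (d:ℤ) := ⟨hp.2, hpK⟩
          have h2 := sumIcc_inf_sumIcc hc.hTD.decompV h1
          rwa [show max (0:ℤ) l = l by omega, show min l (d:ℤ) = l by omega,
            sumIcc_self (U := Vs)] at h2
        have hpT : p ∈ sumIcc (fun j => W ⊓ Vs j) l (d:ℤ) :=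
          le_sumIcc (U := fun j => W ⊓ Vs j) le_rfl (by omega) ⟨hp.1, hpV⟩
        exact add_mem hpT (sumIcc_mono (by omega) le_rfl hrT)
  have hstepV' : ∀ k : ℕ, ∀ l : ℤ, l = (d:ℤ) + 1 - (k:ℤ) → 0 ≤ l →
      W ⊓ sumIcc Vs' l (d:ℤ) ≤ sumIcc (fun j => W ⊓ Vs' j) l (d:ℤ) := by
    intro k
    induction k with
    | zero =>
      intro l hl _
      rw [show l = (d:ℤ)+1 by omega, sumIcc_empty (U := Vs') (by omega)]
      simp
    | succ k IH =>
      intro l hl hl0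
      have hld : l ≤ (d:ℤ) := by omega
      rcases eq_or_lt_of_le hld with heq | hlt
      · rw [heq, sumIcc_self (U := Vs')]
        exact le_trans le_rfl (le_sumIcc (U := fun j => W ⊓ Vs' j) le_rfl le_rfl)
      · have hm := (main l (by omega) (by omega)).1
        rintro x ⟨hxW, hxK⟩
        have hxsup : x ∈ (W ⊓ sumIcc Vs' 0 l) ⊔ (W ⊓ sumIcc Vs' (l+1) (d:ℤ)) := by
          rw [hm]; exact hxW
        obtain ⟨p, hp, r, hr, rfl⟩ := Submodule.mem_sup.mp hxsup
        have hrT : r ∈ sumIcc (fun j => W ⊓ Vs' j) (l+1) (d:ℤ) :=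
          IH (l+1) (by omega) (by omega) hr
        have hpK : p ∈ sumIcc Vs' l (d:ℤ) := by
          have : p = (p + r) - r := by abel
          rw [this]
          exact sub_mem hxK (sumIcc_mono (by omega) le_rfl hr.2)
        have hpV : p ∈ Vs' l := by
          have h1 : p ∈ sumIcc Vs' 0 l ⊓ sumIcc Vs' l (d:ℤ) := ⟨hp.2, hpK⟩
          have h2 := sumIcc_inf_sumIcc hc.hTD.decompV' h1
          rwa [show max (0:ℤ) l = l by omega, show min l (d:ℤ) = l by omega,
            sumIcc_self (U := Vs')] at h2
        have hpT : p ∈ sumIcc (fun j => W ⊓ Vs' j) l (d:ℤ) :=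
          le_sumIcc (U := fun j => W ⊓ Vs' j) le_rfl (by omega) ⟨hp.1, hpV⟩
        exact add_mem hpT (sumIcc_mono (by omega) le_rfl hrT)
  have hWsub : W ≤ sumIcc (fun j => W ⊓ Vs j) 0 (d:ℤ) := by
    have h0 := hstepV (d+1) 0 (by push_cast; ring) le_rfl
    have htop : sumIcc Vs 0 (d:ℤ) = ⊤ := sumIcc_eq_top hc.hTD.decompV le_rfl le_rfl
    intro x hx
    exact h0 ⟨hx, by rw [htop]; trivial⟩
  have hWsub' : W ≤ sumIcc (fun j => W ⊓ Vs' j) 0 (d:ℤ) := by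
    have h0 := hstepV' (d+1) 0 (by push_cast; ring) le_rfl
    have htop : sumIcc Vs' 0 (d:ℤ) = ⊤ := sumIcc_eq_top hc.hTD.decompV' le_rfl le_rfl
    intro x hx
    exact h0 ⟨hx, by rw [htop]; trivial⟩
  have hWA : W.map A ≤ W := by
    refine le_trans (Submodule.map_mono hWsub) ?_
    refine map_sumIcc_le fun j hj1 hj2 => ?_
    rintro x ⟨v, ⟨hvW, hvV⟩, rfl⟩
    rw [hc.hTD.eig j v hvV]
    exact Submodule.smul_mem _ _ hvW
  have hWA' : W.map A' ≤ W := by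
    refine le_trans (Submodule.map_mono hWsub') ?_
    refine map_sumIcc_le fun j hj1 hj2 => ?_
    rintro x ⟨v, ⟨hvW, hvV⟩, rfl⟩
    rw [hc.hTD.eig' j v hvV]
    exact Submodule.smul_mem _ _ hvW
  exact hc.hTD.irred W hWA hWA'

end Irred

section Final

variable [FiniteDimensional K V]
variable {q a a' b b' : K} {A A' B B' : Module.End K V} {d : ℕ}
variable {Vs Vs' : ℤ → Submodule K V} {θ θ' : ℤ → K}
variable (hc : Ctx q a a' b b' A A' B B' d Vs Vs' θ θ')

omit hD
include hc

lemma Ctx.tridB' : ∀ i : ℤ, ((dec0s0 d Vs Vs') i).map B' ≤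
    dec0s0 d Vs Vs' (i-1) ⊔ dec0s0 d Vs Vs' i ⊔ dec0s0 d Vs Vs' (i+1) := by
  intro i
  rcases lt_or_ge i 0 with hi | hi
  · rw [hc.decompU.bot_of_lt i hi]; simp
  rcases le_or_gt i (d:ℤ) with hi2 | hi2
  swap
  · rw [hc.decompU.bot_of_gt i hi2]; simp
  have h1 : ((dec0s0 d Vs Vs') i).map B' ≤ sumIcc Vs' 0 (i+1) ⊓ sumIcc Vs 0 ((d:ℤ)-i+1) := by
    refine le_inf ?_ ?_
    · exact le_trans (Submodule.map_mono inf_le_left) (hc.G3 i)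
    · refine le_trans (Submodule.map_mono inf_le_right) ?_
      refine le_trans (hc.G4 ((d:ℤ)-i)) (le_of_eq ?_)
      congr 1
  have hX : sumIcc Vs' 0 (i+1) = sumIcc (dec0s0 d Vs Vs') 0 (i+1) := by
    rcases eq_or_lt_of_le hi2 with heq | hlt
    · rw [show sumIcc Vs' 0 (i+1) = ⊤ from sumIcc_eq_top hc.hTD.decompV' le_rfl (by omega),
        show sumIcc (dec0s0 d Vs Vs') 0 (i+1) = ⊤ from
          sumIcc_eq_top hc.decompU le_rfl (by omega)]
    · exact (hc.low1 (by omega) (by omega)).symm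
  have hY : sumIcc Vs 0 ((d:ℤ)-i+1) = sumIcc (dec0s0 d Vs Vs') (i-1) (d:ℤ) := by
    rcases eq_or_lt_of_le hi with heq | hlt
    · rw [show sumIcc Vs 0 ((d:ℤ)-i+1) = ⊤ from sumIcc_eq_top hc.hTD.decompV le_rfl (by omega),
        show sumIcc (dec0s0 d Vs Vs') (i-1) (d:ℤ) = ⊤ from
          sumIcc_eq_top hc.decompU (by omega) le_rfl]
    · rw [show (d:ℤ)-i+1 = (d:ℤ)-(i-1) by ring]
      exact (hc.high1 (by omega) (by omega)).symm
  rw [hX, hY] at h1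
  refine le_trans h1 ?_
  refine le_trans (sumIcc_inf_sumIcc hc.decompU) ?_
  refine le_trans (sumIcc_mono (show i-1 ≤ max 0 (i-1) by omega)
    (show min (i+1) (d:ℤ) ≤ i+1 by omega)) ?_
  refine sumIcc_le fun j hj1 hj2 => ?_
  rcases (by omega : j = i-1 ∨ j = i ∨ j = i+1) with h | h | h
  · rw [h]; exact le_sup_of_le_left (le_sup_of_le_left le_rfl)
  · rw [h]; exact le_sup_of_le_left (le_sup_of_le_right le_rfl)
  · rw [h]; exact le_sup_of_le_right le_rfl

lemma Ctx.tridB : ∀ i : ℤ, ((decDsD d Vs Vs') i).map B ≤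
    decDsD d Vs Vs' (i-1) ⊔ decDsD d Vs Vs' i ⊔ decDsD d Vs Vs' (i+1) := by
  intro i
  rcases lt_or_ge i 0 with hi | hi
  · rw [hc.decompU'.bot_of_lt i hi]; simp
  rcases le_or_gt i (d:ℤ) with hi2 | hi2
  swap
  · rw [hc.decompU'.bot_of_gt i hi2]; simp
  have h1 : ((decDsD d Vs Vs') i).map B ≤
      sumIcc Vs' ((d:ℤ)-i-1) (d:ℤ) ⊓ sumIcc Vs (i-1) (d:ℤ) := by
    refine le_inf ?_ ?_
    · refine le_trans (Submodule.map_mono inf_le_left) ?_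
      refine le_trans (hc.G2 ((d:ℤ)-i)) (le_of_eq ?_)
      congr 1
    · exact le_trans (Submodule.map_mono inf_le_right) (hc.G1 i)
  have hX : sumIcc Vs' ((d:ℤ)-i-1) (d:ℤ) = sumIcc (decDsD d Vs Vs') 0 (i+1) := by
    rcases eq_or_lt_of_le hi2 with heq | hlt
    · rw [show sumIcc Vs' ((d:ℤ)-i-1) (d:ℤ) = ⊤ from
          sumIcc_eq_top hc.hTD.decompV' (by omega) le_rfl,
        show sumIcc (decDsD d Vs Vs') 0 (i+1) = ⊤ from
          sumIcc_eq_top hc.decompU' le_rfl (by omega)]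
    · rw [show (d:ℤ)-i-1 = (d:ℤ)-(i+1) by ring]
      exact (hc.low2 (by omega) (by omega)).symm
  have hY : sumIcc Vs (i-1) (d:ℤ) = sumIcc (decDsD d Vs Vs') (i-1) (d:ℤ) := by
    rcases eq_or_lt_of_le hi with heq | hlt
    · rw [show sumIcc Vs (i-1) (d:ℤ) = ⊤ from sumIcc_eq_top hc.hTD.decompV (by omega) le_rfl,
        show sumIcc (decDsD d Vs Vs') (i-1) (d:ℤ) = ⊤ from
          sumIcc_eq_top hc.decompU' (by omega) le_rfl]
    · exact (hc.high2 (by omega) (by omega)).symm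
  rw [hX, hY] at h1
  refine le_trans h1 ?_
  refine le_trans (sumIcc_inf_sumIcc hc.decompU') ?_
  refine le_trans (sumIcc_mono (show i-1 ≤ max 0 (i-1) by omega)
    (show min (i+1) (d:ℤ) ≤ i+1 by omega)) ?_
  refine sumIcc_le fun j hj1 hj2 => ?_
  rcases (by omega : j = i-1 ∨ j = i ∨ j = i+1) with h | h | h
  · rw [h]; exact le_sup_of_le_left (le_sup_of_le_left le_rfl)
  · rw [h]; exact le_sup_of_le_left (le_sup_of_le_right le_rfl)
  · rw [h]; exact le_sup_of_le_right le_rfl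

lemma Ctx.main_result :
    IsTridiagonalPair B B' d (dec0s0 d Vs Vs') (decDsD d Vs Vs')
      (fun i => b * q ^ (2 * i - (d : ℤ))) (fun i => b' * q ^ ((d : ℤ) - 2 * i)) := by
  refine ⟨hc.decompU, hc.decompU', hc.heigB, hc.heigB', hc.beta_inj, hc.beta'_inj,
    hc.tridB', hc.tridB, hc.irredBB'⟩

end Final

end TD7

/-- `B, B*` is a tridiagonal pair on `V`, with standard eigenvalue
orderings `b q^{2i−d}` and `b* q^{d−2i}`. -/
theorem stmt7 {K : Type*} [Field K] [IsAlgClosed K]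
    {V : Type*} [AddCommGroup V] [Module K V] [FiniteDimensional K V] [Nontrivial V]
    (q : K) (hq0 : q ≠ 0) (hq : ∀ n : ℕ, 0 < n → q ^ n ≠ 1)
    (A A' : Module.End K V) (d : ℕ) (Vs Vs' : ℤ → Submodule K V) (θ θ' : ℤ → K)
    (hTD : IsTridiagonalPair A A' d Vs Vs' θ θ')
    (a a' : K) (ha : a ≠ 0) (ha' : a' ≠ 0)
    (hθ : ∀ i : ℤ, 0 ≤ i → i ≤ (d : ℤ) → θ i = a * q ^ (2 * i - (d : ℤ)))
    (hθ' : ∀ i : ℤ, 0 ≤ i → i ≤ (d : ℤ) → θ' i = a' * q ^ ((d : ℤ) - 2 * i))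
    (b b' : K) (hb : b ≠ 0) (hb' : b' ≠ 0)
    (B : Module.End K V)
    (hB : ∀ i : ℤ, 0 ≤ i → i ≤ (d : ℤ) → ∀ v ∈ dec0s0 d Vs Vs' i,
      B v = (b * q ^ (2 * i - (d : ℤ))) • v)
    (B' : Module.End K V)
    (hB' : ∀ i : ℤ, 0 ≤ i → i ≤ (d : ℤ) → ∀ v ∈ decDsD d Vs Vs' i,
      B' v = (b' * q ^ ((d : ℤ) - 2 * i)) • v)
    :
    ∃ Us Us' : ℤ → Submodule K V,
      IsTridiagonalPair B B' d Us Us'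
        (fun i => b * q ^ (2 * i - (d : ℤ))) (fun i => b' * q ^ ((d : ℤ) - 2 * i)) := by
  have hc : TD7.Ctx q a a' b b' A A' B B' d Vs Vs' θ θ' :=
    ⟨hq0, hq, hTD, ha, ha', hθ, hθ', hb, hb', hB, hB'⟩
  exact ⟨dec0s0 d Vs Vs', decDsD d Vs Vs', hc.main_result⟩
end
end
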